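/- arXiv:1409.0222 — 4 statements merged into one kernel-verified Lean document; each statement's English description precedes it below -/
import Mathlib

section
/- The Rothberger number of the ideal ED_fin equals ℵ₁; that is, there exists an ED_fin-(ω,ω₁)-gap, and ω₁ is the least cardinal λ for which an ED_fin-(ω,λ)-gap exists. -/
open Set Filter Cardinal

/-- `I` is an ideal on `ω`: contains all finite sets, downward closed, closed under unions. -/
def IsIdealOn (I : Set (Set ℕ)) : Prop :=
  (∀ x : Set ℕ, x.Finite → x ∈ I) ∧
  (∀ x y : Set ℕ, x ⊆ y → y ∈ I → x ∈ I) ∧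
  (∀ x y : Set ℕ, x ∈ I → y ∈ I → x ∪ y ∈ I)

/-- The pair `⟨A, B⟩` is `I`-orthogonal. -/
def IOrthogonal (I A B : Set (Set ℕ)) : Prop := ∀ s ∈ A, ∀ t ∈ B, s ∩ t ∈ I

/-- `C` separates the pair `⟨A, B⟩` with respect to `I`. -/
def ISeparates (I A B : Set (Set ℕ)) (C : Set ℕ) : Prop :=
  (∀ s ∈ A, s ∩ C ∈ I) ∧ (∀ t ∈ B, t \ C ∈ I)

/-- The pair `⟨A, B⟩` is an `I`-gap. -/
def IsIGap (I A B : Set (Set ℕ)) : Prop :=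
  IOrthogonal I A B ∧ ∀ C : Set ℕ, ¬ ISeparates I A B C

/-- There is an `I`-(ω, lam)-gap. -/
def HasOmegaGap (I : Set (Set ℕ)) (lam : Cardinal) : Prop :=
  ∃ A B : Set (Set ℕ), IsIGap I A B ∧ #A = ℵ₀ ∧ #B = lam

/-- `a` is a partition of `ω` into nonempty finite sets. -/
def IsPartitionFin (a : ℕ → Set ℕ) : Prop :=
  (∀ i, (a i).Nonempty) ∧ (∀ i, (a i).Finite) ∧
  (∀ i j, i ≠ j → Disjoint (a i) (a j)) ∧ (⋃ i, a i) = Set.univ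

/-- `φ` is a submeasure on the powerset of the set `s`. -/
def IsSubmeasureOn (s : Set ℕ) (φ : Set ℕ → ℝ) : Prop :=
  φ ∅ = 0 ∧ (∀ x, x ⊆ s → 0 ≤ φ x) ∧
  (∀ x y, x ⊆ y → y ⊆ s → φ x ≤ φ y) ∧
  (∀ x y, x ⊆ s → y ⊆ s → φ (x ∪ y) ≤ φ x + φ y)

/-- `I = I⟨a_i, φ_i⟩` is the fragmented ideal determined by the partition `a`
and the submeasures `φ`. -/
def IsFragmentation (I : Set (Set ℕ)) (a : ℕ → Set ℕ) (φ : ℕ → Set ℕ → ℝ) : Prop :=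
  IsPartitionFin a ∧ (∀ i, IsSubmeasureOn (a i) (φ i)) ∧
  ∀ x : Set ℕ, x ∈ I ↔ ∃ K : ℝ, ∀ i, φ i (x ∩ a i) ≤ K

/-- Gradual fragmentation of `⟨a_i, φ_i⟩`. -/
def GraduallyFragmented (a : ℕ → Set ℕ) (φ : ℕ → Set ℕ → ℝ) : Prop :=
  ∀ k : ℕ, ∃ m : ℕ, ∀ l : ℕ, ∀ᶠ i in atTop,
    ∀ B : Finset (Set ℕ), (∀ b ∈ B, b ⊆ a i) → B.card ≤ l →
      (∀ b ∈ B, φ i b ≤ (k : ℝ)) → φ i (⋃₀ (↑B : Set (Set ℕ))) ≤ (m : ℝ)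

/-- The restriction `I ↾ X` is tall. -/
def IsTallOn (I : Set (Set ℕ)) (X : Set ℕ) : Prop :=
  ∀ Y : Set ℕ, Y ⊆ X → Y.Infinite → ∃ Z, Z ⊆ Y ∧ Z.Infinite ∧ Z ∈ I

def IsTall (I : Set (Set ℕ)) : Prop := IsTallOn I Set.univ

def SomewhereTall (I : Set (Set ℕ)) : Prop := ∃ X : Set ℕ, X ∉ I ∧ IsTallOn I X

def NowhereTall (I : Set (Set ℕ)) : Prop := ¬ SomewhereTall I

/-- The unbounding number `𝔟`. -/
noncomputable def unboundingNumber : Cardinal :=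
  sInf {c | ∃ F : Set (ℕ → ℕ), #F = c ∧
    ∀ g : ℕ → ℕ, ∃ f ∈ F, ¬ ∀ᶠ i in atTop, f i ≤ g i}

/-- The additivity of the Lebesgue-null ideal, `add(N)`. -/
noncomputable def addNull : Cardinal :=
  sInf {c | ∃ F : Set (Set ℝ), #F = c ∧ (∀ s ∈ F, MeasureTheory.volume s = 0) ∧
    MeasureTheory.volume (⋃₀ F) ≠ 0}

/-- The interval partition of `ω` with `|a_i| = i + 1`. -/
def edA (i : ℕ) : Set ℕ := Set.Ico (i * (i + 1) / 2) (i * (i + 1) / 2 + (i + 1))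

/-- The submeasure `φ_i(x) = |x|` on `P(a_i)`. -/
noncomputable def edPhi (_ : ℕ) (x : Set ℕ) : ℝ := (x.ncard : ℝ)

/-- The fragmented ideal `ED_fin = I⟨a_i, φ_i⟩`. -/
def EDfin : Set (Set ℕ) := {x | ∃ K : ℝ, ∀ i, edPhi i (x ∩ edA i) ≤ K}


def tri (i : ℕ) : ℕ := i * (i + 1) / 2

lemma mem_edA {e i : ℕ} : e ∈ edA i ↔ tri i ≤ e ∧ e < tri i + (i + 1) := by
  simp [edA, tri]

lemma tri_succ (i : ℕ) : tri (i + 1) = tri i + (i + 1) := by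
  have h : (i+1) * ((i+1)+1) = i * (i+1) + 2 * (i+1) := by ring
  have he : i * (i + 1) % 2 = 0 := Nat.even_iff.mp (Nat.even_mul_succ_self i)
  simp only [tri]
  omega

lemma tri_mono {m n : ℕ} (h : m ≤ n) : tri m ≤ tri n :=
  Nat.div_le_div_right (Nat.mul_le_mul h (by omega))

lemma col_unique {e i j : ℕ} (hi : e ∈ edA i) (hj : e ∈ edA j) : i = j := by
  rw [mem_edA] at hi hj
  rcases lt_trichotomy i j with h|h|h
  · have := tri_mono h
    rw [tri_succ] at this
    omega
  · exact h
  · have := tri_mono h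
    rw [tri_succ] at this
    omega

def tcol (p : ℕ) : ℕ := tri (2 ^ p - 1)

lemma mem_edA_tcol {p j : ℕ} (hj : j < 2 ^ p) : tcol p + j ∈ edA (2 ^ p - 1) := by
  rw [mem_edA]
  have h1 : 1 ≤ 2 ^ p := Nat.one_le_two_pow
  constructor
  · exact Nat.le_add_right _ _
  · simp only [tcol]; omega

lemma rep_unique {p p' j j' : ℕ} (hj : j < 2 ^ p) (hj' : j' < 2 ^ p')
    (h : tcol p + j = tcol p' + j') : p = p' ∧ j = j' := by
  have h1 := mem_edA_tcol hj
  have h2 := mem_edA_tcol hj'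
  rw [← h] at h2
  have hcol := col_unique h1 h2
  have h1p : 1 ≤ 2 ^ p := Nat.one_le_two_pow
  have h1p' : 1 ≤ 2 ^ p' := Nat.one_le_two_pow
  have hpow : 2 ^ p = 2 ^ p' := by omega
  have hp : p = p' := Nat.pow_right_injective (le_refl 2) hpow
  subst hp
  exact ⟨rfl, by omega⟩

def bsum (z : ℕ → Bool) (r : ℕ) : ℕ := ∑ i ∈ Finset.range r, (if z i then 2 ^ i else 0)

lemma bsum_lt (z : ℕ → Bool) (r : ℕ) : bsum z r < 2 ^ r := by
  induction r with
  | zero => simp [bsum]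
  | succ r ih =>
    have h : bsum z (r+1) = bsum z r + (if z r then 2 ^ r else 0) := Finset.sum_range_succ _ _
    have h2 : (2:ℕ) ^ (r+1) = 2 ^ r + 2 ^ r := by ring
    by_cases hz : z r <;> simp [hz] at h <;> omega

lemma bsum_inj (z z' : ℕ → Bool) : ∀ r, bsum z r = bsum z' r → ∀ i, i < r → z i = z' i := by
  intro r
  induction r with
  | zero => intro _ i hi; omega
  | succ r ih =>
    intro h i hi
    have hz := bsum_lt z r
    have hz' := bsum_lt z' r
    have h1 : bsum z (r+1) = bsum z r + (if z r then 2 ^ r else 0) := Finset.sum_range_succ _ _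
    have h1' : bsum z' (r+1) = bsum z' r + (if z' r then 2 ^ r else 0) := Finset.sum_range_succ _ _
    have hrr : z r = z' r := by
      by_cases ha : z r <;> by_cases hb : z' r <;> simp [ha, hb] at h1 h1' ⊢ <;> omega
    have hbs : bsum z r = bsum z' r := by
      rw [hrr] at h1
      by_cases hb : z' r <;> simp [hb] at h1 h1' <;> omega
    rcases Nat.lt_or_ge i r with h'|h'
    · exact ih hbs i h'
    · have : i = r := by omega
      subst this; exact hrr

def Jf (z : ℕ → Bool) (r : ℕ) : ℕ := 2 ^ (r + 1) + 2 ^ r + bsum z r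

lemma Jf_lb (z : ℕ → Bool) (r : ℕ) : 2 ^ (r + 1) + 2 ^ r ≤ Jf z r := Nat.le_add_right _ _

lemma Jf_ub (z : ℕ → Bool) (r : ℕ) : Jf z r < 2 ^ (r + 2) := by
  have h := bsum_lt z r
  have h2 : (2:ℕ) ^ (r+2) = 2 ^ (r+1) + 2 ^ r + 2 ^ r := by ring
  simp only [Jf]; omega

lemma Jf_inj_r {z z' : ℕ → Bool} {r r' : ℕ} (h : Jf z r = Jf z' r') : r = r' := by
  rcases lt_trichotomy r r' with hlt|he|hlt
  · have h1 := Jf_ub z r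
    have h2 := Jf_lb z' r'
    have h3 : (2:ℕ) ^ (r + 2) ≤ 2 ^ (r' + 1) := Nat.pow_le_pow_right (by omega) (by omega)
    omega
  · exact he
  · have h1 := Jf_ub z' r'
    have h2 := Jf_lb z r
    have h3 : (2:ℕ) ^ (r' + 2) ≤ 2 ^ (r + 1) := Nat.pow_le_pow_right (by omega) (by omega)
    omega

lemma Jf_inj_z {z z' : ℕ → Bool} {r : ℕ} (h : Jf z r = Jf z' r) :
    ∀ i, i < r → z i = z' i := by
  have : bsum z r = bsum z' r := by simp only [Jf] at h; omega
  exact bsum_inj z z' r this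


lemma edA_finite (i : ℕ) : (edA i).Finite := Set.finite_Ico _ _
lemma inter_edA_finite (x : Set ℕ) (i : ℕ) : (x ∩ edA i).Finite :=
  ((edA_finite i).subset (Set.inter_subset_right))

lemma mem_EDfin_iff (x : Set ℕ) : x ∈ EDfin ↔ ∃ K : ℕ, ∀ i, (x ∩ edA i).ncard ≤ K := by
  constructor
  · rintro ⟨K, hK⟩
    refine ⟨⌈K⌉₊, fun i => ?_⟩
    have h := hK i
    simp only [edPhi] at h
    exact_mod_cast h.trans (Nat.le_ceil K)
  · rintro ⟨K, hK⟩
    refine ⟨(K : ℝ), fun i => ?_⟩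
    simp only [edPhi]
    exact_mod_cast hK i

lemma EDfin_subset {x y : Set ℕ} (h : x ⊆ y) (hy : y ∈ EDfin) : x ∈ EDfin := by
  rw [mem_EDfin_iff] at hy ⊢
  obtain ⟨K, hK⟩ := hy
  exact ⟨K, fun i => le_trans (Set.ncard_le_ncard (Set.inter_subset_inter_left _ h)
    (inter_edA_finite y i)) (hK i)⟩

lemma EDfin_union {x y : Set ℕ} (hx : x ∈ EDfin) (hy : y ∈ EDfin) : x ∪ y ∈ EDfin := by
  rw [mem_EDfin_iff] at hx hy ⊢
  obtain ⟨K, hK⟩ := hx; obtain ⟨M, hM⟩ := hy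
  refine ⟨K + M, fun i => ?_⟩
  have : (x ∪ y) ∩ edA i = (x ∩ edA i) ∪ (y ∩ edA i) := Set.union_inter_distrib_right x y _
  rw [this]
  exact le_trans (Set.ncard_union_le _ _) (Nat.add_le_add (hK i) (hM i))

lemma EDfin_empty : (∅ : Set ℕ) ∈ EDfin := by
  rw [mem_EDfin_iff]; exact ⟨0, fun i => by simp⟩

/-- accumulated unions -/
def acc (f : ℕ → Set ℕ) : ℕ → Set ℕ
  | 0 => f 0
  | n+1 => acc f n ∪ f (n+1)

lemma subset_acc (f : ℕ → Set ℕ) {m n : ℕ} (h : m ≤ n) : f m ⊆ acc f n := by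
  induction n with
  | zero => simp at h; subst h; exact subset_rfl
  | succ n ih =>
    rcases Nat.lt_or_ge m (n+1) with h'|h'
    · exact subset_trans (ih (Nat.lt_succ_iff.mp h')) Set.subset_union_left
    · have : m = n+1 := le_antisymm h h'
      subst this; exact Set.subset_union_right

lemma acc_mono (f : ℕ → Set ℕ) {m n : ℕ} (h : m ≤ n) : acc f m ⊆ acc f n := by
  induction n with
  | zero => simp at h; subst h; exact subset_rfl
  | succ n ih =>
    rcases Nat.lt_or_ge m (n+1) with h'|h'
    · exact subset_trans (ih (Nat.lt_succ_iff.mp h')) Set.subset_union_left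
    · have : m = n+1 := le_antisymm h h'
      subst this; exact subset_rfl

lemma acc_inter_EDfin (f : ℕ → Set ℕ) (g : Set ℕ) (h : ∀ n, g ∩ f n ∈ EDfin) (n : ℕ) :
    g ∩ acc f n ∈ EDfin := by
  induction n with
  | zero => exact h 0
  | succ n ih =>
    have : g ∩ acc f (n+1) = (g ∩ acc f n) ∪ (g ∩ f (n+1)) := by
      simp [acc, Set.inter_union_distrib_left]
    rw [this]; exact EDfin_union ih (h (n+1))

/-- Countable-by-countable orthogonal pairs are separated. -/
lemma countable_separated (f g : ℕ → Set ℕ)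
    (orth : ∀ m n, g m ∩ f n ∈ EDfin) :
    ∃ C : Set ℕ, (∀ m, g m ∩ C ∈ EDfin) ∧ (∀ n, f n \ C ∈ EDfin) := by
  refine ⟨⋃ n, (acc f n \ acc g n), fun m => ?_, fun n => ?_⟩
  · have hsub : g m ∩ (⋃ n, (acc f n \ acc g n)) ⊆ g m ∩ acc f m := by
      rintro e ⟨he, hu⟩
      simp only [Set.mem_iUnion] at hu
      obtain ⟨n, hn1, hn2⟩ := hu
      rcases Nat.lt_or_ge n m with h'|h'
      · exact ⟨he, acc_mono f h'.le hn1⟩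
      · exact absurd (subset_acc g h' he) hn2
    exact EDfin_subset hsub (acc_inter_EDfin f (g m) (fun n => orth m n) m)
  · have hsub : f n \ (⋃ k, (acc f k \ acc g k)) ⊆ acc g n ∩ f n := by
      rintro e ⟨he, hu⟩
      simp only [Set.mem_iUnion, not_exists] at hu
      have := hu n
      have hfn : e ∈ acc f n := subset_acc f le_rfl he
      by_contra hcon
      simp only [Set.mem_inter_iff, not_and] at hcon
      exact (this ⟨hfn, fun hg => hcon hg he⟩)
    refine EDfin_subset hsub ?_
    have : acc g n ∩ f n ∈ EDfin := by
      have h2 : ∀ k, f n ∩ g k ∈ EDfin := fun k => by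
        have := orth k n; rwa [Set.inter_comm] at this
      have := acc_inter_EDfin g (f n) h2 n
      rwa [Set.inter_comm] at this
    exact this

/-- the B-side sets -/
def tset (z : ℕ → Bool) : Set ℕ := {e | ∃ p r, r + 2 ≤ p ∧ e = tcol p + Jf z r}

/-- the A-side sets -/
def Aset (n : ℕ) : Set ℕ := {e | ∃ p j, j < 2 ^ p ∧ 2 ^ p ≤ j * 2 ^ n ∧ e = tcol p + j}

lemma Jf_lt_col {r p : ℕ} (h : r + 2 ≤ p) (z : ℕ → Bool) : Jf z r < 2 ^ p :=
  lt_of_lt_of_le (Jf_ub z r) (Nat.pow_le_pow_right (by omega) h)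

lemma tset_mem_col {z : ℕ → Bool} {e i : ℕ} (he : e ∈ tset z) (hc : e ∈ edA i) :
    ∃ p r, r + 2 ≤ p ∧ e = tcol p + Jf z r ∧ i = 2 ^ p - 1 := by
  obtain ⟨p, r, hrp, rfl⟩ := he
  have h1 : Jf z r < 2 ^ p := Jf_lt_col hrp z
  exact ⟨p, r, hrp, rfl, col_unique hc (mem_edA_tcol h1)⟩

/-- orthogonality counting bound -/
lemma orth_bound (n : ℕ) (z : ℕ → Bool) (i : ℕ) :
    ((Aset n ∩ tset z) ∩ edA i).ncard ≤ n + 1 := by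
  classical
  rcases Set.eq_empty_or_nonempty ((Aset n ∩ tset z) ∩ edA i) with hne|hne
  · simp [hne]
  obtain ⟨e0, ⟨⟨_hA0, hT0⟩, hcol0⟩⟩ := hne
  obtain ⟨p0, r0, hrp0, _he0, hi0⟩ := tset_mem_col hT0 hcol0
  have hsub : (Aset n ∩ tset z) ∩ edA i ⊆
      (fun r => tcol p0 + Jf z r) '' ↑(Finset.Ico (p0 - 1 - n) (p0 - 1)) := by
    rintro e ⟨⟨hA, hT⟩, hcol⟩
    obtain ⟨p, r, hrp, rfl, hip⟩ := tset_mem_col hT hcol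
    have hpp : p = p0 := by
      rw [hi0] at hip
      have h1 : 1 ≤ 2 ^ p := Nat.one_le_two_pow
      have h2 : 1 ≤ 2 ^ p0 := Nat.one_le_two_pow
      have hpow : (2:ℕ) ^ p = 2 ^ p0 := by omega
      exact Nat.pow_right_injective (le_refl 2) hpow
    subst hpp
    refine ⟨r, ?_, rfl⟩
    simp only [Finset.coe_Ico, Set.mem_Ico]
    obtain ⟨p', j', hj', hAj', heq⟩ := hA
    have hJ : Jf z r < 2 ^ p := Jf_lt_col hrp z
    obtain ⟨hp', hjj⟩ := rep_unique hJ hj' heq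
    subst hp'
    rw [← hjj] at hAj'
    have hub : Jf z r < 2 ^ (r + 2) := Jf_ub z r
    have hlt : Jf z r * 2 ^ n < 2 ^ (r + 2) * 2 ^ n :=
      (Nat.mul_lt_mul_right (Nat.two_pow_pos n)).mpr hub
    have hp2 : (2:ℕ) ^ p < 2 ^ (r + 2 + n) := by
      rw [pow_add]
      exact lt_of_le_of_lt hAj' hlt
    have hpr : p < r + 2 + n := (Nat.pow_lt_pow_iff_right (by omega : 1 < 2)).mp hp2
    omega
  calc ((Aset n ∩ tset z) ∩ edA i).ncard
      ≤ ((fun r => tcol p0 + Jf z r) '' ↑(Finset.Ico (p0 - 1 - n) (p0 - 1))).ncard := by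
        apply Set.ncard_le_ncard hsub
          ((Finset.Ico (p0 - 1 - n) (p0 - 1)).finite_toSet.image _)
    _ ≤ (↑(Finset.Ico (p0 - 1 - n) (p0 - 1)) : Set ℕ).ncard := Set.ncard_image_le
        (Finset.Ico (p0 - 1 - n) (p0 - 1)).finite_toSet
    _ = (Finset.Ico (p0 - 1 - n) (p0 - 1)).card := Set.ncard_coe_finset _
    _ ≤ n + 1 := by rw [Nat.card_Ico]; omega

lemma tset_injective : Function.Injective tset := by
  intro z z' h
  by_contra hne
  have hex : ∃ i, z i ≠ z' i := Function.ne_iff.mp hne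
  obtain ⟨i0, hi0⟩ := hex
  set r := i0 + 1 with hr
  set p := r + 2 with hp
  have hmem : tcol p + Jf z r ∈ tset z := ⟨p, r, by omega, rfl⟩
  rw [h] at hmem
  obtain ⟨p', r', hrp', heq⟩ := hmem
  have h1 : Jf z r < 2 ^ p := Jf_lt_col (by omega) z
  have h2 : Jf z' r' < 2 ^ p' := Jf_lt_col hrp' z'
  obtain ⟨hpp, hJJ⟩ := rep_unique h1 h2 heq
  have hrr : r = r' := Jf_inj_r hJJ
  subst hrr
  exact hi0 (Jf_inj_z hJJ i0 (by omega))

lemma Aset_ne {n m : ℕ} (h : n < m) : Aset (n + 1) ≠ Aset (m + 1) := by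
  intro heq
  have hmem : tcol (m + 1) + 1 ∈ Aset (m + 1) := by
    refine ⟨m + 1, 1, ?_, ?_, rfl⟩
    · exact Nat.one_lt_two_pow (by omega)
    · omega
  rw [← heq] at hmem
  obtain ⟨p', j', hj', hc, heq'⟩ := hmem
  have h1 : (1:ℕ) < 2 ^ (m+1) := Nat.one_lt_two_pow (by omega)
  obtain ⟨hp, hj⟩ := rep_unique (by omega : (1:ℕ) < 2 ^ (m+1)) hj' heq'
  rw [← hp, ← hj] at hc
  simp only [one_mul] at hc
  have := Nat.pow_le_pow_iff_right (a := 2) (by omega) |>.mp hc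
  omega

open Classical in
lemma no_separator (S : Set (ℕ → Bool)) (hS : ¬ S.Countable) (C : Set ℕ)
    (hA : ∀ n, Aset (n + 1) ∩ C ∈ EDfin)
    (hB : ∀ z ∈ S, tset z \ C ∈ EDfin) : False := by
  choose K hK using fun n => (mem_EDfin_iff (Aset (n + 1) ∩ C)).mp (hA n)
  set SL : ℕ → Set (ℕ → Bool) :=
    fun L => {z | z ∈ S ∧ ∀ i, ((tset z \ C) ∩ edA i).ncard ≤ L} with hSL
  have hSsub : S ⊆ ⋃ L, SL L := by
    intro z hz
    obtain ⟨L, hL⟩ := (mem_EDfin_iff (tset z \ C)).mp (hB z hz)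
    exact Set.mem_iUnion.mpr ⟨L, hz, hL⟩
  have hexL : ∃ L, ¬ (SL L).Countable := by
    by_contra h
    push_neg at h
    exact hS (Set.Countable.mono hSsub (Set.countable_iUnion h))
  obtain ⟨L, hL⟩ := hexL
  have hinf : (SL L).Infinite := fun hfin => hL hfin.countable
  obtain ⟨F, hFsub, hFcard⟩ := hinf.exists_subset_card_eq
    (2 * ((Finset.range (2 * L + 1)).sup K) + 2)
  set Ms := (Finset.range (2 * L + 1)).sup K with hMs
  set d := (F ×ˢ F).sup (fun pr => sInf {i | pr.1 i ≠ pr.2 i}) with hd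
  have hdiff : ∀ z ∈ F, ∀ z' ∈ F, z ≠ z' → ∃ i ≤ d, z i ≠ z' i := by
    intro z hz z' hz' hne
    have hne' : {i | z i ≠ z' i}.Nonempty := by
      rcases Function.ne_iff.mp hne with ⟨i, hi⟩
      exact ⟨i, hi⟩
    refine ⟨sInf {i | z i ≠ z' i}, ?_, Nat.sInf_mem hne'⟩
    exact Finset.le_sup (f := fun pr => sInf {i | pr.1 i ≠ pr.2 i}) (b := (z, z'))
      (Finset.mem_product.mpr ⟨hz, hz'⟩)
  set P := 2 * L + 1 + d + 2 with hP
  -- per member bound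
  have perz : ∀ z ∈ F, ((Finset.range (2 * L + 1)).filter
      (fun k => tcol P + Jf z (P - 2 - k) ∉ C)).card ≤ L := by
    intro z hz
    have hzSL : z ∈ SL L := hFsub hz
    have htfin : ((tset z \ C) ∩ edA (2 ^ P - 1)).Finite := inter_edA_finite _ _
    have hcard : htfin.toFinset.card = ((tset z \ C) ∩ edA (2 ^ P - 1)).ncard :=
      (Set.ncard_eq_toFinset_card _ htfin).symm
    have hle : ((Finset.range (2 * L + 1)).filter
        (fun k => tcol P + Jf z (P - 2 - k) ∉ C)).card ≤ htfin.toFinset.card := by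
      apply Finset.card_le_card_of_injOn (fun k => tcol P + Jf z (P - 2 - k))
      · intro k hk
        simp only [Finset.mem_coe, Finset.mem_filter, Finset.mem_range] at hk
        obtain ⟨hkT, hkC⟩ := hk
        rw [Finset.mem_coe, Set.Finite.mem_toFinset]
        refine ⟨⟨⟨P, P - 2 - k, by omega, rfl⟩, hkC⟩, ?_⟩
        exact mem_edA_tcol (Jf_lt_col (by omega) z)
      · intro k hk k' hk' heq
        simp only [Finset.coe_filter, Set.mem_setOf_eq, Finset.mem_range] at hk hk'
        have heq' : tcol P + Jf z (P - 2 - k) = tcol P + Jf z (P - 2 - k') := heq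
        have hJ : Jf z (P - 2 - k) = Jf z (P - 2 - k') := by omega
        have := Jf_inj_r hJ
        omega
    have h2 := hzSL.2 (2 ^ P - 1)
    omega
  -- per slab bound
  have perk : ∀ k < 2 * L + 1, (F.filter
      (fun z => tcol P + Jf z (P - 2 - k) ∈ C)).card ≤ K k := by
    intro k hk
    have htfin : ((Aset (k + 1) ∩ C) ∩ edA (2 ^ P - 1)).Finite := inter_edA_finite _ _
    have hcard : htfin.toFinset.card = ((Aset (k + 1) ∩ C) ∩ edA (2 ^ P - 1)).ncard :=
      (Set.ncard_eq_toFinset_card _ htfin).symm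
    have hle : (F.filter (fun z => tcol P + Jf z (P - 2 - k) ∈ C)).card
        ≤ htfin.toFinset.card := by
      apply Finset.card_le_card_of_injOn (fun z => tcol P + Jf z (P - 2 - k))
      · intro z hz
        simp only [Finset.mem_coe, Finset.mem_filter] at hz
        obtain ⟨hzF, hzC⟩ := hz
        rw [Finset.mem_coe, Set.Finite.mem_toFinset]
        refine ⟨⟨⟨P, Jf z (P - 2 - k), Jf_lt_col (by omega) z, ?_, rfl⟩, hzC⟩,
          mem_edA_tcol (Jf_lt_col (by omega) z)⟩
        -- 2 ^ P ≤ Jf z (P-2-k) * 2 ^ (k+1)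
        have hpow : (2:ℕ) ^ P = 2 ^ (P - 2 - k + 1) * 2 ^ (k + 1) := by
          rw [← pow_add]
          congr 1
          omega
        have hlb : 2 ^ (P - 2 - k + 1) ≤ Jf z (P - 2 - k) := by
          have := Jf_lb z (P - 2 - k)
          omega
        calc (2:ℕ) ^ P = 2 ^ (P - 2 - k + 1) * 2 ^ (k + 1) := hpow
          _ ≤ Jf z (P - 2 - k) * 2 ^ (k + 1) := Nat.mul_le_mul_right _ hlb
      · intro z hz z' hz' heq
        simp only [Finset.coe_filter, Set.mem_setOf_eq] at hz hz'
        by_contra hne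
        obtain ⟨i, hid, hiz⟩ := hdiff z hz.1 z' hz'.1 hne
        have heq' : tcol P + Jf z (P - 2 - k) = tcol P + Jf z' (P - 2 - k) := heq
        have hJ : Jf z (P - 2 - k) = Jf z' (P - 2 - k) := by omega
        exact hiz (Jf_inj_z hJ i (by omega))
    have h2 := hK k (2 ^ P - 1)
    omega
  -- double counting
  have swap : ∑ k ∈ Finset.range (2 * L + 1), ∑ z ∈ F,
        (if tcol P + Jf z (P - 2 - k) ∉ C then 1 else 0)
      = ∑ z ∈ F, ∑ k ∈ Finset.range (2 * L + 1),
        (if tcol P + Jf z (P - 2 - k) ∉ C then 1 else 0) := Finset.sum_comm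
  have upper : ∑ z ∈ F, ∑ k ∈ Finset.range (2 * L + 1),
      (if tcol P + Jf z (P - 2 - k) ∉ C then 1 else 0) ≤ (2 * Ms + 2) * L := by
    have : ∀ z ∈ F, ∑ k ∈ Finset.range (2 * L + 1),
        (if tcol P + Jf z (P - 2 - k) ∉ C then 1 else 0) ≤ L := by
      intro z hz
      rw [← Finset.card_filter]
      exact perz z hz
    calc ∑ z ∈ F, ∑ k ∈ Finset.range (2 * L + 1),
          (if tcol P + Jf z (P - 2 - k) ∉ C then 1 else 0)
        ≤ ∑ _z ∈ F, L := Finset.sum_le_sum this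
      _ = (2 * Ms + 2) * L := by rw [Finset.sum_const, hFcard, smul_eq_mul]
  have lower : (2 * L + 1) * (Ms + 2) ≤ ∑ k ∈ Finset.range (2 * L + 1), ∑ z ∈ F,
      (if tcol P + Jf z (P - 2 - k) ∉ C then 1 else 0) := by
    have hterm : ∀ k ∈ Finset.range (2 * L + 1), Ms + 2 ≤ ∑ z ∈ F,
        (if tcol P + Jf z (P - 2 - k) ∉ C then 1 else 0) := by
      intro k hk
      rw [Finset.mem_range] at hk
      rw [← Finset.card_filter]
      have hsplit := Finset.card_filter_add_card_filter_not
        (s := F) (p := fun z => tcol P + Jf z (P - 2 - k) ∈ C)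
      have h1 := perk k hk
      have h2 : K k ≤ Ms := Finset.le_sup (Finset.mem_range.mpr hk)
      omega
    calc (2 * L + 1) * (Ms + 2) = ∑ _k ∈ Finset.range (2 * L + 1), (Ms + 2) := by
          rw [Finset.sum_const, Finset.card_range, smul_eq_mul]
      _ ≤ _ := Finset.sum_le_sum hterm
  rw [swap] at lower
  have final : (2 * L + 1) * (Ms + 2) ≤ (2 * Ms + 2) * L := le_trans lower upper
  nlinarith [final]


/-- The Rothberger number of `ED_fin` equals `ℵ₁`: there is an `ED_fin`-(ω,ω₁)-gap,
and `ω₁` is least among cardinals `λ` admitting an `ED_fin`-(ω,λ)-gap. -/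
theorem rothberger_EDfin_eq_aleph_one :
    HasOmegaGap EDfin (aleph 1) ∧
    ∀ lam : Cardinal, HasOmegaGap EDfin lam → aleph 1 ≤ lam := by
  constructor
  · -- Part 1: existence of an (ω, ω₁)-gap
    obtain ⟨S, hS⟩ : ∃ S : Set (ℕ → Bool), #S = aleph 1 := by
      apply Cardinal.le_mk_iff_exists_set.mp
      have h2 : #(ℕ → Bool) = 2 ^ ℵ₀ := by
        rw [Cardinal.mk_arrow]
        simp only [Cardinal.mk_bool, Cardinal.lift_id, Cardinal.mk_nat, Cardinal.lift_ofNat,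
          Cardinal.lift_aleph0]
      rw [h2]
      have h := Cardinal.aleph_one_le_continuum
      rwa [Cardinal.continuum] at h
    have hSunc : ¬ S.Countable := by
      intro hc
      rw [Cardinal.countable_iff_lt_aleph_one, hS] at hc
      exact lt_irrefl _ hc
    refine ⟨Set.range (fun n => Aset (n + 1)), tset '' S, ⟨?_, ?_⟩, ?_, ?_⟩
    · rintro s ⟨n, rfl⟩ t ⟨z, _hz, rfl⟩
      exact (mem_EDfin_iff _).mpr ⟨n + 2, fun i => orth_bound (n + 1) z i⟩
    · intro C hsep
      exact no_separator S hSunc C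
        (fun n => hsep.1 _ ⟨n, rfl⟩)
        (fun z hz => hsep.2 _ ⟨z, hz, rfl⟩)
    · have hinj : Function.Injective (fun n => Aset (n + 1)) := by
        intro a b hab
        by_contra hne
        rcases Nat.lt_or_ge a b with h|h
        · exact Aset_ne h hab
        · exact Aset_ne (by omega) hab.symm
      rw [Cardinal.mk_range_eq _ hinj, Cardinal.mk_nat]
    · rw [Cardinal.mk_image_eq_of_injOn tset S tset_injective.injOn, hS]
  · -- Part 2: ω₁ is least
    intro lam hgap
    by_contra hlt
    push_neg at hlt
    obtain ⟨A, B, ⟨horth, hnosep⟩, hA, hB⟩ := hgap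
    have hBc : B.Countable := by
      rw [Cardinal.countable_iff_lt_aleph_one, hB]; exact hlt
    have hAc : A.Countable := by
      rw [Cardinal.countable_iff_lt_aleph_one, hA]
      exact Cardinal.aleph0_lt_aleph_one
    have hAne : A.Nonempty := by
      rw [Set.nonempty_iff_ne_empty]
      intro h
      rw [h] at hA
      simp at hA
      exact Cardinal.aleph0_ne_zero hA.symm
    obtain ⟨g, hg⟩ := hAc.exists_eq_range hAne
    rcases B.eq_empty_or_nonempty with hBe|hBne
    · apply hnosep ∅
      constructor
      · intro s _hs
        have h0 : s ∩ (∅ : Set ℕ) = ∅ := Set.inter_empty s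
        rw [h0]
        exact (mem_EDfin_iff _).mpr ⟨0, fun i => by simp⟩
      · intro t ht; rw [hBe] at ht; exact absurd ht (Set.notMem_empty t)
    · obtain ⟨f, hf⟩ := hBc.exists_eq_range hBne
      have orth : ∀ m n, g m ∩ f n ∈ EDfin := by
        intro m n
        exact horth (g m) (by rw [hg]; exact Set.mem_range_self m)
          (f n) (by rw [hf]; exact Set.mem_range_self n)
      obtain ⟨C, hC1, hC2⟩ := countable_separated f g orth
      apply hnosep C
      constructor
      · intro s hs
        rw [hg] at hs; obtain ⟨m, rfl⟩ := hs; exact hC1 m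
      · intro t ht
        rw [hf] at ht; obtain ⟨n, rfl⟩ := ht; exact hC2 n
end

section
/- Let g : ω → ω∖{0}, let {a_i : i < ω} be a partition of ω into nonempty finite sets, and let I = I⟨a_i,φ_i⟩ be the fragmented ideal with submeasures φ_i(x) = |x|/g(i). If I is non-trivial, i.e. the sequence of reals {|a_i|/g(i) : i < ω} is unbounded, then the Rothberger number 𝔟(I) equals ℵ₁. In particular, the linear growth ideal I_L (where |a_i| = 2^i and g(i) = i+1) has Rothberger number ℵ₁. -/
open Set Filter Cardinal

namespace RQH


/-- binary encoding of the first `m` bits of `f`. -/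
def binEnc (f : ℕ → Bool) (m : ℕ) : ℕ := ∑ p ∈ Finset.range m, cond (f p) (2^p) 0

lemma binEnc_lt (f : ℕ → Bool) (m : ℕ) : binEnc f m < 2^m := by
  induction m with
  | zero => simp [binEnc]
  | succ m ih =>
    rw [binEnc, Finset.sum_range_succ, pow_succ]
    have : cond (f m) (2^m) 0 ≤ 2^m := by cases f m <;> simp
    have h2 : binEnc f m < 2^m := ih
    unfold binEnc at h2
    omega

lemma binEnc_inj (f f' : ℕ → Bool) (m : ℕ) (h : binEnc f m = binEnc f' m) :
    ∀ p < m, f p = f' p := by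
  induction m with
  | zero => omega
  | succ m ih =>
    have h1 := binEnc_lt f m
    have h2 := binEnc_lt f' m
    rw [binEnc, Finset.sum_range_succ] at h
    rw [binEnc, Finset.sum_range_succ] at h
    have htop : f m = f' m := by
      by_contra hne
      cases hf : f m <;> cases hf' : f' m <;> rw [hf, hf'] at h hne <;>
        simp at h hne <;> unfold binEnc at h1 h2 <;> omega
    have hrest : binEnc f m = binEnc f' m := by
      rw [htop] at h; unfold binEnc; cases f' m <;> simp at h <;> omega
    intro p hp
    rcases Nat.lt_succ_iff_lt_or_eq.mp hp with hp' | rfl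
    · exact ih hrest p hp'
    · exact htop

/-- in any window of length `M` there is a point in a given residue class mod `M`. -/
lemma exists_mod_in_window (a M c : ℕ) (hM : 0 < M) (hc : c < M) :
    ∃ p, a ≤ p ∧ p < a + M ∧ p % M = c := by
  have hid := Nat.div_add_mod a M
  set q := a / M with hq
  set b := a % M with hb
  have hbM : b < M := Nat.mod_lt _ hM
  by_cases hcb : b ≤ c
  · refine ⟨M * q + c, ?_, ?_, ?_⟩
    · omega
    · omega
    · rw [Nat.mul_add_mod]; exact Nat.mod_eq_of_lt hc
  · refine ⟨M * (q + 1) + c, ?_, ?_, ?_⟩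
    · have : M * (q+1) = M * q + M := by ring
      omega
    · have : M * (q+1) = M * q + M := by ring
      omega
    · rw [Nat.mul_add_mod]; exact Nat.mod_eq_of_lt hc

/-- the ruler function: 2-adic valuation of `p+1`. -/
def rul (p : ℕ) : ℕ := padicValNat 2 (p+1)

lemma rul_eq (n p : ℕ) (h : p % 2^(n+1) = 2^n - 1) : rul p = n := by
  have h2 : (0:ℕ) < 2^n := by positivity
  have hid := Nat.div_add_mod p (2^(n+1))
  set j := p / 2^(n+1) with hj
  have hp1 : p + 1 = 2^n * (2*j+1) := by
    have : (2:ℕ)^(n+1) = 2^n * 2 := by rw [pow_succ]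
    rw [h] at hid
    calc p + 1 = 2^(n+1) * j + (2^n - 1) + 1 := by omega
    _ = 2^n * (2*j+1) := by rw [this]; have := h2; ring_nf; omega
  rw [rul, hp1, padicValNat.mul (by positivity) (by omega), padicValNat.prime_pow]
  have : ¬ (2 ∣ (2*j+1)) := by omega
  rw [padicValNat.eq_zero_of_not_dvd this]; ring

/-- any window of length ≥ 2^(n+1) contains a point where `rul` equals `n`. -/
lemma rul_in_window (n a L : ℕ) (hL : 2^(n+1) ≤ L) :
    ∃ p, a ≤ p ∧ p < a + L ∧ rul p = n := by
  have h2 : (0:ℕ) < 2^n := by positivity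
  have h21 : (2:ℕ)^(n+1) = 2^n * 2 := by rw [pow_succ]
  obtain ⟨p, h1, h2', h3⟩ := exists_mod_in_window a (2^(n+1)) (2^n - 1)
    (by positivity) (by omega)
  exact ⟨p, h1, by omega, rul_eq n p h3⟩


lemma ncard_Ico (α β : ℕ) : (Set.Ico α β).ncard = β - α := by
  rw [← Finset.coe_Ico, Set.ncard_coe_finset, Nat.card_Ico]

/-- key counting lemma: blowing up each cell `v < B` to `G` points. -/
lemma count_div (B G : ℕ) (hG : 0 < G) (V : Set ℕ) :
    {m | m < B * G ∧ m / G ∈ V}.ncard = G * {v | v < B ∧ v ∈ V}.ncard := by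
  classical
  have hset : {m | m < B * G ∧ m / G ∈ V} =
      ↑((Finset.range (B*G)).filter (fun m => m / G ∈ V)) := by
    ext m; simp [Finset.mem_filter, Finset.mem_range]
  have hset2 : {v | v < B ∧ v ∈ V} = ↑((Finset.range B).filter (fun v => v ∈ V)) := by
    ext v; simp [Finset.mem_filter, Finset.mem_range]
  rw [hset, hset2, Set.ncard_coe_finset, Set.ncard_coe_finset]
  have hbi : (Finset.range (B*G)).filter (fun m => m / G ∈ V) =
      ((Finset.range B).filter (fun v => v ∈ V)).biUnion
        (fun v => Finset.Ico (v*G) (v*G+G)) := by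
    ext m
    simp only [Finset.mem_filter, Finset.mem_range, Finset.mem_biUnion, Finset.mem_Ico]
    constructor
    · rintro ⟨hm, hmV⟩
      refine ⟨m / G, ⟨?_, hmV⟩, ?_, ?_⟩
      · exact Nat.div_lt_of_lt_mul (by rwa [mul_comm] at hm)
      · exact Nat.div_mul_le_self m G
      · have h1 := Nat.div_add_mod m G
        have h2 : m % G < G := Nat.mod_lt _ hG
        calc m = G * (m/G) + m % G := h1.symm
        _ < G * (m/G) + G := by omega
        _ = m/G * G + G := by ring
    · rintro ⟨v, ⟨hvB, hvV⟩, h1, h2⟩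
      have hdiv : m / G = v := Nat.div_eq_of_lt_le h1 (by rw [add_mul, one_mul]; omega)
      refine ⟨?_, by rwa [hdiv]⟩
      calc m < v*G + G := h2
      _ = (v+1)*G := by ring
      _ ≤ B * G := Nat.mul_le_mul_right _ (by omega)
  rw [hbi, Finset.card_biUnion]
  · rw [Finset.sum_congr rfl (fun v _ => Nat.card_Ico (v*G) (v*G+G))]
    simp only [Nat.add_sub_cancel_left]
    rw [Finset.sum_const, smul_eq_mul, mul_comm]
  · intro x _ y _ hxy
    rw [Function.onFun, Finset.disjoint_left]
    intro m hm hm'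
    simp only [Finset.mem_Ico] at hm hm'
    rcases Nat.lt_or_ge x y with h | h
    · have : x*G + G ≤ y*G := by
        calc x*G+G = (x+1)*G := by ring
        _ ≤ y*G := Nat.mul_le_mul_right _ h
      omega
    · have hyx : y < x := by omega
      have : y*G + G ≤ x*G := by
        calc y*G+G = (y+1)*G := by ring
        _ ≤ x*G := Nat.mul_le_mul_right _ hyx
      omega

/-- choose a strictly monotone sequence of witnesses. -/
lemma exists_strictMono_choice (P : ℕ → ℕ → Prop)
    (step : ∀ t m, ∃ i, m ≤ i ∧ P t i) :
    ∃ idx : ℕ → ℕ, StrictMono idx ∧ ∀ t, P t (idx t) := by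
  choose f hf1 hf2 using step
  let F : ℕ → ℕ := fun t => Nat.rec (f 0 0) (fun t ih => f (t+1) (ih+1)) t
  refine ⟨F, strictMono_nat_of_lt_succ (fun t => ?_), fun t => ?_⟩
  · have := hf1 (t+1) (F t + 1); simpa [F] using this
  · cases t with
    | zero => exact hf2 0 0
    | succ t => exact hf2 (t+1) _

/-- an injective enumeration of `N` points of a finite set of size ≥ N. -/
lemma exists_inj_enum (s : Set ℕ) (hfin : s.Finite) (N : ℕ) (hN : N ≤ s.ncard) :
    ∃ f : ℕ → ℕ, (∀ m < N, f m ∈ s) ∧ ∀ m < N, ∀ m' < N, f m = f m' → m = m' := by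
  classical
  have hcard : hfin.toFinset.card = s.ncard := (Set.ncard_eq_toFinset_card s hfin).symm
  obtain ⟨u, hu, hucard⟩ := hfin.toFinset.exists_subset_card_eq (by omega : N ≤ hfin.toFinset.card)
  have e := u.equivFin
  refine ⟨fun m => if hm : m < N then (e.symm ⟨m, by omega⟩ : ℕ) else 0, ?_, ?_⟩
  · intro m hm
    simp only [hm, dif_pos]
    have := (e.symm ⟨m, by omega⟩).2
    have := hu this
    simpa using this
  · intro m hm m' hm' heq
    simp only [hm, hm', dif_pos] at heq
    have := e.symm.injective (Subtype.coe_injective heq)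
    simpa using this

/-- lower bound for the size of a disjoint union. -/
lemma ncard_biUnion_ge {α : Type*} (T : Finset α) (X : α → Set ℕ) (c : ℕ)
    (hfin : ∀ r ∈ T, (X r).Finite)
    (hdisj : ∀ r ∈ T, ∀ r' ∈ T, r ≠ r' → Disjoint (X r) (X r'))
    (hc : ∀ r ∈ T, c ≤ (X r).ncard) :
    T.card * c ≤ (⋃ r ∈ T, X r).ncard := by
  classical
  induction T using Finset.induction with
  | empty => simp
  | insert _ _ hnotmem ih =>
    rename_i r T'
    rw [Finset.card_insert_of_notMem hnotmem]
    have hXr : (X r).Finite := hfin r (Finset.mem_insert_self _ _)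
    have hU : (⋃ r' ∈ T', X r') = ⋃ r' ∈ (T' : Set α), X r' := by simp
    have hUfin : (⋃ r' ∈ T', X r').Finite := by
      rw [hU]
      exact Set.Finite.biUnion T'.finite_toSet
        (fun r' hr' => hfin r' (Finset.mem_insert_of_mem hr'))
    have hsetins : (⋃ x ∈ insert r T', X x) = X r ∪ ⋃ x ∈ T', X x := by
      simp [Set.biUnion_insert]
    rw [hsetins]
    have hdisj2 : Disjoint (X r) (⋃ x ∈ T', X x) := by
      rw [Set.disjoint_iff_inter_eq_empty]
      ext y
      simp only [Set.mem_inter_iff, Set.mem_iUnion, Set.mem_empty_iff_false, iff_false]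
      rintro ⟨hy1, x, hx, hy2⟩
      have : r ≠ x := by rintro rfl; exact hnotmem hx
      exact (hdisj r (Finset.mem_insert_self _ _) x (Finset.mem_insert_of_mem hx) this).le_bot
        ⟨hy1, hy2⟩ |>.elim
    rw [Set.ncard_union_eq hdisj2 hXr hUfin]
    have h1 : c ≤ (X r).ncard := hc r (Finset.mem_insert_self _ _)
    have h2 : T'.card * c ≤ (⋃ x ∈ T', X x).ncard :=
      ih (fun x hx => hfin x (Finset.mem_insert_of_mem hx))
        (fun x hx y hy => hdisj x (Finset.mem_insert_of_mem hx) y (Finset.mem_insert_of_mem hy))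
        (fun x hx => hc x (Finset.mem_insert_of_mem hx))
    nlinarith



/-- a finite union of ideal sets is in the ideal. -/
lemma iUnion_le_mem (I : Set (Set ℕ))
    (hunion : ∀ x y : Set ℕ, x ∈ I → y ∈ I → x ∪ y ∈ I)
    (f : ℕ → Set ℕ) (m : ℕ) (hf : ∀ k ≤ m, f k ∈ I) :
    (⋃ k, ⋃ (_ : k ≤ m), f k) ∈ I := by
  induction m with
  | zero =>
    have h0 : (⋃ k, ⋃ (_ : k ≤ 0), f k) = f 0 := by
      ext x; simp only [Set.mem_iUnion]
      constructor
      · rintro ⟨k, hk, hx⟩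
        have : k = 0 := by omega
        subst this; exact hx
      · intro hx; exact ⟨0, le_refl 0, hx⟩
    rw [h0]; exact hf 0 (le_refl 0)
  | succ m ih =>
    have hs : (⋃ k, ⋃ (_ : k ≤ m+1), f k) = (⋃ k, ⋃ (_ : k ≤ m), f k) ∪ f (m+1) := by
      ext x; simp only [Set.mem_iUnion, Set.mem_union]
      constructor
      · rintro ⟨k, hk, hx⟩
        rcases Nat.lt_or_ge k (m+1) with h | h
        · exact Or.inl ⟨k, by omega, hx⟩
        · have : k = m + 1 := by omega
          subst this; exact Or.inr hx
      · rintro (⟨k, hk, hx⟩ | hx)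
        · exact ⟨k, by omega, hx⟩
        · exact ⟨m+1, le_refl _, hx⟩
    rw [hs]
    exact hunion _ _ (ih (fun k hk => hf k (by omega))) (hf (m+1) (le_refl _))

/-- countable orthogonal pairs can always be separated. -/
lemma sep_countable (I : Set (Set ℕ)) (hemp : ∅ ∈ I)
    (hdown : ∀ x y : Set ℕ, x ⊆ y → y ∈ I → x ∈ I)
    (hunion : ∀ x y : Set ℕ, x ∈ I → y ∈ I → x ∪ y ∈ I)
    (A B : Set (Set ℕ)) (hA : A.Countable) (hB : B.Countable)
    (horth : IOrthogonal I A B) : ∃ C : Set ℕ, ISeparates I A B C := by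
  rcases A.eq_empty_or_nonempty with rfl | hAne
  · exact ⟨Set.univ, fun s hs => absurd hs (Set.notMem_empty s),
      fun t _ => by simpa using hemp⟩
  rcases B.eq_empty_or_nonempty with rfl | hBne
  · exact ⟨∅, fun s _ => by simpa using hemp, fun t ht => absurd ht (Set.notMem_empty t)⟩
  obtain ⟨s, rfl⟩ := hA.exists_eq_range hAne
  obtain ⟨t, rfl⟩ := hB.exists_eq_range hBne
  -- increasing hulls
  set SA : ℕ → Set ℕ := fun n => ⋃ k, ⋃ (_ : k ≤ n), s k with hSA
  set TB : ℕ → Set ℕ := fun n => ⋃ k, ⋃ (_ : k ≤ n), t k with hTB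
  refine ⟨⋃ n, (TB n \ SA n), ?_, ?_⟩
  · rintro u ⟨m, rfl⟩
    have hsub : s m ∩ (⋃ n, (TB n \ SA n)) ⊆ ⋃ k, ⋃ (_ : k ≤ m), (s m ∩ t k) := by
      rintro x ⟨hxs, hxC⟩
      obtain ⟨n, hxn⟩ := Set.mem_iUnion.mp hxC
      have hxTB := hxn.1
      have hxSA := hxn.2
      rcases Nat.lt_or_ge n m with h | h
      · simp only [Set.mem_iUnion, hTB] at hxTB
        obtain ⟨k, hk, hx2⟩ := hxTB
        exact Set.mem_iUnion.mpr ⟨k, Set.mem_iUnion.mpr ⟨by omega, ⟨hxs, hx2⟩⟩⟩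
      · exfalso
        apply hxSA
        exact Set.mem_iUnion.mpr ⟨m, Set.mem_iUnion.mpr ⟨by omega, hxs⟩⟩
    refine hdown _ _ hsub (iUnion_le_mem I hunion _ m (fun k hk => ?_))
    exact horth (s m) (Set.mem_range_self m) (t k) (Set.mem_range_self k)
  · rintro v ⟨m, rfl⟩
    have hsub : t m \ (⋃ n, (TB n \ SA n)) ⊆ ⋃ k, ⋃ (_ : k ≤ m), (t m ∩ s k) := by
      rintro x ⟨hxt, hxC⟩
      have hxTB : x ∈ TB m := Set.mem_iUnion.mpr ⟨m, Set.mem_iUnion.mpr ⟨le_refl _, hxt⟩⟩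
      have hxm : x ∉ TB m \ SA m := fun h => hxC (Set.mem_iUnion.mpr ⟨m, h⟩)
      have hxSA : x ∈ SA m := by
        by_contra h
        exact hxm ⟨hxTB, h⟩
      simp only [Set.mem_iUnion, hSA] at hxSA
      obtain ⟨k, hk2, hx2⟩ := hxSA
      exact Set.mem_iUnion.mpr ⟨k, Set.mem_iUnion.mpr ⟨hk2, ⟨hxt, hx2⟩⟩⟩
    refine hdown _ _ hsub (iUnion_le_mem I hunion _ m (fun k hk => ?_))
    have := horth (s k) (Set.mem_range_self k) (t m) (Set.mem_range_self m)
    exact hdown _ _ (by intro x hx; exact ⟨hx.2, hx.1⟩) this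

set_option linter.unusedSectionVars false

section Grid

variable (g idx : ℕ → ℕ) (a : ℕ → Set ℕ) (cf : ℕ → ℕ → ℕ)

/-- the union of the pieces selected by the cell predicate `Φ`. -/
def DD (Φ : ℕ → ℕ → Prop) : Set ℕ :=
  ⋃ t, cf t '' {m | m < 2^t * g (idx t) ∧ Φ t (m / g (idx t))}

/-- cells whose low bits (below position `t/2`) are below `2^n`. -/
def Acond (n : ℕ) : ℕ → ℕ → Prop := fun t v => v < 2^t ∧ v % 2^(t/2) < 2^n

/-- the code of the branch `r` in column `t`: upper bits read along the ruler. -/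
def code (r : ℕ → Bool) (t : ℕ) : ℕ := binEnc (fun p => r (rul (t/2 + p))) (t - t/2)

/-- cells whose upper bits follow the branch `r`. -/
def Bcond (r : ℕ → Bool) : ℕ → ℕ → Prop := fun t v => v < 2^t ∧ v / 2^(t/2) = code r t

/-- cells satisfying both an `A`-condition and a `B`-condition form an interval. -/
lemma AB_cells (n : ℕ) (r : ℕ → Bool) (t : ℕ) (hnt : n ≤ t/2) :
    {v | v < 2^t ∧ (Acond n t v ∧ Bcond r t v)} =
      Set.Ico (code r t * 2^(t/2)) (code r t * 2^(t/2) + 2^n) := by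
  have hh : t/2 ≤ t := Nat.div_le_self t 2
  have hpow : (2:ℕ)^(t - t/2) * 2^(t/2) = 2^t := by
    rw [← pow_add]; congr 1; omega
  have hcode : code r t < 2^(t - t/2) := binEnc_lt _ _
  have h2n : (2:ℕ)^n ≤ 2^(t/2) := Nat.pow_le_pow_right (by norm_num) hnt
  have h2h : (0:ℕ) < 2^(t/2) := by positivity
  ext v
  simp only [Set.mem_setOf_eq, Set.mem_Ico, Acond, Bcond]
  constructor
  · rintro ⟨hv, ⟨_, hmod⟩, ⟨_, hdiv⟩⟩
    have hdm := Nat.div_add_mod v (2^(t/2))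
    rw [hdiv] at hdm
    constructor
    · rw [mul_comm]; linarith [Nat.zero_le (v % 2^(t/2))]
    · rw [mul_comm]; linarith
  · rintro ⟨h1, h2⟩
    have hvlt : v < (code r t + 1) * 2^(t/2) := by
      rw [add_mul, one_mul]; omega
    have hvt : v < 2^t := by
      calc v < (code r t + 1) * 2^(t/2) := hvlt
      _ ≤ 2^(t - t/2) * 2^(t/2) := Nat.mul_le_mul_right _ (by omega)
      _ = 2^t := hpow
    have hdiv : v / 2^(t/2) = code r t := Nat.div_eq_of_lt_le h1 hvlt
    have hmod : v % 2^(t/2) < 2^n := by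
      have hdm := Nat.div_add_mod v (2^(t/2))
      rw [hdiv] at hdm
      rw [mul_comm] at h1 h2
      omega
    exact ⟨hvt, ⟨hvt, hmod⟩, ⟨hvt, hdiv⟩⟩

/-- distinct branches have distinct codes in all suitable columns. -/
lemma code_ne (r r' : ℕ → Bool) (n : ℕ) (hrn : r n ≠ r' n) (t : ℕ)
    (ht : 2^(n+2) ≤ t) : code r t ≠ code r' t := by
  have h1 : (2:ℕ)^(n+1) ≤ t/2 := by
    have : (2:ℕ)^(n+2) = 2^(n+1) * 2 := by rw [pow_succ]
    omega
  obtain ⟨p, hp1, hp2, hp3⟩ := rul_in_window n (t/2) (t - t/2)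
    (by have := Nat.div_le_self t 2; omega)
  intro hcode
  have hq : p - t/2 < t - t/2 := by omega
  have := binEnc_inj _ _ _ hcode (p - t/2) hq
  rw [show t/2 + (p - t/2) = p by omega, hp3] at this
  exact hrn this

variable (hg : ∀ i, 0 < g i)
  (hdisj : ∀ i j, i ≠ j → Disjoint (a i) (a j))
  (hidx : StrictMono idx)
  (hcfmem : ∀ t m, m < 2^t * g (idx t) → cf t m ∈ a (idx t))
  (hcfinj : ∀ t m m', m < 2^t * g (idx t) → m' < 2^t * g (idx t) → cf t m = cf t m' → m = m')

section
include hdisj hidx hcfmem hcfinj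

lemma cf_eq {t t' m m' : ℕ} (hm : m < 2^t * g (idx t)) (hm' : m' < 2^t' * g (idx t'))
    (h : cf t m = cf t' m') : t = t' ∧ m = m' := by
  have htt : t = t' := by
    by_contra hne
    have h1 := hcfmem t m hm
    have h2 := hcfmem t' m' hm'
    rw [h] at h1
    exact (hdisj (idx t) (idx t') (fun hh => hne (hidx.injective hh))).le_bot ⟨h1, h2⟩
  subst htt
  exact ⟨rfl, hcfinj t m m' hm hm' h⟩

lemma DD_block (Φ : ℕ → ℕ → Prop) (t : ℕ) :
    DD g idx cf Φ ∩ a (idx t) =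
      cf t '' {m | m < 2^t * g (idx t) ∧ Φ t (m / g (idx t))} := by
  ext x
  constructor
  · rintro ⟨hxD, hxa⟩
    obtain ⟨t', hx'⟩ := Set.mem_iUnion.mp hxD
    obtain ⟨m, hm, rfl⟩ := hx'
    by_cases htt : t' = t
    · subst htt; exact ⟨m, hm, rfl⟩
    · exfalso
      exact (hdisj (idx t') (idx t) (fun hh => htt (hidx.injective hh))).le_bot
        ⟨hcfmem t' m hm.1, hxa⟩
  · rintro ⟨m, hm, rfl⟩
    exact ⟨Set.mem_iUnion.mpr ⟨t, ⟨m, hm, rfl⟩⟩, hcfmem t m hm.1⟩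

lemma DD_off (Φ : ℕ → ℕ → Prop) (i : ℕ) (hi : ∀ t, i ≠ idx t) :
    DD g idx cf Φ ∩ a i = ∅ := by
  ext x
  simp only [Set.mem_inter_iff, Set.mem_empty_iff_false, iff_false, not_and]
  rintro hxD hxa
  obtain ⟨t', hx'⟩ := Set.mem_iUnion.mp hxD
  obtain ⟨m, hm, rfl⟩ := hx'
  exact (hdisj (idx t') i (fun hh => hi t' hh.symm)).le_bot ⟨hcfmem t' m hm.1, hxa⟩

lemma DD_inter (Φ Ψ : ℕ → ℕ → Prop) :
    DD g idx cf Φ ∩ DD g idx cf Ψ = DD g idx cf (fun t v => Φ t v ∧ Ψ t v) := by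
  ext x
  constructor
  · rintro ⟨h1, h2⟩
    obtain ⟨t, hx⟩ := Set.mem_iUnion.mp h1
    obtain ⟨m, hm, rfl⟩ := hx
    obtain ⟨t', hx'⟩ := Set.mem_iUnion.mp h2
    obtain ⟨m', hm', heq⟩ := hx'
    obtain ⟨rfl, rfl⟩ := cf_eq g idx a cf hdisj hidx hcfmem hcfinj hm.1 hm'.1 heq.symm
    exact Set.mem_iUnion.mpr ⟨t, ⟨m, ⟨hm.1, hm.2, hm'.2⟩, rfl⟩⟩
  · rintro hx
    obtain ⟨t, hx'⟩ := Set.mem_iUnion.mp hx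
    obtain ⟨m, hm, rfl⟩ := hx'
    exact ⟨Set.mem_iUnion.mpr ⟨t, ⟨m, ⟨hm.1, hm.2.1⟩, rfl⟩⟩,
      Set.mem_iUnion.mpr ⟨t, ⟨m, ⟨hm.1, hm.2.2⟩, rfl⟩⟩⟩

lemma mem_DD_of (hgpos : ∀ i, 0 < g i) (Φ : ℕ → ℕ → Prop) (t v : ℕ) (hv : v < 2^t)
    (hΦ : Φ t v) : cf t (v * g (idx t)) ∈ DD g idx cf Φ := by
  have hG := hgpos (idx t)
  refine Set.mem_iUnion.mpr ⟨t, ⟨v * g (idx t), ⟨?_, ?_⟩, rfl⟩⟩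
  · exact (Nat.mul_lt_mul_right hG).mpr hv
  · rwa [Nat.mul_div_cancel _ hG]

lemma not_mem_DD (hgpos : ∀ i, 0 < g i) (Φ : ℕ → ℕ → Prop) (t v : ℕ) (hv : v < 2^t)
    (hΦ : ¬ Φ t v) : cf t (v * g (idx t)) ∉ DD g idx cf Φ := by
  have hG := hgpos (idx t)
  intro hx
  obtain ⟨t', hx'⟩ := Set.mem_iUnion.mp hx
  obtain ⟨m', hm', heq⟩ := hx'
  obtain ⟨ht, hmm⟩ := cf_eq g idx a cf hdisj hidx hcfmem hcfinj hm'.1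
    ((Nat.mul_lt_mul_right hG).mpr hv) heq
  subst ht
  apply hΦ
  have h2 := hm'.2
  rw [hmm, Nat.mul_div_cancel _ hG] at h2
  exact h2

end

section
include hg hdisj hidx hcfmem hcfinj

lemma trace_ncard (Φ : ℕ → ℕ → Prop) (t : ℕ) :
    (DD g idx cf Φ ∩ a (idx t)).ncard = g (idx t) * {v | v < 2^t ∧ Φ t v}.ncard := by
  rw [DD_block g idx a cf hdisj hidx hcfmem hcfinj Φ t]
  rw [Set.ncard_image_of_injOn (fun m hm m' hm' heq => hcfinj t m m' hm.1 hm'.1 heq)]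
  exact count_div (2^t) (g (idx t)) (hg (idx t)) {v | Φ t v}

lemma DD_mem (I : Set (Set ℕ))
    (hiff : ∀ x : Set ℕ, x ∈ I ↔ ∃ K : ℝ, ∀ i, (((x ∩ a i).ncard : ℝ) / (g i : ℝ)) ≤ K)
    (Φ : ℕ → ℕ → Prop) (β : ℕ)
    (hβ : ∀ t, {v | v < 2^t ∧ Φ t v}.ncard ≤ β) : DD g idx cf Φ ∈ I := by
  refine (hiff _).mpr ⟨(β : ℝ), fun i => ?_⟩
  have hGpos : (0:ℝ) < (g i : ℝ) := by exact_mod_cast hg i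
  by_cases hcase : ∃ t, i = idx t
  · obtain ⟨t, rfl⟩ := hcase
    rw [trace_ncard g idx a cf hg hdisj hidx hcfmem hcfinj Φ t]
    rw [div_le_iff₀ hGpos]
    have hn : g (idx t) * {v | v < 2^t ∧ Φ t v}.ncard ≤ β * g (idx t) := by
      calc g (idx t) * {v | v < 2^t ∧ Φ t v}.ncard ≤ g (idx t) * β :=
            Nat.mul_le_mul_left _ (hβ t)
      _ = β * g (idx t) := Nat.mul_comm _ _
    exact_mod_cast hn
  · rw [DD_off g idx a cf hdisj hidx hcfmem hcfinj Φ i (fun t ht => hcase ⟨t, ht⟩)]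
    simp only [Set.ncard_empty, Nat.cast_zero, zero_div]
    positivity

/-- exact size of the trace of `A n ∩ B r` in column `t`. -/
lemma AB_trace_ncard (n : ℕ) (r : ℕ → Bool) (t : ℕ) (hnt : n ≤ t/2) :
    ((DD g idx cf (Acond n) ∩ DD g idx cf (Bcond r)) ∩ a (idx t)).ncard
      = g (idx t) * 2^n := by
  rw [DD_inter g idx a cf hdisj hidx hcfmem hcfinj]
  rw [trace_ncard g idx a cf hg hdisj hidx hcfmem hcfinj _ t]
  rw [AB_cells n r t hnt, ncard_Ico]
  congr 1
  simp

/-- membership of `A n ∩ B r` in the ideal. -/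
lemma AB_mem (I : Set (Set ℕ))
    (hiff : ∀ x : Set ℕ, x ∈ I ↔ ∃ K : ℝ, ∀ i, (((x ∩ a i).ncard : ℝ) / (g i : ℝ)) ≤ K)
    (n : ℕ) (r : ℕ → Bool) :
    DD g idx cf (Acond n) ∩ DD g idx cf (Bcond r) ∈ I := by
  rw [DD_inter g idx a cf hdisj hidx hcfmem hcfinj]
  refine DD_mem g idx a cf hg hdisj hidx hcfmem hcfinj I hiff _ (2^n) (fun t => ?_)
  have hsub : {v | v < 2^t ∧ (Acond n t v ∧ Bcond r t v)} ⊆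
      Set.Ico (code r t * 2^(t/2)) (code r t * 2^(t/2) + 2^n) := by
    rintro v ⟨hv, ⟨_, hmod⟩, ⟨_, hdiv⟩⟩
    have hdm := Nat.div_add_mod v (2^(t/2))
    rw [hdiv] at hdm
    simp only [Set.mem_Ico]
    constructor
    · rw [mul_comm]; linarith [Nat.zero_le (v % 2^(t/2))]
    · rw [mul_comm]; linarith
  calc {v | v < 2^t ∧ (Acond n t v ∧ Bcond r t v)}.ncard
      ≤ (Set.Ico (code r t * 2^(t/2)) (code r t * 2^(t/2) + 2^n)).ncard :=
        Set.ncard_le_ncard hsub (Set.finite_Ico _ _)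
  _ = 2^n := by rw [ncard_Ico]; simp

/-- traces of `DD`-sets with incompatible cell conditions in a column are disjoint. -/
lemma DD_trace_disjoint (Φ Ψ : ℕ → ℕ → Prop) (t : ℕ)
    (hcell : ∀ v, ¬ (Φ t v ∧ Ψ t v)) :
    Disjoint (DD g idx cf Φ ∩ a (idx t)) (DD g idx cf Ψ ∩ a (idx t)) := by
  rw [Set.disjoint_left]
  intro x hx hx'
  rw [DD_block g idx a cf hdisj hidx hcfmem hcfinj Φ t] at hx
  rw [DD_block g idx a cf hdisj hidx hcfmem hcfinj Ψ t] at hx'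
  obtain ⟨m, hm, rfl⟩ := hx
  obtain ⟨m', hm', heq⟩ := hx'
  obtain ⟨_, rfl⟩ := cf_eq g idx a cf hdisj hidx hcfmem hcfinj hm'.1 hm.1 heq
  exact hcell _ ⟨hm.2, hm'.2⟩

/-- the map `n ↦ A n` is injective. -/
lemma A_inj_aux (n m : ℕ) (hnm : n < m) :
    ∃ x, x ∈ DD g idx cf (Acond m) ∧ x ∉ DD g idx cf (Acond n) := by
  set t := 2*(n+2) with htdef
  have hht : t/2 = n+2 := by omega
  have hvt : (2:ℕ)^n < 2^t := Nat.pow_lt_pow_right (by norm_num) (by omega)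
  have hmod : (2:ℕ)^n % 2^(t/2) = 2^n := by
    rw [hht]; exact Nat.mod_eq_of_lt (Nat.pow_lt_pow_right (by norm_num) (by omega))
  refine ⟨cf t (2^n * g (idx t)), ?_, ?_⟩
  · exact mem_DD_of g idx a cf hdisj hidx hcfmem hcfinj hg _ t (2^n) hvt
      ⟨hvt, by rw [hmod]; exact Nat.pow_lt_pow_right (by norm_num) hnm⟩
  · exact not_mem_DD g idx a cf hdisj hidx hcfmem hcfinj hg _ t (2^n) hvt
      (by rw [Acond, hmod]; simp)

lemma A_inj : Function.Injective (fun n => DD g idx cf (Acond n)) := by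
  intro n m h
  have h' : DD g idx cf (Acond n) = DD g idx cf (Acond m) := h
  by_contra hne
  rcases Nat.lt_or_ge n m with hlt | hge
  · obtain ⟨x, hx1, hx2⟩ := A_inj_aux g idx a cf hg hdisj hidx hcfmem hcfinj n m hlt
    rw [← h'] at hx1
    exact hx2 hx1
  · have hlt : m < n := by omega
    obtain ⟨x, hx1, hx2⟩ := A_inj_aux g idx a cf hg hdisj hidx hcfmem hcfinj m n hlt
    rw [h'] at hx1
    exact hx2 hx1

lemma B_inj : Function.Injective (fun r => DD g idx cf (Bcond r)) := by
  intro r r' h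
  have h' : DD g idx cf (Bcond r) = DD g idx cf (Bcond r') := h
  by_contra hne
  obtain ⟨n, hn⟩ := Function.ne_iff.mp hne
  set t := 2^(n+2) with htdef
  have hcode := code_ne r r' n hn t (le_refl _)
  have hh : t/2 ≤ t := Nat.div_le_self t 2
  have hpow : (2:ℕ)^(t - t/2) * 2^(t/2) = 2^t := by
    rw [← pow_add]; congr 1; omega
  have h2h : (0:ℕ) < 2^(t/2) := by positivity
  set v := code r t * 2^(t/2) with hvdef
  have hvt : v < 2^t := by
    calc v < 2^(t - t/2) * 2^(t/2) := by
          exact (Nat.mul_lt_mul_right h2h).mpr (binEnc_lt _ _)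
    _ = 2^t := hpow
  have hvdiv : v / 2^(t/2) = code r t := Nat.mul_div_cancel _ h2h
  have hx1 : cf t (v * g (idx t)) ∈ DD g idx cf (Bcond r) :=
    mem_DD_of g idx a cf hdisj hidx hcfmem hcfinj hg _ t v hvt ⟨hvt, hvdiv⟩
  have hx2 : cf t (v * g (idx t)) ∉ DD g idx cf (Bcond r') :=
    not_mem_DD g idx a cf hdisj hidx hcfmem hcfinj hg _ t v hvt
      (by rw [Bcond]; push_neg; intro _; rw [hvdiv]; exact hcode)
  rw [h'] at hx1
  exact hx2 hx1

end

section
include hg hdisj hidx hcfmem hcfinj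

lemma no_separation
    (hfinb : ∀ i, (a i).Finite)
    (I : Set (Set ℕ))
    (hiff : ∀ x : Set ℕ, x ∈ I ↔ ∃ K : ℝ, ∀ i, (((x ∩ a i).ncard : ℝ) / (g i : ℝ)) ≤ K)
    (S : Set (ℕ → Bool)) (hS : ¬ S.Countable)
    (C : Set ℕ)
    (h1 : ∀ n : ℕ, DD g idx cf (Acond n) ∩ C ∈ I)
    (h2 : ∀ r ∈ S, DD g idx cf (Bcond r) \ C ∈ I) : False := by
  classical
  -- natural-number bounds for the B-side
  have hk : ∀ r : ℕ → Bool, ∃ k : ℕ, r ∈ S →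
      ∀ i, ((DD g idx cf (Bcond r) \ C) ∩ a i).ncard ≤ k * g i := by
    intro r
    by_cases hr : r ∈ S
    · obtain ⟨K, hK⟩ := (hiff _).mp (h2 r hr)
      refine ⟨⌈K⌉₊, fun _ i => ?_⟩
      have hGpos : (0:ℝ) < (g i : ℝ) := by exact_mod_cast hg i
      have hKi := hK i
      rw [div_le_iff₀ hGpos] at hKi
      have h2' : (((DD g idx cf (Bcond r) \ C) ∩ a i).ncard : ℝ) ≤ (⌈K⌉₊ : ℝ) * (g i : ℝ) :=
        hKi.trans (mul_le_mul_of_nonneg_right (Nat.le_ceil K) hGpos.le)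
      exact_mod_cast h2'
    · exact ⟨0, fun hr' => absurd hr' hr⟩
  choose kf hkf using hk
  -- a fiber of the bounding function is infinite
  have hfib : ∃ k : ℕ, {r ∈ S | kf r = k}.Infinite := by
    by_contra hfin
    push_neg at hfin
    apply hS
    have hcov : S ⊆ ⋃ k : ℕ, {r ∈ S | kf r = k} := fun r hr =>
      Set.mem_iUnion.mpr ⟨kf r, hr, rfl⟩
    exact (Set.countable_iUnion (fun k => (hfin k).countable)).mono hcov
  obtain ⟨k, hSinf⟩ := hfib
  -- bound for A (k+1) ∩ C
  obtain ⟨M, hM⟩ := (hiff _).mp (h1 (k+1))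
  obtain ⟨L, hL⟩ := exists_nat_gt M
  obtain ⟨T, hTsub, hTcard⟩ := hSinf.exists_subset_card_eq L
  -- pairwise difference positions
  set D : (ℕ → Bool) → (ℕ → Bool) → ℕ :=
    fun r r' => if h : ∃ n, r n ≠ r' n then h.choose else 0 with hD
  set W := T.sup (fun r => T.sup (fun r' => D r r')) with hW
  set t := 2^(W+2) + 2*(k+2) with ht
  have hone : 1 ≤ 2^(W+2) := Nat.one_le_two_pow
  have hht : k+1 ≤ t/2 := by omega
  have hcode : ∀ r ∈ T, ∀ r' ∈ T, r ≠ r' → code r t ≠ code r' t := by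
    intro r hr r' hr' hne
    obtain ⟨n0, hn0⟩ := Function.ne_iff.mp hne
    have hex : ∃ n, r n ≠ r' n := ⟨n0, hn0⟩
    have hDval : r (D r r') ≠ r' (D r r') := by
      rw [hD]; simp only [dif_pos hex]; exact hex.choose_spec
    have hle1 : D r r' ≤ T.sup (fun r'' => D r r'') :=
      Finset.le_sup (f := fun r'' => D r r'') hr'
    have hle2 : T.sup (fun r'' => D r r'') ≤ W :=
      Finset.le_sup (f := fun r0 => T.sup (fun r'' => D r0 r'')) hr
    have hle : D r r' ≤ W := le_trans hle1 hle2
    refine code_ne r r' (D r r') hDval t ?_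
    calc (2:ℕ)^(D r r' + 2) ≤ 2^(W+2) := Nat.pow_le_pow_right (by norm_num) (by omega)
    _ ≤ t := by omega
  -- work in column t
  have hGpos : 0 < g (idx t) := hg (idx t)
  set X : (ℕ → Bool) → Set ℕ :=
    fun r => (DD g idx cf (fun t' v => Acond (k+1) t' v ∧ Bcond r t' v) ∩ a (idx t)) ∩ C
    with hX
  have hXfin : ∀ r ∈ T, (X r).Finite := fun r _ =>
    (hfinb (idx t)).subset (fun x hx => hx.1.2)
  have hYcard : ∀ r : ℕ → Bool,
      (DD g idx cf (fun t' v => Acond (k+1) t' v ∧ Bcond r t' v) ∩ a (idx t)).ncard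
        = g (idx t) * 2^(k+1) := by
    intro r
    rw [← DD_inter g idx a cf hdisj hidx hcfmem hcfinj]
    exact AB_trace_ncard g idx a cf hg hdisj hidx hcfmem hcfinj (k+1) r t hht
  have hXcard : ∀ r ∈ T, g (idx t) ≤ (X r).ncard := by
    intro r hr
    obtain ⟨hrS, hrk⟩ := hTsub hr
    set Y := DD g idx cf (fun t' v => Acond (k+1) t' v ∧ Bcond r t' v) ∩ a (idx t) with hY
    have hYfin : Y.Finite := (hfinb (idx t)).subset (fun x hx => hx.2)
    have hYsplit : Y.ncard ≤ (Y ∩ C).ncard + (Y \ C).ncard := by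
      have hYeq : Y = (Y ∩ C) ∪ (Y \ C) := by
        ext x; by_cases hx : x ∈ C <;> simp [hx]
      calc Y.ncard = ((Y ∩ C) ∪ (Y \ C)).ncard := by rw [← hYeq]
      _ ≤ (Y ∩ C).ncard + (Y \ C).ncard := Set.ncard_union_le _ _
    have hZ : (Y \ C).ncard ≤ k * g (idx t) := by
      have hsub : Y \ C ⊆ (DD g idx cf (Bcond r) \ C) ∩ a (idx t) := by
        rintro x ⟨⟨hxDD, hxa⟩, hxC⟩
        have hxB : x ∈ DD g idx cf (Bcond r) := by
          have := (DD_inter g idx a cf hdisj hidx hcfmem hcfinj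
            (Acond (k+1)) (Bcond r)).symm ▸ hxDD
          exact this.2
        exact ⟨⟨hxB, hxC⟩, hxa⟩
      have hbd := hkf r hrS (idx t)
      rw [hrk] at hbd
      exact le_trans (Set.ncard_le_ncard hsub ((hfinb (idx t)).subset (fun x hx => hx.2))) hbd
    have h2pow : k + 2 ≤ 2^(k+1) := by
      have := Nat.lt_two_pow_self (n := k+1)
      omega
    have hYc := hYcard r
    have hXY : X r = Y ∩ C := rfl
    rw [hXY]
    nlinarith [hYsplit, hZ, hYc, Nat.zero_le ((Y ∩ C).ncard)]
  have hXdisj : ∀ r ∈ T, ∀ r' ∈ T, r ≠ r' → Disjoint (X r) (X r') := by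
    intro r hr r' hr' hne
    have hd := DD_trace_disjoint g idx a cf hg hdisj hidx hcfmem hcfinj
      (fun t' v => Acond (k+1) t' v ∧ Bcond r t' v)
      (fun t' v => Acond (k+1) t' v ∧ Bcond r' t' v) t
      (fun v hv => hcode r hr r' hr' hne (by
        obtain ⟨⟨hA1, hB1⟩, ⟨hA2, hB2⟩⟩ := hv
        exact hB1.2.symm.trans hB2.2))
    exact hd.mono (fun x hx => hx.1) (fun x hx => hx.1)
  have hsum : T.card * g (idx t) ≤ (⋃ r ∈ T, X r).ncard :=
    ncard_biUnion_ge T X (g (idx t)) hXfin hXdisj hXcard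
  have hU : (⋃ r ∈ T, X r) ⊆ (DD g idx cf (Acond (k+1)) ∩ C) ∩ a (idx t) := by
    rintro x hx
    simp only [Set.mem_iUnion] at hx
    obtain ⟨r, hr, hxX⟩ := hx
    obtain ⟨⟨hxDD, hxa⟩, hxC⟩ := hxX
    have hxA : x ∈ DD g idx cf (Acond (k+1)) := by
      have := (DD_inter g idx a cf hdisj hidx hcfmem hcfinj
        (Acond (k+1)) (Bcond r)).symm ▸ hxDD
      exact this.1
    exact ⟨⟨hxA, hxC⟩, hxa⟩
  have hfinal : L * g (idx t) ≤ ((DD g idx cf (Acond (k+1)) ∩ C) ∩ a (idx t)).ncard := by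
    rw [← hTcard]
    exact le_trans hsum
      (Set.ncard_le_ncard hU ((hfinb (idx t)).subset (fun x hx => hx.2)))
  have hMi := hM (idx t)
  have hGpos' : (0:ℝ) < (g (idx t) : ℝ) := by exact_mod_cast hGpos
  rw [div_le_iff₀ hGpos'] at hMi
  have hchain : (L : ℝ) * (g (idx t) : ℝ) ≤ M * (g (idx t) : ℝ) := by
    calc (L : ℝ) * (g (idx t) : ℝ)
        = ((L * g (idx t) : ℕ) : ℝ) := by push_cast; ring
    _ ≤ (((DD g idx cf (Acond (k+1)) ∩ C) ∩ a (idx t)).ncard : ℝ) := by exact_mod_cast hfinal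
    _ ≤ M * (g (idx t) : ℝ) := hMi
  have : (L : ℝ) ≤ M := le_of_mul_le_mul_right hchain hGpos'
  linarith

end

end Grid

end RQH

/-- Let `g : ω → ω ∖ {0}`, let `{a_i}` be a partition of `ω` into nonempty finite sets,
and let `I = I⟨a_i, φ_i⟩` be the fragmented ideal with submeasures `φ_i(x) = |x| / g(i)`.
If `I` is non-trivial, i.e. the sequence of reals `|a_i| / g(i)` is unbounded, then the
Rothberger number `𝔟(I)` equals `ℵ₁` (this covers in particular the linear growth
ideal `I_L`, where `|a_i| = 2^i` and `g(i) = i + 1`). -/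
theorem rothberger_quotient_counting_ideal_eq_aleph_one
    (g : ℕ → ℕ) (hg : ∀ i, 0 < g i)
    (a : ℕ → Set ℕ) (I : Set (Set ℕ))
    (hfrag : IsFragmentation I a (fun i x => (x.ncard : ℝ) / (g i : ℝ)))
    (hnontriv : ∀ K : ℝ, ∃ i, K < ((a i).ncard : ℝ) / (g i : ℝ)) :
    HasOmegaGap I (aleph 1) ∧
    ∀ lam : Cardinal, HasOmegaGap I lam → aleph 1 ≤ lam := by
  classical
  obtain ⟨hpart, hsubm, hiff0⟩ := hfrag
  obtain ⟨hne, hfinb, hdisj, hcover⟩ := hpart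
  have hiff : ∀ x : Set ℕ, x ∈ I ↔ ∃ K : ℝ, ∀ i, ((x ∩ a i).ncard : ℝ) / (g i : ℝ) ≤ K :=
    hiff0
  have hGpos : ∀ i, (0:ℝ) < (g i : ℝ) := fun i => by exact_mod_cast hg i
  -- basic ideal properties
  have hemp : ∅ ∈ I := (hiff ∅).mpr ⟨0, fun i => by simp [Set.empty_inter]⟩
  have hdown : ∀ x y : Set ℕ, x ⊆ y → y ∈ I → x ∈ I := by
    intro x y hxy hy
    obtain ⟨K, hK⟩ := (hiff y).mp hy
    refine (hiff x).mpr ⟨K, fun i => le_trans ?_ (hK i)⟩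
    have h1 : (x ∩ a i).ncard ≤ (y ∩ a i).ncard :=
      Set.ncard_le_ncard (fun z hz => ⟨hxy hz.1, hz.2⟩) ((hfinb i).subset (fun z hz => hz.2))
    gcongr
  have hunion : ∀ x y : Set ℕ, x ∈ I → y ∈ I → x ∪ y ∈ I := by
    intro x y hx hy
    obtain ⟨K1, hK1⟩ := (hiff x).mp hx
    obtain ⟨K2, hK2⟩ := (hiff y).mp hy
    refine (hiff _).mpr ⟨K1 + K2, fun i => ?_⟩
    have hsplit : ((x ∪ y) ∩ a i).ncard ≤ (x ∩ a i).ncard + (y ∩ a i).ncard := by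
      rw [Set.union_inter_distrib_right]
      exact Set.ncard_union_le _ _
    calc (((x ∪ y) ∩ a i).ncard : ℝ) / (g i : ℝ)
        ≤ (((x ∩ a i).ncard + (y ∩ a i).ncard : ℕ) : ℝ) / (g i : ℝ) := by
          gcongr
    _ = ((x ∩ a i).ncard : ℝ) / (g i : ℝ) + ((y ∩ a i).ncard : ℝ) / (g i : ℝ) := by
          push_cast; rw [add_div]
    _ ≤ K1 + K2 := add_le_add (hK1 i) (hK2 i)
  -- Part 2 : no countable gaps
  have part2 : ∀ lam : Cardinal, HasOmegaGap I lam → aleph 1 ≤ lam := by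
    rintro lam ⟨A, B, ⟨horth, hnosep⟩, hAcard, hBcard⟩
    by_contra hlt
    push_neg at hlt
    rw [← Cardinal.succ_aleph0] at hlt
    have hlam : lam ≤ ℵ₀ := Order.lt_succ_iff.mp hlt
    have hBc : B.Countable := by
      rw [← Set.countable_coe_iff]
      exact Cardinal.mk_le_aleph0_iff.mp (hBcard ▸ hlam)
    have hAc : A.Countable := by
      rw [← Set.countable_coe_iff]
      exact Cardinal.mk_le_aleph0_iff.mp (le_of_eq hAcard)
    obtain ⟨C, hC⟩ := RQH.sep_countable I hemp hdown hunion A B hAc hBc horth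
    exact hnosep C hC
  -- Part 1 : construction of an (ω, ℵ₁)-gap
  have step : ∀ t m : ℕ, ∃ i, m ≤ i ∧ 2^t * g i < (a i).ncard := by
    intro t m
    have hbd : ∃ Kb : ℝ, ∀ j < m, ((a j).ncard : ℝ) / (g j : ℝ) ≤ Kb := by
      clear hnontriv
      induction m with
      | zero => exact ⟨0, fun j hj => absurd hj (by omega)⟩
      | succ m ih =>
        obtain ⟨Kb, hKb⟩ := ih
        refine ⟨max Kb (((a m).ncard : ℝ) / (g m : ℝ)), fun j hj => ?_⟩
        rcases Nat.lt_or_ge j m with h | h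
        · exact le_trans (hKb j h) (le_max_left _ _)
        · have hjm : j = m := by omega
          subst hjm; exact le_max_right _ _
    obtain ⟨Kb, hKb⟩ := hbd
    obtain ⟨i, hi⟩ := hnontriv (max Kb ((2:ℝ)^t))
    refine ⟨i, ?_, ?_⟩
    · by_contra him
      push_neg at him
      have h1 := hKb i him
      have h2 : Kb ≤ max Kb ((2:ℝ)^t) := le_max_left _ _
      linarith
    · have h2 : ((2:ℝ)^t) < ((a i).ncard : ℝ) / (g i : ℝ) :=
        lt_of_le_of_lt (le_max_right _ _) hi
      rw [lt_div_iff₀ (hGpos i)] at h2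
      exact_mod_cast h2
  obtain ⟨idx, hidx, hPidx⟩ :=
    RQH.exists_strictMono_choice (fun t i => 2^t * g i < (a i).ncard) step
  have hcfex : ∀ t, ∃ f : ℕ → ℕ, (∀ m < 2^t * g (idx t), f m ∈ a (idx t)) ∧
      ∀ m < 2^t * g (idx t), ∀ m' < 2^t * g (idx t), f m = f m' → m = m' :=
    fun t => RQH.exists_inj_enum (a (idx t)) (hfinb (idx t)) _ (le_of_lt (hPidx t))
  choose cf hcfmem' hcfinj' using hcfex
  have hcfmem : ∀ t m, m < 2^t * g (idx t) → cf t m ∈ a (idx t) := hcfmem'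
  have hcfinj : ∀ t m m', m < 2^t * g (idx t) → m' < 2^t * g (idx t) →
      cf t m = cf t m' → m = m' := fun t m m' h h' => hcfinj' t m h m' h'
  -- an uncountable set of branches
  have harrow : aleph 1 ≤ #(ℕ → Bool) := by
    have h2 : #(ℕ → Bool) = 2 ^ ℵ₀ := by rw [Cardinal.mk_arrow]; simp
    rw [h2, ← Cardinal.succ_aleph0]
    exact Order.succ_le_of_lt (Cardinal.cantor ℵ₀)
  obtain ⟨S, hScard⟩ := Cardinal.le_mk_iff_exists_set.mp harrow
  have hSnc : ¬ S.Countable := by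
    intro h
    have h1 : #S ≤ ℵ₀ := Cardinal.mk_le_aleph0_iff.mpr (Set.countable_coe_iff.mpr h)
    rw [hScard] at h1
    exact absurd h1 (not_le.mpr Cardinal.aleph0_lt_aleph_one)
  refine ⟨⟨Set.range (fun n => RQH.DD g idx cf (RQH.Acond n)),
      (fun r => RQH.DD g idx cf (RQH.Bcond r)) '' S, ⟨?_, ?_⟩, ?_, ?_⟩, part2⟩
  · rintro sA ⟨n, rfl⟩ sB ⟨r, hr, rfl⟩
    exact RQH.AB_mem g idx a cf hg hdisj hidx hcfmem hcfinj I hiff n r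
  · intro C hC
    exact RQH.no_separation g idx a cf hg hdisj hidx hcfmem hcfinj hfinb I hiff S hSnc C
      (fun n => hC.1 _ ⟨n, rfl⟩) (fun r hr => hC.2 _ ⟨r, hr, rfl⟩)
  · rw [Cardinal.mk_range_eq _ (RQH.A_inj g idx a cf hg hdisj hidx hcfmem hcfinj)]
    exact Cardinal.mk_nat
  · rw [Cardinal.mk_image_eq_of_injOn _ _
      ((RQH.B_inj g idx a cf hg hdisj hidx hcfmem hcfinj).injOn)]
    exact hScard
end

section
/- Let I = I⟨a_j,φ_j⟩ be a fragmented ideal that is not gradually fragmented and such that every φ_j is a uniform submeasure (φ_j(x) depends only on |x|). Then the Rothberger number 𝔟(I) equals ℵ₁. -/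
open Set Filter Cardinal
open scoped Classical

set_option linter.unusedSectionVars false
set_option linter.unusedVariables false

lemma ncard_Iio_nat (m : ℕ) : (Set.Iio m).ncard = m := by
  rw [← Finset.coe_Iio, Set.ncard_coe_finset, Nat.card_Iio]

noncomputable section FragAux

variable (a : ℕ → Set ℕ) (φ : ℕ → Set ℕ → ℝ)

def nnF (i : ℕ) : ℕ := (a i).ncard

def EF (i : ℕ) : ℕ → ℕ := Nat.nth (· ∈ a i)

def pickF (i c : ℕ) : Set ℕ := EF a i '' (Set.Iio (min c (nnF a i)))

def fcF (i c : ℕ) : ℝ := φ i (pickF a i c)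

def thrF (i t : ℕ) : ℕ := Nat.findGreatest (fun c => fcF a φ i c ≤ (t : ℝ)) (nnF a i)

variable {a φ}
variable (hfin : ∀ i, (a i).Finite)
  (hsub : ∀ i, IsSubmeasureOn (a i) (φ i))
  (huni : ∀ j, ∀ x y : Set ℕ, x ⊆ a j → y ⊆ a j → x.ncard = y.ncard → φ j x = φ j y)

section
include hfin

lemma hfin' (i : ℕ) : {x | x ∈ a i}.Finite := by simpa using hfin i

lemma card_toFinset_eq (i : ℕ) : (hfin' hfin i).toFinset.card = nnF a i := by
  have h : (hfin' hfin i).toFinset = (hfin i).toFinset := by ext x; simp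
  rw [nnF, Set.ncard_eq_toFinset_card _ (hfin i), h]

lemma EF_injOn (i : ℕ) : Set.InjOn (EF a i) (Set.Iio (nnF a i)) := by
  have h := Nat.nth_injOn (p := (· ∈ a i)) (hfin' hfin i)
  rwa [card_toFinset_eq hfin] at h

lemma EF_mem {i c : ℕ} (hc : c < nnF a i) : EF a i c ∈ a i := by
  exact Nat.nth_mem_of_lt_card (n := c) (hfin' hfin i) (by rwa [card_toFinset_eq hfin])

lemma pickF_subset (i c : ℕ) : pickF a i c ⊆ a i := by
  rintro x ⟨y, hy, rfl⟩
  exact EF_mem hfin (lt_of_lt_of_le hy (min_le_right _ _))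

lemma pickF_ncard (i c : ℕ) : (pickF a i c).ncard = min c (nnF a i) := by
  have hss : Set.Iio (min c (nnF a i)) ⊆ Set.Iio (nnF a i) :=
    Set.Iio_subset_Iio (min_le_right _ _)
  have hinj : Set.InjOn (EF a i) (Set.Iio (min c (nnF a i))) :=
    Set.InjOn.mono hss (EF_injOn hfin i)
  rw [pickF, Set.ncard_image_of_injOn hinj, _root_.ncard_Iio_nat]

lemma pickF_mono (i : ℕ) {c d : ℕ} (h : c ≤ d) : pickF a i c ⊆ pickF a i d :=
  Set.image_mono (fun x hx => lt_of_lt_of_le hx (min_le_min_right _ h))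

lemma pickF_ncard_of_le {i c : ℕ} (h : c ≤ nnF a i) : (pickF a i c).ncard = c := by
  rw [pickF_ncard hfin, min_eq_left h]

end

section
include hfin hsub huni

lemma phi_eq_fc {i : ℕ} {x : Set ℕ} (hx : x ⊆ a i) : φ i x = fcF a φ i x.ncard := by
  have hxc : x.ncard ≤ nnF a i := Set.ncard_le_ncard hx (hfin i)
  exact huni i x _ hx (pickF_subset hfin i _) (by rw [pickF_ncard_of_le hfin hxc])

lemma fcF_mono (i : ℕ) {c d : ℕ} (h : c ≤ d) : fcF a φ i c ≤ fcF a φ i d :=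
  (hsub i).2.2.1 _ _ (pickF_mono hfin i h) (pickF_subset hfin i d)

lemma fcF_zero (i : ℕ) : fcF a φ i 0 = 0 := by
  have : pickF a i 0 = ∅ := by
    rw [pickF]
    have : Set.Iio (min 0 (nnF a i)) = (∅ : Set ℕ) := by ext x; simp
    rw [this, Set.image_empty]
  rw [fcF, this, (hsub i).1]

lemma fcF_nonneg (i c : ℕ) : 0 ≤ fcF a φ i c := (hsub i).2.1 _ (pickF_subset hfin i c)

lemma fcF_subadd (i : ℕ) (c d : ℕ) : fcF a φ i (c + d) ≤ fcF a φ i c + fcF a φ i d := by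
  have hm : pickF a i c ⊆ pickF a i (c+d) := pickF_mono hfin i (Nat.le_add_right c d)
  have hsplit : pickF a i (c + d) = pickF a i c ∪ (pickF a i (c+d) \ pickF a i c) :=
    (Set.union_diff_cancel hm).symm
  have hdsub : (pickF a i (c+d) \ pickF a i c) ⊆ a i := fun x hx => pickF_subset hfin i _ hx.1
  have h1 : φ i (pickF a i (c+d)) ≤ φ i (pickF a i c) + φ i (pickF a i (c+d) \ pickF a i c) := by
    conv_lhs => rw [hsplit]
    exact (hsub i).2.2.2 _ _ (pickF_subset hfin i c) hdsub
  have hdc : (pickF a i (c+d) \ pickF a i c).ncard ≤ d := by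
    rw [Set.ncard_diff hm ((hfin i).subset (pickF_subset hfin i c)), pickF_ncard hfin, pickF_ncard hfin]
    omega
  have h2 : φ i (pickF a i (c+d) \ pickF a i c) ≤ fcF a φ i d := by
    rw [phi_eq_fc hfin hsub huni hdsub]
    exact fcF_mono hfin hsub huni i hdc
  calc fcF a φ i (c+d) ≤ φ i (pickF a i c) + φ i (pickF a i (c+d) \ pickF a i c) := h1
    _ ≤ fcF a φ i c + fcF a φ i d := add_le_add le_rfl h2

lemma fcF_thr (i t : ℕ) : fcF a φ i (thrF a φ i t) ≤ (t : ℝ) :=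
  Nat.findGreatest_spec (P := fun c => fcF a φ i c ≤ (t:ℝ)) (m := 0) (Nat.zero_le _)
    (by show fcF a φ i 0 ≤ (t:ℝ); rw [fcF_zero hfin hsub huni]; positivity)

lemma thrF_le (i t : ℕ) : thrF a φ i t ≤ nnF a i := Nat.findGreatest_le _

lemma le_thrF {i t c : ℕ} (hc : c ≤ nnF a i) (h : fcF a φ i c ≤ (t:ℝ)) : c ≤ thrF a φ i t :=
  Nat.le_findGreatest hc h

lemma thrF_lt {i t c : ℕ} (h1 : thrF a φ i t < c) (h2 : c ≤ nnF a i) : (t:ℝ) < fcF a φ i c := by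
  have := Nat.findGreatest_is_greatest (P := fun c => fcF a φ i c ≤ (t:ℝ)) h1 h2
  linarith [lt_of_not_ge this]

lemma thrF_mono (i : ℕ) {t u : ℕ} (h : t ≤ u) : thrF a φ i t ≤ thrF a φ i u :=
  le_thrF hfin hsub huni (thrF_le hfin hsub huni i t)
    (le_trans (fcF_thr hfin hsub huni i t) (by exact_mod_cast h))

/-- for subsets of `a i`: smallness is exactly a cardinality threshold -/
lemma phi_le_iff {i t : ℕ} {x : Set ℕ} (hx : x ⊆ a i) :
    φ i x ≤ (t:ℝ) ↔ x.ncard ≤ thrF a φ i t := by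
  rw [phi_eq_fc hfin hsub huni hx]
  constructor
  · intro h
    exact le_thrF hfin hsub huni (Set.ncard_le_ncard hx (hfin i)) h
  · intro h
    exact le_trans (fcF_mono hfin hsub huni i h) (fcF_thr hfin hsub huni i t)

/-- doubling -/
lemma thrF_dbl {i t p : ℕ} (h2 : 2*t ≤ p) (hlt : thrF a φ i p < nnF a i) :
    2 * thrF a φ i t ≤ thrF a φ i p := by
  have hf2 : fcF a φ i (min (2 * thrF a φ i t) (nnF a i)) ≤ ((2*t : ℕ) : ℝ) := by
    have : fcF a φ i (min (2 * thrF a φ i t) (nnF a i)) ≤ fcF a φ i (2 * thrF a φ i t) :=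
      fcF_mono hfin hsub huni i (min_le_left _ _)
    have h2' : fcF a φ i (2 * thrF a φ i t) ≤ (t:ℝ) + (t:ℝ) := by
      have := fcF_subadd hfin hsub huni i (thrF a φ i t) (thrF a φ i t)
      have ht := fcF_thr hfin hsub huni i t
      calc fcF a φ i (2 * thrF a φ i t) = fcF a φ i (thrF a φ i t + thrF a φ i t) := by ring_nf
        _ ≤ fcF a φ i (thrF a φ i t) + fcF a φ i (thrF a φ i t) := this
        _ ≤ (t:ℝ) + (t:ℝ) := add_le_add ht ht
    push_cast
    linarith
  have hle : fcF a φ i (min (2 * thrF a φ i t) (nnF a i)) ≤ (p : ℝ) :=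
    le_trans hf2 (by exact_mod_cast Nat.cast_le.mpr h2)
  have := le_thrF hfin hsub huni (min_le_right _ _) hle
  omega

end

section Slots

/-- slot `c` of size `s` inside `a i` (safe version, always a subset of `a i`). -/
def slotF (a : ℕ → Set ℕ) (i c s : ℕ) : Set ℕ :=
  EF a i '' (Set.Ico (c * s) (c * s + s) ∩ Set.Iio (nnF a i))

variable (hfin : ∀ i, (a i).Finite)
include hfin

lemma slotF_subset (i c s : ℕ) : slotF a i c s ⊆ a i := by
  rintro x ⟨y, hy, rfl⟩
  exact EF_mem hfin hy.2

omit hfin in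
lemma slotF_subset_pick {i c s M : ℕ} (h : c * s + s ≤ M) :
    slotF a i c s ⊆ pickF a i M := by
  rintro x ⟨y, hy, rfl⟩
  exact ⟨y, lt_min (lt_of_lt_of_le hy.1.2 h) hy.2, rfl⟩

lemma slotF_ncard {i c s : ℕ} (h : c * s + s ≤ nnF a i) : (slotF a i c s).ncard = s := by
  have hico : Set.Ico (c*s) (c*s+s) ∩ Set.Iio (nnF a i) = Set.Ico (c*s) (c*s+s) := by
    apply Set.inter_eq_left.mpr
    intro y hy; exact lt_of_lt_of_le hy.2 h
  have hss : Set.Ico (c*s) (c*s+s) ⊆ Set.Iio (nnF a i) := fun y hy => lt_of_lt_of_le hy.2 h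
  rw [slotF, hico, Set.ncard_image_of_injOn (Set.InjOn.mono hss (EF_injOn hfin i)),
    ← Finset.coe_Ico, Set.ncard_coe_finset, Nat.card_Ico]
  omega

lemma slotF_disjoint {i c c' s : ℕ} (h : c ≠ c') :
    Disjoint (slotF a i c s) (slotF a i c' s) := by
  rw [Set.disjoint_left]
  rintro x ⟨y, hy, rfl⟩ ⟨y', hy', hxy⟩
  have hyy : y = y' := EF_injOn hfin i hy.2 hy'.2 hxy.symm
  subst hyy
  have h1 := hy.1.1
  have h2 := hy.1.2
  have h1' := hy'.1.1
  have h2' := hy'.1.2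
  rcases Nat.lt_or_ge c c' with hlt | hge
  · have : (c+1) * s ≤ c' * s := Nat.mul_le_mul_right _ (by omega)
    have hexp : (c+1)*s = c*s + s := by ring
    omega
  · have hlt : c' < c := lt_of_le_of_ne hge (Ne.symm h)
    have : (c'+1) * s ≤ c * s := Nat.mul_le_mul_right _ (by omega)
    have hexp : (c'+1)*s = c'*s + s := by ring
    omega

end Slots

/-- cardinality of a disjoint finite union -/
lemma ncard_disj_union_eq (u : ℕ → Set ℕ) (hf : ∀ c, (u c).Finite)
    (hd : ∀ c c', c ≠ c' → Disjoint (u c) (u c')) (q : ℕ) :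
    (⋃ c ∈ Finset.range q, u c).ncard = ∑ c ∈ Finset.range q, (u c).ncard := by
  induction q with
  | zero => simp
  | succ q ih =>
    rw [Finset.sum_range_succ, ← ih]
    have hun : (⋃ c ∈ Finset.range (q+1), u c) = (⋃ c ∈ Finset.range q, u c) ∪ u q := by
      ext x
      simp only [Set.mem_iUnion, Finset.mem_range, Set.mem_union]
      constructor
      · rintro ⟨c, hc, hx⟩
        rcases Nat.lt_or_ge c q with h | h
        · exact Or.inl ⟨c, h, hx⟩
        · have : c = q := by omega
          subst this; exact Or.inr hx
      · rintro (⟨c, hc, hx⟩ | hx)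
        · exact ⟨c, by omega, hx⟩
        · exact ⟨q, by omega, hx⟩
    have hd' : Disjoint (⋃ c ∈ Finset.range q, u c) (u q) := by
      rw [Set.disjoint_right]
      intro x hx hx'
      rcases Set.mem_iUnion₂.mp hx' with ⟨c, hc, hxc⟩
      simp only [Finset.mem_range] at hc
      exact Set.disjoint_left.mp (hd c q (by omega)) hxc hx
    have hf1 : (⋃ c ∈ Finset.range q, u c).Finite :=
      Set.Finite.biUnion (Finset.range q).finite_toSet (fun c _ => hf c)
    rw [hun, Set.ncard_union_eq hd' hf1 (hf q)]

end FragAux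

noncomputable section BlocksSec

/-- λ_j : slot level of row j -/
def lamR (k j : ℕ) : ℕ := (j+1)*(k+1)

def rowOf (n : ℕ) : ℕ := n.unpair.1
def dOf (n : ℕ) : ℕ := n.unpair.2.unpair.1
def tOf (n : ℕ) : ℕ := n.unpair.2.unpair.2
def pOf (k n : ℕ) : ℕ := lamR k (rowOf n) + dOf n

@[simp] lemma rowOf_pair (j d t : ℕ) : rowOf (Nat.pair j (Nat.pair d t)) = j := by
  simp [rowOf]
@[simp] lemma dOf_pair (j d t : ℕ) : dOf (Nat.pair j (Nat.pair d t)) = d := by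
  simp [dOf]
@[simp] lemma tOf_pair (j d t : ℕ) : tOf (Nat.pair j (Nat.pair d t)) = t := by
  simp [tOf]

lemma k_lt_lam (k j : ℕ) : k < lamR k j := by
  have h : 1*(k+1) ≤ (j+1)*(k+1) := Nat.mul_le_mul_right _ (by omega)
  rw [lamR]; omega

lemma lam_mono (k : ℕ) {j j' : ℕ} (h : j ≤ j') : lamR k j ≤ lamR k j' :=
  Nat.mul_le_mul_right _ (by omega)

lemma lam_le_p (k n : ℕ) : lamR k (rowOf n) ≤ pOf k n := Nat.le_add_right _ _

/-- recursive choice of fresh block indices -/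
def iotF (F : ℕ → ℕ → ℕ) : ℕ → ℕ
  | 0 => F 0 0
  | (n+1) => F (n+1) (iotF F n + 1)

lemma iotF_strictMono {F : ℕ → ℕ → ℕ} (hF : ∀ n b, b ≤ F n b) : StrictMono (iotF F) := by
  apply strictMono_nat_of_lt_succ
  intro n
  have h := hF (n+1) (iotF F n + 1)
  calc iotF F n < iotF F n + 1 := Nat.lt_succ_self _
    _ ≤ F (n+1) (iotF F n + 1) := h
    _ = iotF F (n+1) := rfl

variable (a : ℕ → Set ℕ) (φ : ℕ → Set ℕ → ℝ) (k : ℕ) (l : ℕ → ℕ) (F : ℕ → ℕ → ℕ)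

/-- `i` is a "good" block index for level `p` -/
def GoodIdx (p i : ℕ) : Prop :=
  thrF a φ i p < l p * thrF a φ i k ∧ thrF a φ i p < nnF a i

/-- slot size of block `n` -/
def szB (n : ℕ) : ℕ := thrF a φ (iotF F n) (lamR k (rowOf n)) + 1
/-- the full block set -/
def VB (n : ℕ) : Set ℕ := pickF a (iotF F n) (thrF a φ (iotF F n) (pOf k n) + 1)
/-- number of slots -/
def qB (n : ℕ) : ℕ := (thrF a φ (iotF F n) (pOf k n) + 1) / szB a φ k F n
/-- slot `c` of block `n` -/
def slB (n c : ℕ) : Set ℕ := slotF a (iotF F n) c (szB a φ k F n)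

def strOf (x : ℕ → Bool) (len : ℕ) : List ℕ := List.ofFn (fun i : Fin len => cond (x i) 1 0)

/-- slot choice of `x` at block `n` -/
def cxB (x : ℕ → Bool) (n : ℕ) : ℕ :=
  (List.findIdx (fun σ => σ = strOf x σ.length) (Denumerable.ofNat (List (List ℕ)) (tOf n))) %
    qB a φ k F n

def BxB (x : ℕ → Bool) : Set ℕ := ⋃ n, slB a φ k F n (cxB a φ k F x n)

def AjB (j : ℕ) : Set ℕ := ⋃ n, if rowOf n ≤ j then VB a φ k F n else ∅

end BlocksSec

section BlockFacts

variable {a : ℕ → Set ℕ} {φ : ℕ → Set ℕ → ℝ} {k : ℕ} {l : ℕ → ℕ} {F : ℕ → ℕ → ℕ}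
variable (hfin : ∀ i, (a i).Finite)
  (hsub : ∀ i, IsSubmeasureOn (a i) (φ i))
  (huni : ∀ j, ∀ x y : Set ℕ, x ⊆ a j → y ⊆ a j → x.ncard = y.ncard → φ j x = φ j y)
  (hG : ∀ n, GoodIdx a φ k l (pOf k n) (iotF F n))

include hG in
lemma thrk_pos (n : ℕ) : 1 ≤ thrF a φ (iotF F n) k := by
  by_contra h
  have h0 : thrF a φ (iotF F n) k = 0 := by omega
  have h1 := (hG n).1
  rw [h0, Nat.mul_zero] at h1
  omega

include hfin hsub huni hG

lemma thrk_le_thrlam (n : ℕ) :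
    thrF a φ (iotF F n) k ≤ thrF a φ (iotF F n) (lamR k (rowOf n)) :=
  thrF_mono hfin hsub huni (iotF F n) (le_of_lt (k_lt_lam k (rowOf n)))

lemma sz_ge_two (n : ℕ) : 2 ≤ szB a φ k F n := by
  have h1 := thrk_pos hG n
  have h2 := thrk_le_thrlam hfin hsub huni hG n
  rw [szB]; omega

lemma sz_le_T (n : ℕ) : szB a φ k F n ≤ thrF a φ (iotF F n) (pOf k n) + 1 := by
  have h : thrF a φ (iotF F n) (lamR k (rowOf n)) ≤ thrF a φ (iotF F n) (pOf k n) :=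
    thrF_mono hfin hsub huni (iotF F n) (lam_le_p k n)
  rw [szB]; omega

lemma qB_pos (n : ℕ) : 1 ≤ qB a φ k F n := by
  rw [qB, Nat.one_le_div_iff (by have := sz_ge_two hfin hsub huni hG n; omega)]
  exact sz_le_T hfin hsub huni hG n

omit hfin hsub huni hG in
lemma qB_mul_le (n : ℕ) : qB a φ k F n * szB a φ k F n ≤ thrF a φ (iotF F n) (pOf k n) + 1 :=
  Nat.div_mul_le_self _ _

omit hfin hsub huni hG in
lemma slot_range {n c : ℕ} (hc : c < qB a φ k F n) :
    c * szB a φ k F n + szB a φ k F n ≤ thrF a φ (iotF F n) (pOf k n) + 1 := by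
  have h1 : (c+1) * szB a φ k F n ≤ qB a φ k F n * szB a φ k F n :=
    Nat.mul_le_mul_right _ (by omega)
  have h2 := qB_mul_le (a := a) (φ := φ) (k := k) (F := F) n
  have h3 : (c+1) * szB a φ k F n = c * szB a φ k F n + szB a φ k F n := by ring
  omega

include hG in
omit hfin hsub huni in
lemma Tp1_le_nn (n : ℕ) : thrF a φ (iotF F n) (pOf k n) + 1 ≤ nnF a (iotF F n) := (hG n).2

omit hsub huni in
include hfin in
lemma slot_ncard {n c : ℕ} (hc : c < qB a φ k F n) :
    (slB a φ k F n c).ncard = szB a φ k F n := by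
  apply slotF_ncard hfin
  exact le_trans (slot_range (a := a) (φ := φ) (k := k) (F := F) hc) (Tp1_le_nn hG n)

omit hfin hsub huni hG in
lemma slot_subset_V {n c : ℕ} (hc : c < qB a φ k F n) :
    slB a φ k F n c ⊆ VB a φ k F n :=
  slotF_subset_pick (slot_range (a := a) (φ := φ) (k := k) (F := F) hc)

omit hsub huni in
lemma V_ncard (n : ℕ) : (VB a φ k F n).ncard = thrF a φ (iotF F n) (pOf k n) + 1 :=
  pickF_ncard_of_le hfin (Tp1_le_nn hG n)

lemma qB_le_l (n : ℕ) : qB a φ k F n ≤ l (pOf k n) := by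
  have h1 := (hG n).1
  have h2 : thrF a φ (iotF F n) k + 1 ≤ szB a φ k F n := by
    have := thrk_le_thrlam hfin hsub huni hG n
    rw [szB]; omega
  have h3 : thrF a φ (iotF F n) (pOf k n) + 1 ≤ l (pOf k n) * szB a φ k F n := by
    calc thrF a φ (iotF F n) (pOf k n) + 1 ≤ l (pOf k n) * thrF a φ (iotF F n) k := h1
      _ ≤ l (pOf k n) * szB a φ k F n := Nat.mul_le_mul_left _ (by omega)
  have hs2 := sz_ge_two hfin hsub huni hG n
  rw [qB]
  calc (thrF a φ (iotF F n) (pOf k n) + 1) / szB a φ k F n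
      ≤ (l (pOf k n) * szB a φ k F n) / szB a φ k F n := Nat.div_le_div_right h3
    _ = l (pOf k n) := Nat.mul_div_cancel _ (by omega)

/-- φ-value of a slot is at most λ_row + k -/
lemma slot_phi_le {n c : ℕ} (hc : c < qB a φ k F n) :
    φ (iotF F n) (slB a φ k F n c) ≤ ((lamR k (rowOf n) : ℝ) + (k:ℝ)) := by
  have hsb : slB a φ k F n c ⊆ a (iotF F n) := slotF_subset hfin _ _ _
  rw [phi_eq_fc hfin hsub huni hsb, slot_ncard hfin hG hc, szB]
  have h1 : fcF a φ (iotF F n) (thrF a φ (iotF F n) (lamR k (rowOf n)) + 1) ≤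
      fcF a φ (iotF F n) (thrF a φ (iotF F n) (lamR k (rowOf n))) + fcF a φ (iotF F n) 1 :=
    fcF_subadd hfin hsub huni _ _ _
  have h2 := fcF_thr hfin hsub huni (iotF F n) (lamR k (rowOf n))
  have h3 : fcF a φ (iotF F n) 1 ≤ (k:ℝ) := by
    calc fcF a φ (iotF F n) 1 ≤ fcF a φ (iotF F n) (thrF a φ (iotF F n) k) :=
          fcF_mono hfin hsub huni _ (thrk_pos hG n)
      _ ≤ (k:ℝ) := fcF_thr hfin hsub huni _ _
  linarith

/-- φ-value of a slot is more than λ_row -/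
lemma slot_phi_gt {n c : ℕ} (hc : c < qB a φ k F n) :
    ((lamR k (rowOf n) : ℝ)) < φ (iotF F n) (slB a φ k F n c) := by
  have hsb : slB a φ k F n c ⊆ a (iotF F n) := slotF_subset hfin _ _ _
  rw [phi_eq_fc hfin hsub huni hsb, slot_ncard hfin hG hc, szB]
  apply thrF_lt hfin hsub huni (Nat.lt_succ_self _)
  calc thrF a φ (iotF F n) (lamR k (rowOf n)) + 1 ≤ thrF a φ (iotF F n) (pOf k n) + 1 :=
        by have := thrF_mono hfin hsub huni (iotF F n) (lam_le_p k n); omega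
    _ ≤ nnF a (iotF F n) := Tp1_le_nn hG n

/-- φ-value of the full block is more than p -/
lemma V_phi_gt (n : ℕ) : ((pOf k n : ℝ)) < φ (iotF F n) (VB a φ k F n) := by
  have hsb : VB a φ k F n ⊆ a (iotF F n) := pickF_subset hfin _ _
  rw [phi_eq_fc hfin hsub huni hsb, V_ncard hfin hG n]
  exact thrF_lt hfin hsub huni (Nat.lt_succ_self _) (Tp1_le_nn hG n)

end BlockFacts

section Traces

variable {a : ℕ → Set ℕ} {φ : ℕ → Set ℕ → ℝ} {k : ℕ} {l : ℕ → ℕ} {F : ℕ → ℕ → ℕ}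
variable (hdisj : ∀ i j, i ≠ j → Disjoint (a i) (a j))
  (hinj : Function.Injective (iotF F))

include hdisj hinj in
lemma trace_iUnion (w : ℕ → Set ℕ) (hw : ∀ m, w m ⊆ a (iotF F m)) (n : ℕ) :
    (⋃ m, w m) ∩ a (iotF F n) = w n := by
  apply Set.eq_of_subset_of_subset
  · rintro x ⟨hx1, hx2⟩
    rcases Set.mem_iUnion.mp hx1 with ⟨m, hm⟩
    by_cases hmn : m = n
    · subst hmn; exact hm
    · exfalso
      exact Set.disjoint_left.mp
        (hdisj (iotF F m) (iotF F n) (fun h => hmn (hinj h))) (hw m hm) hx2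
  · intro x hx
    exact ⟨Set.mem_iUnion.mpr ⟨n, hx⟩, hw n hx⟩

include hdisj in
lemma trace_iUnion_off (w : ℕ → Set ℕ) (hw : ∀ m, w m ⊆ a (iotF F m)) {i : ℕ}
    (hi : ∀ n, i ≠ iotF F n) : (⋃ m, w m) ∩ a i = ∅ := by
  apply Set.eq_empty_of_forall_notMem
  rintro x ⟨hx1, hx2⟩
  rcases Set.mem_iUnion.mp hx1 with ⟨m, hm⟩
  exact Set.disjoint_left.mp (hdisj (iotF F m) i (fun h => (hi m) h.symm)) (hw m hm) hx2

variable (hfin : ∀ i, (a i).Finite)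
  (hsub : ∀ i, IsSubmeasureOn (a i) (φ i))
  (huni : ∀ j, ∀ x y : Set ℕ, x ⊆ a j → y ⊆ a j → x.ncard = y.ncard → φ j x = φ j y)
  (hG : ∀ n, GoodIdx a φ k l (pOf k n) (iotF F n))

include hfin hsub huni hG in
lemma cx_lt_q (x : ℕ → Bool) (n : ℕ) : cxB a φ k F x n < qB a φ k F n :=
  Nat.mod_lt _ (lt_of_lt_of_le Nat.zero_lt_one (qB_pos hfin hsub huni hG n))

include hfin in
lemma Bx_sub (x : ℕ → Bool) (m : ℕ) : slB a φ k F m (cxB a φ k F x m) ⊆ a (iotF F m) :=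
  slotF_subset hfin _ _ _

include hfin in
lemma Aj_sub (j m : ℕ) : (if rowOf m ≤ j then VB a φ k F m else ∅) ⊆ a (iotF F m) := by
  split
  · exact pickF_subset hfin _ _
  · exact Set.empty_subset _

include hdisj hinj hfin in
lemma Bx_trace (x : ℕ → Bool) (n : ℕ) :
    BxB a φ k F x ∩ a (iotF F n) = slB a φ k F n (cxB a φ k F x n) :=
  trace_iUnion hdisj hinj _ (Bx_sub hfin x) n

include hdisj hfin in
lemma Bx_trace_off (x : ℕ → Bool) {i : ℕ} (hi : ∀ n, i ≠ iotF F n) :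
    BxB a φ k F x ∩ a i = ∅ :=
  trace_iUnion_off hdisj _ (Bx_sub hfin x) hi

include hdisj hinj hfin in
lemma Aj_trace (j n : ℕ) :
    AjB a φ k F j ∩ a (iotF F n) = (if rowOf n ≤ j then VB a φ k F n else ∅) :=
  trace_iUnion hdisj hinj _ (Aj_sub hfin j) n

include hdisj hfin in
lemma Aj_trace_off (j : ℕ) {i : ℕ} (hi : ∀ n, i ≠ iotF F n) :
    AjB a φ k F j ∩ a i = ∅ :=
  trace_iUnion_off hdisj _ (Aj_sub hfin j) hi

end Traces

section Strings

lemma strOf_length (x : ℕ → Bool) (n : ℕ) : (strOf x n).length = n := by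
  simp [strOf]

lemma strOf_eq_iff (x y : ℕ → Bool) (n : ℕ) :
    strOf x n = strOf y n ↔ ∀ m < n, x m = y m := by
  constructor
  · intro h m hm
    have h3 := congrArg (fun L => L[m]?) h
    simp only [strOf, List.getElem?_ofFn, dif_pos hm] at h3
    have h4 : (cond (x m) 1 0 : ℕ) = cond (y m) 1 0 := by
      simpa using h3
    cases hx : x m <;> cases hy : y m <;> simp_all
  · intro h
    rw [strOf, strOf]
    congr 1
    funext i
    rw [h i i.2]

/-- separating finitely many distinct reals by a finite restriction -/
lemma exists_sep (v : ℕ → (ℕ → Bool)) (L : ℕ)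
    (hv : ∀ i j, i < L → j < L → i ≠ j → v i ≠ v j) :
    ∃ n₀, ∀ i j, i < L → j < L → i ≠ j → strOf (v i) n₀ ≠ strOf (v j) n₀ := by
  have hD : ∀ p : ℕ × ℕ, ∃ m, (p.1 < L → p.2 < L → p.1 ≠ p.2 → v p.1 m ≠ v p.2 m) := by
    rintro ⟨i, j⟩
    by_cases hc : i < L ∧ j < L ∧ i ≠ j
    · obtain ⟨h1, h2, h3⟩ := hc
      have : v i ≠ v j := hv i j h1 h2 h3
      rcases Function.ne_iff.mp this with ⟨m, hm⟩
      exact ⟨m, fun _ _ _ => hm⟩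
    · exact ⟨0, fun h1 h2 h3 => absurd ⟨h1, h2, h3⟩ hc⟩
  choose D hD using hD
  refine ⟨((Finset.range L) ×ˢ (Finset.range L)).sup (fun p => D p + 1), ?_⟩
  intro i j hi hj hij heq
  have hm := hD (i, j) hi hj hij
  have hlt : D (i, j) < ((Finset.range L) ×ˢ (Finset.range L)).sup (fun p => D p + 1) := by
    have : D (i,j) + 1 ≤ _ := Finset.le_sup (f := fun p => D p + 1)
      (Finset.mem_product.mpr ⟨Finset.mem_range.mpr hi, Finset.mem_range.mpr hj⟩)
    omega
  exact hm ((strOf_eq_iff _ _ _).mp heq _ hlt)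

end Strings
set_option linter.unusedSectionVars false

section EasySec

variable {I : Set (Set ℕ)} {a : ℕ → Set ℕ} {φ : ℕ → Set ℕ → ℝ}

lemma ideal_facts
    (hsubm : ∀ i, IsSubmeasureOn (a i) (φ i))
    (hI : ∀ x : Set ℕ, x ∈ I ↔ ∃ K : ℝ, ∀ i, φ i (x ∩ a i) ≤ K) :
    (∅ : Set ℕ) ∈ I ∧ (∀ x y : Set ℕ, x ⊆ y → y ∈ I → x ∈ I) ∧
      (∀ x y : Set ℕ, x ∈ I → y ∈ I → x ∪ y ∈ I) := by
  refine ⟨?_, ?_, ?_⟩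
  · exact (hI ∅).mpr ⟨0, fun i => by rw [Set.empty_inter, (hsubm i).1]⟩
  · intro x y hxy hy
    obtain ⟨K, hK⟩ := (hI y).mp hy
    refine (hI x).mpr ⟨K, fun i => ?_⟩
    exact le_trans ((hsubm i).2.2.1 _ _ (Set.inter_subset_inter_left _ hxy)
      Set.inter_subset_right) (hK i)
  · intro x y hx hy
    obtain ⟨K, hK⟩ := (hI x).mp hx
    obtain ⟨K', hK'⟩ := (hI y).mp hy
    refine (hI (x ∪ y)).mpr ⟨K + K', fun i => ?_⟩
    have hsplit : (x ∪ y) ∩ a i = (x ∩ a i) ∪ (y ∩ a i) := by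
      ext z; simp only [Set.mem_inter_iff, Set.mem_union]; tauto
    rw [hsplit]
    calc φ i ((x ∩ a i) ∪ (y ∩ a i)) ≤ φ i (x ∩ a i) + φ i (y ∩ a i) :=
          (hsubm i).2.2.2 _ _ Set.inter_subset_right Set.inter_subset_right
      _ ≤ K + K' := add_le_add (hK i) (hK' i)

lemma biUnion_mem_I
    (hEmpty : (∅ : Set ℕ) ∈ I)
    (hUnion : ∀ x y : Set ℕ, x ∈ I → y ∈ I → x ∪ y ∈ I)
    (s : Finset ℕ) (w : ℕ → Set ℕ) (hw : ∀ j ∈ s, w j ∈ I) :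
    (⋃ j ∈ s, w j) ∈ I := by
  induction s using Finset.induction with
  | empty => simpa using hEmpty
  | @insert b s hni ih =>
    rw [Finset.set_biUnion_insert]
    exact hUnion _ _ (hw _ (Finset.mem_insert_self _ _))
      (ih (fun j hj => hw j (Finset.mem_insert_of_mem hj)))

theorem easy_part
    (hsubm : ∀ i, IsSubmeasureOn (a i) (φ i))
    (hI : ∀ x : Set ℕ, x ∈ I ↔ ∃ K : ℝ, ∀ i, φ i (x ∩ a i) ≤ K) :
    ∀ lam : Cardinal, HasOmegaGap I lam → aleph 1 ≤ lam := by
  obtain ⟨hEmpty, hDown, hUnion⟩ := ideal_facts hsubm hI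
  intro lam hgap
  obtain ⟨A, B, ⟨horth, hnosep⟩, hA, hB⟩ := hgap
  by_contra hlt
  have hBc : B.Countable := by
    rw [Cardinal.countable_iff_lt_aleph_one, hB]
    exact lt_of_not_ge hlt
  have hAc : A.Countable := by
    rw [Cardinal.countable_iff_lt_aleph_one, hA]
    exact Cardinal.aleph0_lt_aleph_one
  have hAne : A.Nonempty := by
    rw [← Set.nonempty_coe_sort, ← Cardinal.mk_ne_zero_iff, hA]
    exact Cardinal.aleph0_ne_zero
  rcases Set.eq_empty_or_nonempty B with hBe | hBne
  · apply hnosep ∅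
    constructor
    · intro s _; rw [Set.inter_empty]; exact hEmpty
    · intro t ht; rw [hBe] at ht; exact absurd ht (Set.notMem_empty t)
  obtain ⟨u, hu⟩ := hAc.exists_eq_range hAne
  obtain ⟨v, hv⟩ := hBc.exists_eq_range hBne
  set S : ℕ → Set ℕ := fun m => ⋃ j ∈ Finset.range (m+1), u j with hS
  set T : ℕ → Set ℕ := fun m => ⋃ j ∈ Finset.range (m+1), v j with hT
  have hSmono : ∀ {m m' : ℕ}, m ≤ m' → S m ⊆ S m' := by
    intro m m' h x hx
    rcases Set.mem_iUnion₂.mp hx with ⟨j, hj, hxj⟩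
    exact Set.mem_iUnion₂.mpr ⟨j, by simp only [Finset.mem_range] at *; omega, hxj⟩
  have hTmono : ∀ {m m' : ℕ}, m ≤ m' → T m ⊆ T m' := by
    intro m m' h x hx
    rcases Set.mem_iUnion₂.mp hx with ⟨j, hj, hxj⟩
    exact Set.mem_iUnion₂.mpr ⟨j, by simp only [Finset.mem_range] at *; omega, hxj⟩
  have huS : ∀ m, u m ⊆ S m := fun m x hx =>
    Set.mem_iUnion₂.mpr ⟨m, Finset.mem_range.mpr (Nat.lt_succ_self m), hx⟩
  have hvT : ∀ m, v m ⊆ T m := fun m x hx =>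
    Set.mem_iUnion₂.mpr ⟨m, Finset.mem_range.mpr (Nat.lt_succ_self m), hx⟩
  have hST : ∀ m, S m ∩ T m ∈ I := by
    intro m
    have hsub2 : S m ∩ T m ⊆ ⋃ j ∈ Finset.range (m+1), ⋃ j' ∈ Finset.range (m+1), (u j ∩ v j') := by
      rintro x ⟨hx1, hx2⟩
      rcases Set.mem_iUnion₂.mp hx1 with ⟨j, hj, hxj⟩
      rcases Set.mem_iUnion₂.mp hx2 with ⟨j', hj', hxj'⟩
      exact Set.mem_iUnion₂.mpr ⟨j, hj, Set.mem_iUnion₂.mpr ⟨j', hj', ⟨hxj, hxj'⟩⟩⟩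
    refine hDown _ _ hsub2 ?_
    apply biUnion_mem_I hEmpty hUnion
    intro j _
    apply biUnion_mem_I hEmpty hUnion
    intro j' _
    apply horth
    · rw [hu]; exact Set.mem_range_self j
    · rw [hv]; exact Set.mem_range_self j'
  set C : Set ℕ := ⋃ m, (T m \ S m) with hC
  apply hnosep C
  constructor
  · intro s hs
    rw [hu] at hs
    obtain ⟨m, rfl⟩ := hs
    refine hDown _ _ ?_ (hST m)
    rintro x ⟨hxs, hxC⟩
    rcases Set.mem_iUnion.mp hxC with ⟨n, hxn, hxn2⟩
    rcases Nat.lt_or_ge n m with h | h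
    · exact ⟨huS m hxs, hTmono (by omega) hxn⟩
    · exact absurd (hSmono h (huS m hxs)) hxn2
  · intro t ht
    rw [hv] at ht
    obtain ⟨m, rfl⟩ := ht
    refine hDown _ _ ?_ (hST m)
    intro x hx
    have hxT : x ∈ T m := hvT m hx.1
    by_cases hxS : x ∈ S m
    · exact ⟨hxS, hxT⟩
    · exact absurd (Set.mem_iUnion.mpr ⟨m, (⟨hxT, hxS⟩ : _ ∈ T m \ S m)⟩) hx.2

end EasySec
set_option linter.unusedSectionVars false
set_option linter.unusedVariables false
set_option maxHeartbeats 1000000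

section HardSec

variable {a : ℕ → Set ℕ} {φ : ℕ → Set ℕ → ℝ}

lemma ncard_sUnion_le (B : Finset (Set ℕ)) (h : ∀ b ∈ B, (b : Set ℕ).Finite) :
    (⋃₀ (↑B : Set (Set ℕ))).ncard ≤ ∑ b ∈ B, b.ncard := by
  induction B using Finset.induction with
  | empty => simp
  | @insert b s hni ih =>
    rw [Finset.coe_insert, Set.sUnion_insert, Finset.sum_insert hni]
    calc (b ∪ ⋃₀ ↑s).ncard ≤ b.ncard + (⋃₀ (↑s : Set (Set ℕ))).ncard := Set.ncard_union_le _ _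
      _ ≤ b.ncard + ∑ b ∈ s, b.ncard := by
          have := ih (fun b hb => h b (Finset.mem_insert_of_mem hb))
          omega

lemma good_of_witness
    (hfin : ∀ i, (a i).Finite)
    (hsub : ∀ i, IsSubmeasureOn (a i) (φ i))
    (huni : ∀ j, ∀ x y : Set ℕ, x ⊆ a j → y ⊆ a j → x.ncard = y.ncard → φ j x = φ j y)
    {i k lp m : ℕ} {B : Finset (Set ℕ)}
    (hBsub : ∀ b ∈ B, b ⊆ a i) (hBcard : B.card ≤ lp)
    (hBsm : ∀ b ∈ B, φ i b ≤ (k:ℝ)) (hBbig : (m:ℝ) < φ i (⋃₀ (↑B : Set (Set ℕ)))) :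
    thrF a φ i m < lp * thrF a φ i k ∧ thrF a φ i m < nnF a i := by
  have hUsub : ⋃₀ (↑B : Set (Set ℕ)) ⊆ a i := by
    rintro x ⟨b, hb, hxb⟩
    exact hBsub b hb hxb
  have hcard_b : ∀ b ∈ B, (b : Set ℕ).ncard ≤ thrF a φ i k := by
    intro b hb
    exact (phi_le_iff hfin hsub huni (hBsub b hb)).mp (hBsm b hb)
  have hU : (⋃₀ (↑B : Set (Set ℕ))).ncard ≤ lp * thrF a φ i k := by
    calc (⋃₀ (↑B : Set (Set ℕ))).ncard ≤ ∑ b ∈ B, b.ncard :=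
          ncard_sUnion_le B (fun b hb => (hfin i).subset (hBsub b hb))
      _ ≤ ∑ _b ∈ B, thrF a φ i k := Finset.sum_le_sum hcard_b
      _ = B.card * thrF a φ i k := by rw [Finset.sum_const, smul_eq_mul]
      _ ≤ lp * thrF a φ i k := Nat.mul_le_mul_right _ hBcard
  have hUm : thrF a φ i m < (⋃₀ (↑B : Set (Set ℕ))).ncard := by
    by_contra hcon
    push_neg at hcon
    have := (phi_le_iff hfin hsub huni hUsub).mpr hcon
    linarith
  have hUnn : (⋃₀ (↑B : Set (Set ℕ))).ncard ≤ nnF a i := Set.ncard_le_ncard hUsub (hfin i)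
  exact ⟨lt_of_lt_of_le hUm hU, lt_of_lt_of_le hUm hUnn⟩

/-- slot choice value at a tailor-made block -/
lemma cx_block {k : ℕ} {F : ℕ → ℕ → ℕ}
    (v : ℕ → (ℕ → Bool)) (L n₀ : ℕ)
    (hsep : ∀ i j, i < L → j < L → i ≠ j → strOf (v i) n₀ ≠ strOf (v j) n₀)
    (n : ℕ) (htn : tOf n = Encodable.encode (List.ofFn (fun i : Fin L => strOf (v i.1) n₀)))
    (i : ℕ) (hi : i < L) :
    cxB a φ k F (v i) n = i % qB a φ k F n := by
  rw [cxB, htn, Denumerable.ofNat_encode]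
  congr 1
  apply (List.findIdx_eq (by rw [List.length_ofFn]; exact hi)).mpr
  constructor
  · rw [List.getElem_ofFn]
    simp [strOf_length]
  · intro j hj
    rw [List.getElem_ofFn]
    have hji : j < L := lt_trans hj hi
    have := hsep j i hji hi (Nat.ne_of_lt hj)
    simp only [strOf_length]
    simpa using this

theorem hard_part (a : ℕ → Set ℕ) (φ : ℕ → Set ℕ → ℝ) (I : Set (Set ℕ))
    (hfrag : IsFragmentation I a φ)
    (hnotgrad : ¬ GraduallyFragmented a φ)
    (huni : ∀ j, ∀ x y : Set ℕ, x ⊆ a j → y ⊆ a j → x.ncard = y.ncard → φ j x = φ j y) :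
    HasOmegaGap I (aleph 1) := by
  classical
  obtain ⟨⟨hne, hfin, hdisjp, -⟩, hsub, hI⟩ := hfrag
  rw [GraduallyFragmented] at hnotgrad
  push_neg at hnotgrad
  obtain ⟨k, hk⟩ := hnotgrad
  choose l hl using hk
  have hGoodFreq : ∀ p b : ℕ, ∃ i, b ≤ i ∧ GoodIdx a φ k l p i := by
    intro p b
    have hfreq := Filter.not_eventually.mp (hl p)
    obtain ⟨i, hib, hwit⟩ := Filter.frequently_atTop.mp hfreq b
    push_neg at hwit
    obtain ⟨B, hBsub, hBcard, hBsm, hBbig⟩ := hwit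
    exact ⟨i, hib, good_of_witness hfin hsub huni hBsub hBcard hBsm hBbig⟩
  choose FF hFFle hFFgood using hGoodFreq
  set F : ℕ → ℕ → ℕ := fun n b => FF (pOf k n) b with hFdef
  have hF1 : ∀ n b, b ≤ F n b := fun n b => hFFle _ _
  have hG : ∀ n, GoodIdx a φ k l (pOf k n) (iotF F n) := by
    intro n
    cases n with
    | zero => exact hFFgood (pOf k 0) 0
    | succ m => exact hFFgood (pOf k (m+1)) (iotF F m + 1)
  have hmono : StrictMono (iotF F) := iotF_strictMono hF1
  have hinjio : Function.Injective (iotF F) := hmono.injective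
  -- the ℵ₁-sized index set
  have hcont : aleph 1 ≤ #(ℕ → Bool) := by
    have h1 : #(ℕ → Bool) = (2 : Cardinal) ^ (ℵ₀ : Cardinal) := by
      rw [Cardinal.mk_arrow, Cardinal.mk_bool, Cardinal.mk_nat, Cardinal.lift_id,
        Cardinal.lift_id]
    rw [h1, Cardinal.two_power_aleph0]
    exact Cardinal.aleph_one_le_continuum
  obtain ⟨X, hX⟩ := Cardinal.le_mk_iff_exists_set.mp hcont
  set Af : Set (Set ℕ) := Set.range (AjB a φ k F) with hAfdef
  set Bf : Set (Set ℕ) := (BxB a φ k F) '' X with hBfdef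
  -- generic set identity
  have hXY : ∀ (P Q R : Set ℕ), (P ∩ Q) ∩ R = (P ∩ R) ∩ (Q ∩ R) := by
    intro P Q R; ext z
    simp only [Set.mem_inter_iff]; tauto
  have hDiffTr : ∀ (P C R : Set ℕ), (P \ C) ∩ R = (P ∩ R) \ C := by
    intro P C R; ext z
    simp only [Set.mem_inter_iff, Set.mem_diff]; tauto
  -- membership of VB in AjB
  have hVmem : ∀ n j, rowOf n ≤ j → VB a φ k F n ⊆ AjB a φ k F j := by
    intro n j hrow x hx
    exact Set.mem_iUnion.mpr ⟨n, by rw [if_pos hrow]; exact hx⟩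
  -- ORTHOGONALITY
  have horth : IOrthogonal I Af Bf := by
    rintro s hs t ht
    rw [hAfdef] at hs
    obtain ⟨j, rfl⟩ := hs
    rw [hBfdef] at ht
    obtain ⟨x, hxX, rfl⟩ := ht
    apply (hI _).mpr
    refine ⟨(lamR k j : ℝ) + (k : ℝ), fun i => ?_⟩
    by_cases hio : ∃ n, i = iotF F n
    · obtain ⟨n, rfl⟩ := hio
      rw [hXY, Aj_trace hdisjp hinjio hfin, Bx_trace hdisjp hinjio hfin]
      by_cases hrow : rowOf n ≤ j
      · rw [if_pos hrow,
          Set.inter_eq_right.mpr (slot_subset_V (cx_lt_q hfin hsub huni hG x n))]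
        calc φ (iotF F n) (slB a φ k F n (cxB a φ k F x n))
            ≤ (lamR k (rowOf n) : ℝ) + (k:ℝ) :=
              slot_phi_le hfin hsub huni hG (cx_lt_q hfin hsub huni hG x n)
          _ ≤ (lamR k j : ℝ) + (k:ℝ) := by
              have := lam_mono k hrow
              have : (lamR k (rowOf n) : ℝ) ≤ (lamR k j : ℝ) := by exact_mod_cast this
              linarith
      · rw [if_neg hrow, Set.empty_inter, (hsub (iotF F n)).1]
        positivity
    · have hsubs : (AjB a φ k F j ∩ BxB a φ k F x) ∩ a i ⊆ AjB a φ k F j ∩ a i := by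
        intro z hz; exact ⟨hz.1.1, hz.2⟩
      rw [Set.subset_empty_iff.mp
        (le_trans hsubs (Aj_trace_off hdisjp hfin j (fun n => fun h => hio ⟨n, h⟩) ▸
          Set.Subset.refl _)), (hsub i).1]
      positivity
  -- A-side positivity
  have hApos : ∀ j, AjB a φ k F j ∉ I := by
    intro j hmem
    obtain ⟨K, hK⟩ := (hI _).mp hmem
    set d : ℕ := ⌈K⌉₊ with hd
    set n : ℕ := Nat.pair j (Nat.pair d 0) with hn
    have hrow : rowOf n = j := by rw [hn]; simp
    have htr : AjB a φ k F j ∩ a (iotF F n) = VB a φ k F n := by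
      rw [Aj_trace hdisjp hinjio hfin, hrow, if_pos (le_refl j)]
    have h1 := hK (iotF F n)
    rw [htr] at h1
    have h2 := V_phi_gt hfin hsub huni hG n
    have h3 : (d : ℝ) ≤ (pOf k n : ℝ) := by
      have : d ≤ pOf k n := by
        rw [pOf, hn]; simp
      exact_mod_cast this
    have h4 : K ≤ (d:ℝ) := Nat.le_ceil K
    linarith
  -- B-side positivity
  have hBpos : ∀ x, BxB a φ k F x ∉ I := by
    intro x hmem
    obtain ⟨K, hK⟩ := (hI _).mp hmem
    set j : ℕ := ⌈K⌉₊ with hj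
    set n : ℕ := Nat.pair j (Nat.pair 0 0) with hn
    have hrow : rowOf n = j := by rw [hn]; simp
    have htr := Bx_trace (φ := φ) (k := k) hdisjp hinjio hfin x n
    have h1 := hK (iotF F n)
    rw [htr] at h1
    have h2 := slot_phi_gt hfin hsub huni hG (cx_lt_q hfin hsub huni hG x n)
    have h3 : (j : ℝ) < (lamR k (rowOf n) : ℝ) := by
      have : j < lamR k (rowOf n) := by
        rw [hrow]
        have : (j+1)*1 ≤ (j+1)*(k+1) := Nat.mul_le_mul_left _ (by omega)
        rw [lamR]; omega
      exact_mod_cast this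
    have h4 : K ≤ (j:ℝ) := Nat.le_ceil K
    linarith
  -- injectivity of the A-side
  have hAne2 : ∀ j j', j < j' → AjB a φ k F j ≠ AjB a φ k F j' := by
    intro j j' hjj' heq
    set n : ℕ := Nat.pair j' (Nat.pair 0 0) with hn
    have hrow : rowOf n = j' := by rw [hn]; simp
    have hVne : (VB a φ k F n).Nonempty := by
      apply Set.nonempty_of_ncard_ne_zero
      rw [V_ncard hfin hG n]; omega
    obtain ⟨z, hz⟩ := hVne
    have hz1 : z ∈ AjB a φ k F j' := hVmem n j' (le_of_eq hrow) hz
    rw [← heq] at hz1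
    have hz2 : z ∈ a (iotF F n) := pickF_subset hfin _ _ hz
    have : z ∈ AjB a φ k F j ∩ a (iotF F n) := ⟨hz1, hz2⟩
    rw [Aj_trace hdisjp hinjio hfin, hrow, if_neg (by omega)] at this
    exact this
  have hAinj : Function.Injective (AjB a φ k F) := by
    intro j j' heq
    by_contra hne'
    rcases Nat.lt_or_ge j j' with h | h
    · exact hAne2 j j' h heq
    · exact hAne2 j' j (by omega) heq.symm
  -- injectivity of the B-side
  have hBinj : Function.Injective (BxB a φ k F) := by
    intro x y heq
    by_contra hxy
    obtain ⟨m, hm⟩ := Function.ne_iff.mp hxy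
    set n₀ : ℕ := m + 1 with hn₀
    have hstr : strOf x n₀ ≠ strOf y n₀ := by
      intro hcon
      exact hm (((strOf_eq_iff x y n₀).mp hcon) m (by omega))
    -- tailor-made block with q ≥ 2
    set v : ℕ → (ℕ → Bool) := fun i => if i = 0 then x else y with hv
    set tc : ℕ := Encodable.encode (List.ofFn (fun i : Fin 2 => strOf (v i.1) n₀)) with htc
    set d : ℕ := 4 * lamR k 0 with hd
    set n : ℕ := Nat.pair 0 (Nat.pair d tc) with hn
    have hrow : rowOf n = 0 := by rw [hn]; simp
    have htn : tOf n = tc := by rw [hn]; simp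
    have hdn : dOf n = d := by rw [hn]; simp
    have hpn : pOf k n = lamR k 0 + d := by rw [pOf, hrow, hdn]
    have hv0 : v 0 = x := by simp [hv]
    have hv1 : v 1 = y := by simp [hv]
    have hsep : ∀ i j, i < 2 → j < 2 → i ≠ j → strOf (v i) n₀ ≠ strOf (v j) n₀ := by
      intro i j hi hj hij
      have hcase : (i = 0 ∧ j = 1) ∨ (i = 1 ∧ j = 0) := by omega
      rcases hcase with ⟨rfl, rfl⟩ | ⟨rfl, rfl⟩
      · rw [hv0, hv1]; exact hstr
      · rw [hv0, hv1]; exact fun hcon => hstr hcon.symm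
    -- q ≥ 2
    have hq2 : 2 ≤ qB a φ k F n := by
      have hTnn := (hG n).2
      have hlamp : lamR k (rowOf n) = lamR k 0 := by rw [hrow]
      have h2step1 : 2 * thrF a φ (iotF F n) (lamR k 0) ≤ thrF a φ (iotF F n) (2 * lamR k 0) := by
        apply thrF_dbl hfin hsub huni (le_refl _)
        calc thrF a φ (iotF F n) (2 * lamR k 0) ≤ thrF a φ (iotF F n) (pOf k n) :=
              thrF_mono hfin hsub huni _ (by rw [hpn, hd]; omega)
          _ < nnF a (iotF F n) := hTnn
      have h2step2 : 2 * thrF a φ (iotF F n) (2 * lamR k 0) ≤ thrF a φ (iotF F n) (pOf k n) := by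
        apply thrF_dbl hfin hsub huni (by rw [hpn, hd]; omega) hTnn
      have hs2 := sz_ge_two hfin hsub huni hG n
      have hsz : szB a φ k F n = thrF a φ (iotF F n) (lamR k 0) + 1 := by
        rw [szB, hlamp]
      rw [qB, Nat.le_div_iff_mul_le (k := szB a φ k F n) (by omega)]
      omega
    -- compute the two slot choices
    have hcx : cxB a φ k F x n = 0 := by
      have h0 := cx_block (a := a) (φ := φ) (k := k) (F := F) v 2 n₀ hsep n (by rw [htn, htc]) 0 (by omega)
      rw [hv0] at h0
      rw [h0, Nat.zero_mod]
    have hcy : cxB a φ k F y n = 1 := by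
      have h1 := cx_block (a := a) (φ := φ) (k := k) (F := F) v 2 n₀ hsep n (by rw [htn, htc]) 1 (by omega)
      rw [hv1] at h1
      rw [h1, Nat.mod_eq_of_lt (by omega)]
    have htrx := Bx_trace (φ := φ) (k := k) hdisjp hinjio hfin x n
    have htry := Bx_trace (φ := φ) (k := k) hdisjp hinjio hfin y n
    rw [heq] at htrx
    rw [htry, hcy] at htrx
    rw [hcx] at htrx
    -- slB n 1 = slB n 0 : contradiction with disjoint nonempty
    have hnel : (slB a φ k F n 0).Nonempty := by
      apply Set.nonempty_of_ncard_ne_zero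
      rw [slot_ncard hfin hG (by omega)]
      have := sz_ge_two hfin hsub huni hG n
      omega
    obtain ⟨z, hz⟩ := hnel
    have hz1 : z ∈ slB a φ k F n 1 := by rw [htrx]; exact hz
    exact Set.disjoint_left.mp (slotF_disjoint hfin (by omega : (0:ℕ) ≠ 1)) hz hz1
  -- THE GAP
  refine ⟨Af, Bf, ⟨⟨horth, ?_⟩, ?_, ?_⟩⟩
  · -- no separator
    intro C hC
    obtain ⟨hC1, hC2⟩ := hC
    -- pigeonhole on the covering bound
    set SK : ℕ → Set (ℕ → Bool) := fun K =>
      {x | x ∈ X ∧ ∀ i, φ i ((BxB a φ k F x \ C) ∩ a i) ≤ (K : ℝ)} with hSK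
    have hcover : X ⊆ ⋃ K, SK K := by
      intro x hx
      have hxB : BxB a φ k F x ∈ Bf := ⟨x, hx, rfl⟩
      obtain ⟨K, hK⟩ := (hI _).mp (hC2 _ hxB)
      refine Set.mem_iUnion.mpr ⟨⌈K⌉₊, hx, fun i => le_trans (hK i) (Nat.le_ceil K)⟩
    have hKex : ∃ K, ¬ (SK K).Countable := by
      by_contra hcon
      push_neg at hcon
      have : X.Countable := Set.Countable.mono hcover (Set.countable_iUnion hcon)
      have := (Cardinal.countable_iff_lt_aleph_one X).mp this
      rw [hX] at this
      exact lt_irrefl _ this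
    obtain ⟨K, hSKunc⟩ := hKex
    set J : ℕ := 2 * K with hJ
    -- bound for A_J ∩ C
    have hAJmem : AjB a φ k F J ∈ Af := Set.mem_range_self J
    obtain ⟨κr, hκr⟩ := (hI _).mp (hC1 _ hAJmem)
    set κ : ℕ := ⌈κr⌉₊ with hκdef
    have hκ : ∀ i, φ i ((AjB a φ k F J ∩ C) ∩ a i) ≤ (κ : ℝ) :=
      fun i => le_trans (hκr i) (Nat.le_ceil κr)
    set d : ℕ := 4 * κ + 3 * lamR k J with hd
    -- infinitely many x's with bound K
    have hSinf : (SK K).Infinite := by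
      by_contra hfin'
      exact hSKunc ((Set.not_infinite.mp hfin').countable)
    set e : ℕ ↪ ↥(SK K) := hSinf.natEmbedding with he
    set v : ℕ → (ℕ → Bool) := fun i => (e i : ℕ → Bool) with hv
    have hvinj : ∀ i j, i ≠ j → v i ≠ v j := by
      intro i j hij hcon
      exact hij (e.injective (Subtype.ext hcon))
    -- the block
    set p' : ℕ := lamR k J + d with hp'
    set L : ℕ := l p' with hL
    obtain ⟨n₀, hsep⟩ := exists_sep v L (fun i j _ _ hij => hvinj i j hij)
    set tc : ℕ := Encodable.encode (List.ofFn (fun i : Fin L => strOf (v i.1) n₀)) with htc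
    set n : ℕ := Nat.pair J (Nat.pair d tc) with hn
    have hrow : rowOf n = J := by rw [hn]; simp
    have htn : tOf n = tc := by rw [hn]; simp
    have hdn : dOf n = d := by rw [hn]; simp
    have hpn : pOf k n = p' := by rw [pOf, hrow, hdn, hp']
    -- abbreviations
    set i₀ : ℕ := iotF F n with hi₀
    set T : ℕ := thrF a φ i₀ (pOf k n) with hT
    set s : ℕ := szB a φ k F n with hs
    set q : ℕ := qB a φ k F n with hq
    set tk : ℕ := thrF a φ i₀ K with htk
    set tkap : ℕ := thrF a φ i₀ κ with htkap
    set tlam : ℕ := thrF a φ i₀ (lamR k J) with htlam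
    have hTnn : T < nnF a i₀ := (hG n).2
    have hsdef : s = tlam + 1 := by rw [hs, szB, hrow]
    have hs2 : 2 ≤ s := sz_ge_two hfin hsub huni hG n
    have hq1 : 1 ≤ q := qB_pos hfin hsub huni hG n
    have hqL : q ≤ L := by
      have := qB_le_l hfin hsub huni hG n
      rw [hpn] at this
      exact this
    -- (a) 2 * tk ≤ tlam
    have hKlam : 2 * K ≤ lamR k J := by
      have : (J+1)*1 ≤ (J+1)*(k+1) := Nat.mul_le_mul_left _ (by omega)
      rw [lamR]; omega
    have htlamnn : tlam < nnF a i₀ := by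
      have : tlam ≤ T := thrF_mono hfin hsub huni i₀ (by rw [hpn, hp']; omega)
      omega
    have hak : 2 * tk ≤ tlam := thrF_dbl hfin hsub huni hKlam htlamnn
    -- (d) T ≥ 2 * tkap + s
    have hdd : 2 * tkap + s ≤ T := by
      have ht1a : 2 * thrF a φ i₀ (κ + lamR k J) ≤ thrF a φ i₀ (2 * (κ + lamR k J)) := by
        apply thrF_dbl hfin hsub huni (le_refl _)
        have : thrF a φ i₀ (2 * (κ + lamR k J)) ≤ T :=
          thrF_mono hfin hsub huni i₀ (by rw [hpn, hp', hd]; omega)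
        omega
      have ht1b : 2 * thrF a φ i₀ (2 * (κ + lamR k J)) ≤ T := by
        apply thrF_dbl hfin hsub huni (by rw [hpn, hp', hd]; omega) hTnn
      have htkap1 : tkap ≤ thrF a φ i₀ (κ + lamR k J) :=
        thrF_mono hfin hsub huni i₀ (by omega)
      have htlam1 : tlam ≤ thrF a φ i₀ (κ + lamR k J) :=
        thrF_mono hfin hsub huni i₀ (by omega)
      omega
    -- (c) T + 1 < q * s + s
    have hqeq : q = (T + 1) / s := by
      rw [hq, hT, hs, hi₀]
      rfl
    have hcc : T + 1 < q * s + s := by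
      rw [hqeq]
      exact Nat.lt_div_mul_add (by omega)
    -- forced mass in each slot
    have hcard_slot : ∀ c, c < q → s - tk ≤ ((slB a φ k F n c) ∩ C).ncard := by
      intro c hc
      have hcq : c < qB a φ k F n := by rw [← hq]; exact hc
      have hvc : v c ∈ SK K := by rw [hv]; exact (e c).2
      have hbound := hvc.2 i₀
      have hcxc : cxB a φ k F (v c) n = c := by
        have hcb := cx_block (a := a) (φ := φ) (k := k) (F := F) v L n₀ hsep n
          (by rw [htn, htc]) c (lt_of_lt_of_le hc hqL)
        rw [hcb, ← hq, Nat.mod_eq_of_lt hc]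
      have htr : (BxB a φ k F (v c) \ C) ∩ a i₀ = slB a φ k F n c \ C := by
        rw [hDiffTr, hi₀, Bx_trace (φ := φ) (k := k) hdisjp hinjio hfin, hcxc]
      rw [htr] at hbound
      have hsl_sub : slB a φ k F n c ⊆ a i₀ := by
        rw [hi₀]; exact slotF_subset hfin _ _ _
      have hdiff_sub : slB a φ k F n c \ C ⊆ a i₀ := fun z hz => hsl_sub hz.1
      rw [hi₀] at hbound hdiff_sub
      have h1 : (slB a φ k F n c \ C).ncard ≤ tk := by
        have h1' := (phi_le_iff hfin hsub huni hdiff_sub).mp hbound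
        rw [htk, hi₀]
        exact h1'
      have h2 : (slB a φ k F n c).ncard = s := by
        rw [hs]; exact slot_ncard hfin hG hcq
      have h3 : (slB a φ k F n c).ncard ≤
          ((slB a φ k F n c) ∩ C).ncard + ((slB a φ k F n c) \ C).ncard := by
        conv_lhs => rw [← Set.inter_union_diff (slB a φ k F n c) C]
        exact Set.ncard_union_le _ _
      omega
    -- total mass
    have hsl_sub_all : ∀ c, slB a φ k F n c ⊆ a i₀ := by
      intro c; rw [hi₀]; exact slotF_subset hfin _ _ _
    have hWcard : q * (s - tk) ≤ (⋃ c ∈ Finset.range q, ((slB a φ k F n c) ∩ C)).ncard := by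
      rw [ncard_disj_union_eq (fun c => (slB a φ k F n c) ∩ C)
        (fun c => ((hfin i₀).subset (hsl_sub_all c)).subset Set.inter_subset_left)
        (fun c c' hcc' => Disjoint.mono Set.inter_subset_left Set.inter_subset_left
          (slotF_disjoint hfin hcc')) q]
      calc q * (s - tk) = ∑ _c ∈ Finset.range q, (s - tk) := by
            rw [Finset.sum_const, Finset.card_range, smul_eq_mul]
        _ ≤ ∑ c ∈ Finset.range q, ((slB a φ k F n c) ∩ C).ncard :=
            Finset.sum_le_sum (fun c hc => hcard_slot c (Finset.mem_range.mp hc))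
    have hWsub : (⋃ c ∈ Finset.range q, ((slB a φ k F n c) ∩ C)) ⊆
        (AjB a φ k F J ∩ C) ∩ a i₀ := by
      intro z hz
      rcases Set.mem_iUnion₂.mp hz with ⟨c, hc, hzc⟩
      have hcq : c < qB a φ k F n := by rw [← hq]; exact Finset.mem_range.mp hc
      have hzV : z ∈ VB a φ k F n := slot_subset_V hcq hzc.1
      refine ⟨⟨hVmem n J (le_of_eq hrow) hzV, hzc.2⟩, ?_⟩
      rw [hi₀]
      exact pickF_subset hfin _ _ hzV
    have hle : (⋃ c ∈ Finset.range q, ((slB a φ k F n c) ∩ C)).ncard ≤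
        ((AjB a φ k F J ∩ C) ∩ a i₀).ncard :=
      Set.ncard_le_ncard hWsub ((hfin i₀).subset (fun z hz => hz.2))
    -- the crunch
    have hqg : q * s + q ≤ 2 * (q * (s - tk)) := by
      have h2g : s + 1 ≤ 2 * (s - tk) := by omega
      calc q * s + q = q * (s+1) := by ring
        _ ≤ q * (2 * (s - tk)) := Nat.mul_le_mul_left _ h2g
        _ = 2 * (q * (s - tk)) := by ring
    have hbig : tkap < ((AjB a φ k F J ∩ C) ∩ a i₀).ncard := by omega
    have hcontr := hκ i₀
    have hsubA : (AjB a φ k F J ∩ C) ∩ a i₀ ⊆ a i₀ := fun z hz => hz.2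
    rw [hi₀] at hcontr hsubA
    have hlast := (phi_le_iff hfin hsub huni hsubA).mp hcontr
    rw [← hi₀, ← htkap] at hlast
    omega
  · -- #Af = ℵ₀
    rw [hAfdef, Cardinal.mk_range_eq _ hAinj, Cardinal.mk_nat]
  · -- #Bf = aleph 1
    calc #↑Bf = #↑X := by
          rw [hBfdef]; exact Cardinal.mk_image_eq_of_injOn _ _ hBinj.injOn
      _ = aleph 1 := hX

end HardSec

/-- If `I = I⟨a_j, φ_j⟩` is a fragmented ideal that is not gradually fragmented and all
the submeasures `φ_j` are uniform (depend only on the cardinality of the set), then the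
Rothberger number `𝔟(I)` equals `ℵ₁`. -/
theorem rothberger_uniform_not_gradually_fragmented_eq_aleph_one
    (a : ℕ → Set ℕ) (φ : ℕ → Set ℕ → ℝ) (I : Set (Set ℕ))
    (hfrag : IsFragmentation I a φ)
    (hnotgrad : ¬ GraduallyFragmented a φ)
    (huniform : ∀ j, ∀ x y : Set ℕ, x ⊆ a j → y ⊆ a j → x.ncard = y.ncard → φ j x = φ j y) :
    HasOmegaGap I (aleph 1) ∧
    ∀ lam : Cardinal, HasOmegaGap I lam → aleph 1 ≤ lam := by
  constructor
  · exact hard_part a φ I hfrag hnotgrad huniform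
  · exact easy_part hfrag.2.1 hfrag.2.2
end

section
/- Let I = I⟨a_j,φ_j⟩ be a somewhere tall fragmented ideal such that every φ_j is a finitely additive measure on P(a_j). Then I is not gradually fragmented, and the Rothberger number 𝔟(I) equals ℵ₁. -/
open Set Filter Cardinal

namespace RothAux

variable {a : ℕ → Set ℕ} {φ : ℕ → Set ℕ → ℝ} {I : Set (Set ℕ)}

lemma phi_empty (hfrag : IsFragmentation I a φ) (j : ℕ) : φ j ∅ = 0 :=
  (hfrag.2.1 j).1

lemma phi_nonneg (hfrag : IsFragmentation I a φ) {j : ℕ} {x : Set ℕ} (h : x ⊆ a j) :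
    0 ≤ φ j x := (hfrag.2.1 j).2.1 x h

lemma phi_mono (hfrag : IsFragmentation I a φ) {j : ℕ} {x y : Set ℕ}
    (h1 : x ⊆ y) (h2 : y ⊆ a j) : φ j x ≤ φ j y := (hfrag.2.1 j).2.2.1 x y h1 h2

lemma phi_subadd (hfrag : IsFragmentation I a φ) {j : ℕ} {x y : Set ℕ}
    (h1 : x ⊆ a j) (h2 : y ⊆ a j) : φ j (x ∪ y) ≤ φ j x + φ j y :=
  (hfrag.2.1 j).2.2.2 x y h1 h2

lemma mem_of_bound (hfrag : IsFragmentation I a φ) {x : Set ℕ} {K : ℝ}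
    (h : ∀ i, φ i (x ∩ a i) ≤ K) : x ∈ I := (hfrag.2.2 x).2 ⟨K, h⟩

lemma bound_of_mem (hfrag : IsFragmentation I a φ) {x : Set ℕ} (h : x ∈ I) :
    ∃ K : ℝ, ∀ i, φ i (x ∩ a i) ≤ K := (hfrag.2.2 x).1 h

lemma exists_block (hfrag : IsFragmentation I a φ) (z : ℕ) : ∃ i, z ∈ a i := by
  have := hfrag.1.2.2.2
  have hz : z ∈ (⋃ i, a i) := by rw [this]; trivial
  simpa using hz

lemma block_unique (hfrag : IsFragmentation I a φ) {z : ℕ} {i j : ℕ}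
    (hi : z ∈ a i) (hj : z ∈ a j) : i = j := by
  by_contra hne
  exact (hfrag.1.2.2.1 i j hne).ne_of_mem hi hj rfl

lemma ideal_of_frag (hfrag : IsFragmentation I a φ) : IsIdealOn I := by
  refine ⟨?_, ?_, ?_⟩
  · intro x hx
    choose blk hblkmem using exists_block hfrag
    have hJ : (blk '' x).Finite := hx.image _
    have himg : ((fun i => φ i (x ∩ a i)) '' (blk '' x)).Finite := hJ.image _
    obtain ⟨K₀, hK₀⟩ := himg.bddAbove
    apply mem_of_bound hfrag (K := max K₀ 0)
    intro i
    by_cases hne : (x ∩ a i).Nonempty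
    · obtain ⟨z, hzx, hza⟩ := hne
      have : i ∈ blk '' x := ⟨z, hzx, block_unique hfrag (hblkmem z) hza⟩
      exact le_max_of_le_left (hK₀ (Set.mem_image_of_mem _ this))
    · rw [Set.not_nonempty_iff_eq_empty] at hne
      rw [hne, phi_empty hfrag]
      exact le_max_right _ _
  · intro x y hxy hy
    obtain ⟨K, hK⟩ := bound_of_mem hfrag hy
    apply mem_of_bound hfrag (K := K)
    intro i
    exact le_trans (phi_mono hfrag
      (inter_subset_inter_left _ hxy) (inter_subset_right)) (hK i)
  · intro x y hx hy
    obtain ⟨K, hK⟩ := bound_of_mem hfrag hx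
    obtain ⟨K', hK'⟩ := bound_of_mem hfrag hy
    apply mem_of_bound hfrag (K := K + K')
    intro i
    have h2 : (x ∪ y) ∩ a i = (x ∩ a i) ∪ (y ∩ a i) := by
      ext z; simp [Set.mem_inter_iff, Set.mem_union]; tauto
    rw [h2]
    calc φ i ((x ∩ a i) ∪ (y ∩ a i)) ≤ φ i (x ∩ a i) + φ i (y ∩ a i) :=
          phi_subadd hfrag inter_subset_right inter_subset_right
      _ ≤ K + K' := add_le_add (hK i) (hK' i)

lemma mem_biUnion (hI : IsIdealOn I) {γ : Type} [DecidableEq γ] (F : Finset γ)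
    (u : γ → Set ℕ) (h : ∀ j ∈ F, u j ∈ I) : (⋃ j ∈ F, u j) ∈ I := by
  classical
  induction F using Finset.induction_on with
  | empty => simpa using hI.1 ∅ Set.finite_empty
  | insert x F hxF ih =>
    rw [Finset.set_biUnion_insert]
    exact hI.2.2 _ _ (h x (Finset.mem_insert_self x F))
      (ih (fun j hj => h j (Finset.mem_insert_of_mem hj)))

/-- every countable orthogonal pair is separated -/
lemma countable_sep (hI : IsIdealOn I) (A B : Set (Set ℕ))
    (horth : IOrthogonal I A B) (hA : A.Countable) (hB : B.Countable) :
    ∃ C : Set ℕ, ISeparates I A B C := by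
  classical
  rcases Set.eq_empty_or_nonempty A with rfl | hAne
  · exact ⟨Set.univ, fun s hs => absurd hs (Set.notMem_empty s),
      fun t _ => by simpa using hI.1 ∅ Set.finite_empty⟩
  rcases Set.eq_empty_or_nonempty B with rfl | hBne
  · exact ⟨∅, fun s _ => by simpa using hI.1 ∅ Set.finite_empty,
      fun t ht => absurd ht (Set.notMem_empty t)⟩
  obtain ⟨f, hf⟩ := hA.exists_eq_range hAne
  obtain ⟨g, hg⟩ := hB.exists_eq_range hBne
  set S : ℕ → Set ℕ := fun n => ⋃ i ∈ Finset.range (n+1), f i with hS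
  set T : ℕ → Set ℕ := fun n => ⋃ i ∈ Finset.range (n+1), g i with hT
  refine ⟨⋃ n, (T n \ S n), ?_, ?_⟩
  · intro s hs
    rw [hf] at hs
    obtain ⟨j, rfl⟩ := hs
    have hsub : f j ∩ (⋃ n, (T n \ S n)) ⊆ f j ∩ T j := by
      rintro z ⟨hzs, hzC⟩
      simp only [Set.mem_iUnion] at hzC
      obtain ⟨n, hzT, hzS⟩ := hzC
      rcases le_or_gt n j with hnj | hjn
      · refine ⟨hzs, ?_⟩
        simp only [hT, Set.mem_iUnion] at hzT ⊢
        obtain ⟨i, hi, hzi⟩ := hzT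
        exact ⟨i, by simp only [Finset.mem_range] at hi ⊢; omega, hzi⟩
      · exfalso
        apply hzS
        simp only [hS, Set.mem_iUnion]
        exact ⟨j, by simp; omega, hzs⟩
    apply hI.2.1 _ (f j ∩ T j) hsub
    have : f j ∩ T j = ⋃ i ∈ Finset.range (j+1), (f j ∩ g i) := by
      simp only [hT]; rw [Set.inter_iUnion₂]
    rw [this]
    apply mem_biUnion hI
    intro i _
    exact horth (f j) (by rw [hf]; exact ⟨j, rfl⟩) (g i) (by rw [hg]; exact ⟨i, rfl⟩)
  · intro t ht
    rw [hg] at ht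
    obtain ⟨j, rfl⟩ := ht
    have hsub : g j \ (⋃ n, (T n \ S n)) ⊆ g j ∩ S j := by
      rintro z ⟨hzt, hzC⟩
      by_cases hzS : z ∈ S j
      · exact ⟨hzt, hzS⟩
      · exfalso
        apply hzC
        simp only [Set.mem_iUnion]
        refine ⟨j, ?_, hzS⟩
        simp only [hT, Set.mem_iUnion]
        exact ⟨j, by simp, hzt⟩
    apply hI.2.1 _ (g j ∩ S j) hsub
    have : g j ∩ S j = ⋃ i ∈ Finset.range (j+1), (g j ∩ f i) := by
      simp only [hS]; rw [Set.inter_iUnion₂]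
    rw [this]
    apply mem_biUnion hI
    intro i _
    have := horth (f i) (by rw [hf]; exact ⟨i, rfl⟩) (g j) (by rw [hg]; exact ⟨j, rfl⟩)
    rwa [Set.inter_comm] at this

end RothAux

namespace RothAux

variable {a : ℕ → Set ℕ} {φ : ℕ → Set ℕ → ℝ} {I : Set (Set ℕ)}


lemma phi_diff
    (hmeas : ∀ j, ∀ x y : Set ℕ, x ⊆ a j → y ⊆ a j → Disjoint x y →
      φ j (x ∪ y) = φ j x + φ j y)
    {j : ℕ} {p : Set ℕ} (C : Set ℕ) (hp : p ⊆ a j) :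
    φ j p = φ j (p ∩ C) + φ j (p \ C) := by
  have h1 : (p ∩ C) ∪ (p \ C) = p := Set.inter_union_diff p C
  have := hmeas j (p ∩ C) (p \ C) (le_trans Set.inter_subset_left hp)
    (le_trans (Set.diff_subset) hp) (Set.disjoint_sdiff_right.mono_left Set.inter_subset_right)
  rw [h1] at this
  exact this

lemma phi_biUnion_sum
    (hempty : ∀ j, φ j ∅ = 0)
    (hmeas : ∀ j, ∀ x y : Set ℕ, x ⊆ a j → y ⊆ a j → Disjoint x y →
      φ j (x ∪ y) = φ j x + φ j y)
    {j : ℕ} {γ : Type} [DecidableEq γ] (F : Finset γ) (u : γ → Set ℕ)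
    (hsub : ∀ x ∈ F, u x ⊆ a j)
    (hdisj : ∀ x ∈ F, ∀ y ∈ F, x ≠ y → Disjoint (u x) (u y)) :
    φ j (⋃ x ∈ F, u x) = ∑ x ∈ F, φ j (u x) := by
  classical
  induction F using Finset.induction_on with
  | empty => simpa using hempty j
  | insert x F hxF ih =>
    rw [Finset.set_biUnion_insert, Finset.sum_insert hxF]
    have hdisjx : Disjoint (u x) (⋃ y ∈ F, u y) := by
      rw [Set.disjoint_iUnion₂_right]
      intro y hy
      exact hdisj x (Finset.mem_insert_self x F) y (Finset.mem_insert_of_mem hy)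
        (by rintro rfl; exact hxF hy)
    rw [hmeas j _ _ (hsub x (Finset.mem_insert_self x F))
      (Set.iUnion₂_subset fun y hy => hsub y (Finset.mem_insert_of_mem hy)) hdisjx]
    rw [ih (fun y hy => hsub y (Finset.mem_insert_of_mem hy))
      (fun y hy z hz hyz => hdisj y (Finset.mem_insert_of_mem hy) z (Finset.mem_insert_of_mem hz) hyz)]

lemma sum_le_phi
    (hempty : ∀ j, φ j ∅ = 0)
    (hmono : ∀ {j} {x y : Set ℕ}, x ⊆ y → y ⊆ a j → φ j x ≤ φ j y)
    (hmeas : ∀ j, ∀ x y : Set ℕ, x ⊆ a j → y ⊆ a j → Disjoint x y →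
      φ j (x ∪ y) = φ j x + φ j y)
    {j : ℕ} {γ : Type} [DecidableEq γ] (F : Finset γ) (u : γ → Set ℕ)
    (hsub : ∀ x ∈ F, u x ⊆ a j)
    (hdisj : ∀ x ∈ F, ∀ y ∈ F, x ≠ y → Disjoint (u x) (u y))
    (W : Set ℕ) (hWa : W ⊆ a j) (hW : ∀ x ∈ F, u x ⊆ W) :
    ∑ x ∈ F, φ j (u x) ≤ φ j W := by
  rw [← phi_biUnion_sum hempty hmeas F u hsub hdisj]
  exact hmono (Set.iUnion₂_subset hW) hWa

lemma SL
    (hempty : ∀ j, φ j ∅ = 0)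
    (hmono : ∀ {j} {x y : Set ℕ}, x ⊆ y → y ⊆ a j → φ j x ≤ φ j y)
    (hmeas : ∀ j, ∀ x y : Set ℕ, x ⊆ a j → y ⊆ a j → Disjoint x y →
      φ j (x ∪ y) = φ j x + φ j y)
    {j : ℕ} {c : ℝ} (hc : 0 < c) :
    ∀ (n : ℕ) (b : Set ℕ), b.Finite → b.ncard ≤ n → b ⊆ a j → (∀ x ∈ b, φ j {x} ≤ c) →
    c < φ j b → ∃ s, s ⊆ b ∧ c < φ j s ∧ φ j s ≤ 2 * c := by
  intro n
  induction n with
  | zero =>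
    intro b hfin hn hba hsing hbig
    have : b = ∅ := by
      rw [← Set.ncard_eq_zero hfin]; omega
    rw [this, hempty] at hbig; linarith
  | succ n ih =>
    intro b hfin hn hba hsing hbig
    by_cases hle : φ j b ≤ 2 * c
    · exact ⟨b, le_refl _, hbig, hle⟩
    · push_neg at hle
      have hbne : b.Nonempty := by
        rcases Set.eq_empty_or_nonempty b with rfl | h
        · rw [hempty] at hbig; linarith
        · exact h
      obtain ⟨z, hz⟩ := hbne
      have hzb : {z} ⊆ b := Set.singleton_subset_iff.mpr hz
      have hsplit : φ j b = φ j {z} + φ j (b \ {z}) := by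
        have := hmeas j {z} (b \ {z}) (le_trans hzb hba)
          (le_trans Set.diff_subset hba) Set.disjoint_sdiff_right
        rwa [Set.union_diff_cancel hzb] at this
      have hb' : c < φ j (b \ {z}) := by
        have := hsing z hz
        linarith
      obtain ⟨s, hs1, hs2, hs3⟩ := ih (b \ {z}) (hfin.subset Set.diff_subset)
        (by have := Set.ncard_diff_singleton_lt_of_mem hz hfin; omega)
        (le_trans Set.diff_subset hba)
        (fun x hx => hsing x hx.1) hb'
      exact ⟨s, le_trans hs1 Set.diff_subset, hs2, hs3⟩

lemma extract
    (hempty : ∀ j, φ j ∅ = 0)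
    (hmono : ∀ {j} {x y : Set ℕ}, x ⊆ y → y ⊆ a j → φ j x ≤ φ j y)
    (hmeas : ∀ j, ∀ x y : Set ℕ, x ⊆ a j → y ⊆ a j → Disjoint x y →
      φ j (x ∪ y) = φ j x + φ j y)
    {j : ℕ} {c : ℝ} (hc : 0 < c) :
    ∀ (r : ℕ) (b : Set ℕ), b.Finite → b ⊆ a j → (∀ x ∈ b, φ j {x} ≤ c) →
    2 * c * r < φ j b →
    ∃ q : ℕ → Set ℕ, (∀ i, q i ⊆ b) ∧
      (∀ i, i < r → c < φ j (q i) ∧ φ j (q i) ≤ 2 * c) ∧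
      (∀ i i', i ≠ i' → Disjoint (q i) (q i')) := by
  intro r
  induction r with
  | zero =>
    intro b _ _ _ _
    exact ⟨fun _ => ∅, fun _ => Set.empty_subset _, fun i hi => absurd hi (by omega),
      fun _ _ _ => Set.disjoint_empty _ |>.symm.mono_right le_rfl⟩
  | succ r ih =>
    intro b hfin hba hsing hbig
    have hbigc : c < φ j b := by
      have h0 : (0:ℝ) ≤ 2 * c * r := by positivity
      push_cast at hbig
      nlinarith
    obtain ⟨s, hsb, hs1, hs2⟩ := SL hempty hmono hmeas hc b.ncard b hfin le_rfl hba hsing hbigc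
    have hb'sub : b \ s ⊆ a j := le_trans Set.diff_subset hba
    have hsplit : φ j b = φ j s + φ j (b \ s) := by
      have := hmeas j s (b \ s) (le_trans hsb hba) hb'sub Set.disjoint_sdiff_right
      rwa [Set.union_diff_cancel hsb] at this
    have hbig' : 2 * c * r < φ j (b \ s) := by
      push_cast at hbig ⊢
      nlinarith
    obtain ⟨q, hq1, hq2, hq3⟩ := ih (b \ s) (hfin.subset Set.diff_subset) hb'sub
      (fun x hx => hsing x hx.1) hbig'
    refine ⟨fun i => if i = r then s else q i, ?_, ?_, ?_⟩
    · intro i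
      by_cases h : i = r
      · simpa [h] using hsb
      · simpa [h] using le_trans (hq1 i) Set.diff_subset
    · intro i hi
      by_cases h : i = r
      · simpa [h] using ⟨hs1, hs2⟩
      · have : i < r := by omega
        simpa [h] using hq2 i this
    · intro i i' hii'
      by_cases h : i = r <;> by_cases h' : i' = r
      · omega
      · simp only [h, h', if_true, if_false]
        exact Set.disjoint_sdiff_right.mono_right (hq1 i')
      · simp only [h, h', if_true, if_false]
        exact (Set.disjoint_sdiff_right.mono_right (hq1 i)).symm
      · simpa [h, h'] using hq3 i i' hii'

end RothAux

namespace RothAux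

variable {a : ℕ → Set ℕ} {φ : ℕ → Set ℕ → ℝ} {I : Set (Set ℕ)}

lemma part3 (hfrag : IsFragmentation I a φ) :
    ∀ lam : Cardinal, HasOmegaGap I lam → aleph 1 ≤ lam := by
  intro lam hgap
  obtain ⟨A, B, ⟨horth, hnosep⟩, hA, hB⟩ := hgap
  by_contra hlt
  push_neg at hlt
  have hBc : B.Countable := by
    rw [Cardinal.countable_iff_lt_aleph_one]
    rw [hB]; exact hlt
  have hAc : A.Countable := by
    rw [Cardinal.countable_iff_lt_aleph_one]
    rw [hA]; exact Cardinal.aleph0_lt_aleph_one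
  obtain ⟨C, hC⟩ := countable_sep (ideal_of_frag hfrag) A B horth hAc hBc
  exact hnosep C hC

lemma big_cols (hfrag : IsFragmentation I a φ) {X : Set ℕ} (hX : X ∉ I) (K : ℝ) :
    {i | K < φ i (X ∩ a i)}.Infinite := by
  by_contra hfin
  rw [Set.not_infinite] at hfin
  obtain ⟨K₀, hK₀⟩ := (hfin.image (fun i => φ i (X ∩ a i))).bddAbove
  apply hX
  apply mem_of_bound hfrag (K := max K K₀)
  intro i
  by_cases hi : K < φ i (X ∩ a i)
  · exact le_max_of_le_right (hK₀ (Set.mem_image_of_mem _ hi))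
  · push_neg at hi; exact le_max_of_le_left hi

lemma pick_cols (hfrag : IsFragmentation I a φ) {X : Set ℕ} (hX : X ∉ I) (G : ℕ → ℝ) :
    ∃ g : ℕ → ℕ, StrictMono g ∧ ∀ m, G m < φ (g m) (X ∩ a (g m)) := by
  have hinf : ∀ m, {i | G m < φ i (X ∩ a i)}.Infinite := fun m => big_cols hfrag hX (G m)
  choose f hf1 hf2 using fun p : ℕ × ℕ => (hinf p.2).exists_gt p.1
  refine ⟨fun m => Nat.rec (f (0,0)) (fun m ih => f (ih, m+1)) m, ?_, ?_⟩
  · apply strictMono_nat_of_lt_succ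
    intro m
    exact hf2 (_, m+1)
  · intro m
    cases m with
    | zero => exact hf1 (0,0)
    | succ m => exact hf1 (_, m+1)

lemma sing_bound (hfrag : IsFragmentation I a φ) {X : Set ℕ} (hX : X ∉ I)
    (htall : IsTallOn I X) :
    ∃ c : ℝ, 1 ≤ c ∧ ∀ i, ∀ x ∈ X ∩ a i, φ i {x} ≤ c := by
  by_cases hfin : ∃ K : ℕ, {i | ∃ x ∈ X ∩ a i, (K:ℝ) < φ i {x}}.Finite
  · obtain ⟨K, hKfin⟩ := hfin
    set S := {i | ∃ x ∈ X ∩ a i, (K:ℝ) < φ i {x}} with hSdef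
    have hE : (⋃ i ∈ S, (fun x => ((i, x) : ℕ × ℕ)) '' (X ∩ a i)).Finite :=
      Set.Finite.biUnion hKfin
        (fun i _ => (((hfrag.1.2.1 i).subset Set.inter_subset_right).image _))
    obtain ⟨c₀, hc₀⟩ := (hE.image (fun p : ℕ × ℕ => φ p.1 {p.2})).bddAbove
    refine ⟨max (max K c₀) 1, le_max_right _ _, ?_⟩
    intro i x hx
    by_cases hbig : (K:ℝ) < φ i {x}
    · have hiS : i ∈ S := ⟨x, hx, hbig⟩
      have : (i, x) ∈ ⋃ i ∈ S, (fun x => ((i, x) : ℕ × ℕ)) '' (X ∩ a i) := by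
        simp only [Set.mem_iUnion]
        exact ⟨i, hiS, ⟨x, hx, rfl⟩⟩
      exact le_max_of_le_left (le_max_of_le_right (hc₀ (Set.mem_image_of_mem _ this)))
    · push_neg at hbig
      exact le_max_of_le_left (le_max_of_le_left hbig)
  · push_neg at hfin
    exfalso
    have hinf : ∀ K : ℕ, {i | ∃ x ∈ X ∩ a i, (K:ℝ) < φ i {x}}.Infinite :=
      fun K => hfin K
    choose f hf1 hf2 using fun p : ℕ × ℕ => (hinf p.2).exists_gt p.1
    set g : ℕ → ℕ := fun m => Nat.rec (f (0,0)) (fun m ih => f (ih, m+1)) m with hg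
    have hgmem : ∀ m, ∃ x ∈ X ∩ a (g m), (m:ℝ) < φ (g m) {x} := by
      intro m
      cases m with
      | zero => exact hf1 (0,0)
      | succ m => exact hf1 (_, m+1)
    have hgmono : StrictMono g := by
      apply strictMono_nat_of_lt_succ
      intro m
      exact hf2 (_, m+1)
    choose pt hpt1 hpt2 using hgmem
    have hptinj : Function.Injective pt := by
      intro m m' h
      by_contra hne
      have h1 : pt m ∈ a (g m) := (hpt1 m).2
      have h2 : pt m' ∈ a (g m') := (hpt1 m').2
      rw [h] at h1
      have := block_unique hfrag h1 h2
      exact hne (hgmono.injective this)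
    have hYX : Set.range pt ⊆ X := by
      rintro z ⟨m, rfl⟩; exact (hpt1 m).1
    obtain ⟨Z, hZY, hZinf, hZI⟩ := htall (Set.range pt)
      hYX (Set.infinite_range_of_injective hptinj)
    obtain ⟨K, hK⟩ := bound_of_mem hfrag hZI
    set T := {m | pt m ∈ Z} with hT
    have hTinf : T.Infinite := by
      by_contra h
      rw [Set.not_infinite] at h
      apply hZinf
      apply Set.Finite.subset (h.image pt)
      intro z hz
      obtain ⟨m, rfl⟩ := hZY hz
      exact ⟨m, hz, rfl⟩
    obtain ⟨m, hmT, hm⟩ := hTinf.exists_gt ⌈K⌉₊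
    have hmem : {pt m} ⊆ Z ∩ a (g m) :=
      Set.singleton_subset_iff.mpr ⟨hmT, (hpt1 m).2⟩
    have h1 : φ (g m) {pt m} ≤ K :=
      le_trans (phi_mono hfrag hmem Set.inter_subset_right) (hK (g m))
    have h2 : (m:ℝ) < φ (g m) {pt m} := hpt2 m
    have h3 : K < (m:ℝ) := by
      calc K ≤ (⌈K⌉₊ : ℝ) := Nat.le_ceil K
        _ < m := by exact_mod_cast hm
    linarith

end RothAux

namespace RothAux

variable {a : ℕ → Set ℕ} {φ : ℕ → Set ℕ → ℝ} {I : Set (Set ℕ)}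

lemma not_gf (hfrag : IsFragmentation I a φ)
    (hmeas : ∀ j, ∀ x y : Set ℕ, x ⊆ a j → y ⊆ a j → Disjoint x y →
      φ j (x ∪ y) = φ j x + φ j y)
    {X : Set ℕ} (hX : X ∉ I) (htall : IsTallOn I X) :
    ¬ GraduallyFragmented a φ := by
  classical
  obtain ⟨c, hc1, hcs⟩ := sing_bound hfrag hX htall
  have hc0 : (0:ℝ) < c := lt_of_lt_of_le one_pos hc1
  intro hGF
  obtain ⟨m, hm⟩ := hGF ⌈2*c⌉₊
  set l := m + 1 with hl
  have hev := hm l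
  rw [Filter.eventually_atTop] at hev
  obtain ⟨i₀, hi₀⟩ := hev
  obtain ⟨i, hi_mem, hi_gt⟩ := (big_cols hfrag hX (2*c*l)).exists_gt i₀
  simp only [Set.mem_setOf_eq] at hi_mem
  obtain ⟨q, hq1, hq2, hq3⟩ := extract (phi_empty hfrag)
    (fun h1 h2 => phi_mono hfrag h1 h2) hmeas hc0 l (X ∩ a i)
    ((hfrag.1.2.1 i).subset Set.inter_subset_right) Set.inter_subset_right
    (fun x hx => hcs i x hx) hi_mem
  have hqa : ∀ j, q j ⊆ a i := fun j => le_trans (hq1 j) Set.inter_subset_right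
  have happ := hi₀ i (le_of_lt hi_gt) ((Finset.range l).image q)
    (by
      intro b hb
      rw [Finset.mem_image] at hb
      obtain ⟨j, _, rfl⟩ := hb
      exact hqa j)
    (le_trans Finset.card_image_le (by simp))
    (by
      intro b hb
      rw [Finset.mem_image] at hb
      obtain ⟨j, hj, rfl⟩ := hb
      rw [Finset.mem_range] at hj
      calc φ i (q j) ≤ 2*c := (hq2 j hj).2
        _ ≤ ↑⌈2*c⌉₊ := Nat.le_ceil _)
  have hUeq : ⋃₀ (↑((Finset.range l).image q) : Set (Set ℕ)) = ⋃ j ∈ Finset.range l, q j := by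
    rw [Finset.coe_image, Set.sUnion_image]
    ext z; simp
  rw [hUeq] at happ
  have hsum : φ i (⋃ j ∈ Finset.range l, q j) = ∑ j ∈ Finset.range l, φ i (q j) :=
    phi_biUnion_sum (phi_empty hfrag) hmeas _ _ (fun j _ => hqa j)
      (fun x _ y _ hxy => hq3 x y hxy)
  have hlow : (l:ℝ) * c ≤ ∑ j ∈ Finset.range l, φ i (q j) := by
    have := Finset.card_nsmul_le_sum (Finset.range l) (fun j => φ i (q j)) c
      (fun j hj => le_of_lt (hq2 j (Finset.mem_range.mp hj)).1)
    simpa [nsmul_eq_mul] using this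
  have : (l:ℝ) * c ≤ (m:ℝ) := by
    calc (l:ℝ) * c ≤ ∑ j ∈ Finset.range l, φ i (q j) := hlow
      _ = φ i (⋃ j ∈ Finset.range l, q j) := hsum.symm
      _ ≤ (m:ℝ) := happ
  have hlc : (m:ℝ) + 1 ≤ (l:ℝ) * c := by
    have : ((m:ℝ) + 1) * 1 ≤ (l:ℝ) * c := by
      apply mul_le_mul
      · simp [hl]
      · exact hc1
      · norm_num
      · positivity
    simpa using this
  linarith

end RothAux

namespace RothAux

/-- binary code of `x ∩ [0,k)` -/
noncomputable def bincode (x : Set ℕ) (k : ℕ) : ℕ :=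
  ∑ j ∈ Finset.range k, Set.indicator x (fun j => 2^j) j

lemma bincode_lt (x : Set ℕ) (k : ℕ) : bincode x k < 2^k := by
  induction k with
  | zero => simp [bincode]
  | succ k ih =>
    have hind : Set.indicator x (fun j => 2^j) k ≤ 2^k := by
      by_cases h : k ∈ x
      · rw [Set.indicator_of_mem h]
      · rw [Set.indicator_of_notMem h]; positivity
    have : bincode x (k+1) = bincode x k + Set.indicator x (fun j => 2^j) k := by
      rw [bincode, Finset.sum_range_succ]; rfl
    rw [this, pow_succ]
    omega

lemma bincode_inj (x y : Set ℕ) (k : ℕ) (h : bincode x k = bincode y k) :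
    ∀ j < k, (j ∈ x ↔ j ∈ y) := by
  induction k with
  | zero => omega
  | succ k ih =>
    have hx' : bincode x (k+1) = bincode x k + Set.indicator x (fun j => 2^j) k := by
      rw [bincode, Finset.sum_range_succ]; rfl
    have hy' : bincode y (k+1) = bincode y k + Set.indicator y (fun j => 2^j) k := by
      rw [bincode, Finset.sum_range_succ]; rfl
    rw [hx', hy'] at h
    have hbx := bincode_lt x k
    have hby := bincode_lt y k
    by_cases hxk : k ∈ x <;> by_cases hyk : k ∈ y
    · rw [Set.indicator_of_mem hxk, Set.indicator_of_mem hyk] at h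
      have heq : bincode x k = bincode y k := by omega
      intro j hj
      rcases Nat.lt_succ_iff_lt_or_eq.mp hj with hj | rfl
      · exact ih heq j hj
      · simp [hxk, hyk]
    · rw [Set.indicator_of_mem hxk, Set.indicator_of_notMem hyk] at h
      omega
    · rw [Set.indicator_of_notMem hxk, Set.indicator_of_mem hyk] at h
      omega
    · rw [Set.indicator_of_notMem hxk, Set.indicator_of_notMem hyk] at h
      have heq : bincode x k = bincode y k := by omega
      intro j hj
      rcases Nat.lt_succ_iff_lt_or_eq.mp hj with hj | rfl
      · exact ih heq j hj
      · simp [hxk, hyk]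

/-- for finitely many distinct sets there is a level where the codes are pairwise distinct -/
lemma bincode_sep (F : Finset (Set ℕ)) :
    ∃ k, ∀ x ∈ F, ∀ y ∈ F, x ≠ y → bincode x k ≠ bincode y k := by
  classical
  have hwit : ∀ u v : Set ℕ, u ≠ v → ∃ j, ¬ (j ∈ u ↔ j ∈ v) := by
    intro u v huv
    by_contra h
    push_neg at h
    exact huv (Set.ext fun j => h j)
  set d : Set ℕ × Set ℕ → ℕ := fun p =>
    if h : p.1 = p.2 then 0 else Classical.choose (hwit p.1 p.2 h) with hd
  refine ⟨(F ×ˢ F).sup d + 1, ?_⟩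
  intro u hu v hv huv heq
  have hdlt : d (u, v) < (F ×ˢ F).sup d + 1 := by
    have : d (u, v) ≤ (F ×ˢ F).sup d :=
      Finset.le_sup (Finset.mem_product.mpr ⟨hu, hv⟩)
    omega
  have hdval : d (u, v) = Classical.choose (hwit u v huv) := by
    rw [hd]; simp only []
    rw [dif_neg huv]
  apply Classical.choose_spec (hwit u v huv)
  apply bincode_inj u v _ heq
  rw [← hdval]
  exact hdlt

end RothAux

namespace RothAux

variable {a : ℕ → Set ℕ} {φ : ℕ → Set ℕ → ℝ} {I : Set (Set ℕ)}

lemma block_interval_disj {b1 b2 w j : ℕ} (h : b1 ≠ b2)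
    (h1 : j ∈ Finset.Ico (b1*w) (b1*w+w)) (h2 : j ∈ Finset.Ico (b2*w) (b2*w+w)) : False := by
  rw [Finset.mem_Ico] at h1 h2
  rcases Nat.lt_or_ge b1 b2 with hlt | hge
  · have : (b1+1)*w ≤ b2*w := Nat.mul_le_mul_right w hlt
    have : b1*w + w ≤ b2*w := by linarith [this]
    omega
  · have hlt : b2 < b1 := by omega
    have : (b2+1)*w ≤ b1*w := Nat.mul_le_mul_right w hlt
    have : b2*w + w ≤ b1*w := by linarith [this]
    omega

lemma gap (hfrag : IsFragmentation I a φ)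
    (hmeas : ∀ j, ∀ x y : Set ℕ, x ⊆ a j → y ⊆ a j → Disjoint x y →
      φ j (x ∪ y) = φ j x + φ j y)
    {X : Set ℕ} (hX : X ∉ I) (htall : IsTallOn I X) :
    HasOmegaGap I (aleph 1) := by
  classical
  obtain ⟨c, hc1, hcs⟩ := sing_bound hfrag hX htall
  have hc0 : (0:ℝ) < c := lt_of_lt_of_le one_pos hc1
  set R : ℕ → ℕ := fun m => (m+1)*2^m with hR
  obtain ⟨g, hgmono, hgbig⟩ := pick_cols hfrag hX (fun m => 2*c*(R m))
  -- chunks in each column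
  have hext : ∀ m : ℕ, ∃ q : ℕ → Set ℕ, (∀ i, q i ⊆ X ∩ a (g m)) ∧
      (∀ i, i < R m → c < φ (g m) (q i) ∧ φ (g m) (q i) ≤ 2 * c) ∧
      (∀ i i', i ≠ i' → Disjoint (q i) (q i')) := by
    intro m
    exact extract (phi_empty hfrag) (fun h1 h2 => phi_mono hfrag h1 h2) hmeas hc0
      (R m) (X ∩ a (g m)) ((hfrag.1.2.1 (g m)).subset Set.inter_subset_right)
      Set.inter_subset_right (fun x hx => hcs (g m) x hx) (hgbig m)
  choose q hq1 hq2 hq3 using hext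
  -- columns and chunks indexed by (level n, tree-level k)
  set col : ℕ → ℕ → ℕ := fun n k => g (Nat.pair n k) with hcol
  set ch : ℕ → ℕ → ℕ → Set ℕ := fun n k j => q (Nat.pair n k) j with hch
  have hNle : ∀ n k, (n+1)*2^k ≤ R (Nat.pair n k) := by
    intro n k
    exact Nat.mul_le_mul (by have := Nat.left_le_pair n k; omega)
      (Nat.pow_le_pow_right (by norm_num) (Nat.right_le_pair n k))
  have hcha : ∀ n k j, ch n k j ⊆ a (col n k) :=
    fun n k j => le_trans (hq1 (Nat.pair n k) j) Set.inter_subset_right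
  have hcolinj : ∀ {n k n' k'}, col n k = col n' k' → n = n' ∧ k = k' := by
    intro n k n' k' h
    have := hgmono.injective h
    exact Nat.pair_eq_pair.mp this
  -- the countable side
  set sset : ℕ → Set ℕ := fun n => ⋃ k, ⋃ j ∈ Finset.range ((n+1)*2^k), ch n k j with hsset
  -- tokens and the ω₁ side
  set tok : Set ℕ → ℕ → ℕ → Set ℕ := fun x n k =>
    ⋃ j ∈ Finset.Ico (bincode x k * (n+1)) (bincode x k * (n+1) + (n+1)), ch n k j with htok
  set tset : Set ℕ → Set ℕ := fun x => ⋃ n, ⋃ k, tok x n k with htset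
  -- index bound for token chunks
  have htokR : ∀ (x : Set ℕ) n k j, j ∈ Finset.Ico (bincode x k * (n+1))
      (bincode x k * (n+1) + (n+1)) → j < R (Nat.pair n k) := by
    intro x n k j hj
    rw [Finset.mem_Ico] at hj
    have hblt := bincode_lt x k
    have h1 : j < (bincode x k + 1) * (n+1) := by
      have := hj.2; nlinarith [hj.2]
    have h2 : (bincode x k + 1) * (n+1) ≤ 2^k * (n+1) := Nat.mul_le_mul_right _ hblt
    have h3 : 2^k * (n+1) = (n+1) * 2^k := Nat.mul_comm _ _
    have := hNle n k
    omega
  have htoksub : ∀ (x : Set ℕ) n k, tok x n k ⊆ a (col n k) := by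
    intro x n k
    exact Set.iUnion₂_subset fun j _ => hcha n k j
  have htoktset : ∀ (x : Set ℕ) n k, tok x n k ⊆ tset x := by
    intro x n k
    exact Set.subset_iUnion₂_of_subset n k (le_refl _)
  -- localization
  have hlocS : ∀ n i z, z ∈ sset n → z ∈ a i → ∃ k, i = col n k ∧
      z ∈ ⋃ j ∈ Finset.range ((n+1)*2^k), ch n k j := by
    intro n i z hz hza
    simp only [hsset, Set.mem_iUnion] at hz
    obtain ⟨k, j, hj, hzin⟩ := hz
    have : z ∈ a (col n k) := hcha n k j hzin
    have heq : i = col n k := block_unique hfrag hza this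
    exact ⟨k, heq, by simp only [Set.mem_iUnion]; exact ⟨j, hj, hzin⟩⟩
  have hlocT : ∀ (x : Set ℕ) n k z, z ∈ tset x → z ∈ a (col n k) → z ∈ tok x n k := by
    intro x n k z hz hza
    simp only [htset, Set.mem_iUnion] at hz
    obtain ⟨n', k', hz'⟩ := hz
    have hz'' : z ∈ a (col n' k') := htoksub x n' k' hz'
    obtain ⟨h1, h2⟩ := hcolinj (block_unique hfrag hz'' hza)
    rwa [h1, h2] at hz'
  -- orthogonality
  have horthog : ∀ n (x : Set ℕ), sset n ∩ tset x ∈ I := by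
    intro n x
    apply mem_of_bound hfrag (K := 2*c*(n+1))
    intro i
    by_cases hcolcase : ∃ k, i = col n k
    · obtain ⟨k, rfl⟩ := hcolcase
      have hsub : (sset n ∩ tset x) ∩ a (col n k) ⊆ tok x n k := by
        rintro z ⟨⟨hz1, hz2⟩, hza⟩
        exact hlocT x n k z hz2 hza
      calc φ (col n k) ((sset n ∩ tset x) ∩ a (col n k))
          ≤ φ (col n k) (tok x n k) := phi_mono hfrag hsub (htoksub x n k)
        _ = ∑ j ∈ Finset.Ico (bincode x k * (n+1)) (bincode x k * (n+1) + (n+1)),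
              φ (col n k) (ch n k j) := phi_biUnion_sum (phi_empty hfrag) hmeas _ _
              (fun j _ => hcha n k j) (fun j _ j' _ hjj' => hq3 _ j j' hjj')
        _ ≤ (Finset.Ico (bincode x k * (n+1)) (bincode x k * (n+1) + (n+1))).card • (2*c) := by
            apply Finset.sum_le_card_nsmul
            intro j hj
            exact (hq2 _ j (htokR x n k j hj)).2
        _ = 2*c*(n+1) := by
            rw [Nat.card_Ico]
            have : bincode x k * (n+1) + (n+1) - bincode x k * (n+1) = n+1 := by omega
            rw [this, nsmul_eq_mul]
            push_cast; ring
    · push_neg at hcolcase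
      have hempty2 : (sset n ∩ tset x) ∩ a i = ∅ := by
        rw [Set.eq_empty_iff_forall_notMem]
        rintro z ⟨⟨hz1, _⟩, hza⟩
        obtain ⟨k, heq, _⟩ := hlocS n i z hz1 hza
        exact hcolcase k heq
      rw [hempty2, phi_empty hfrag]
      positivity
  -- choose an ω₁-sized set of indices
  have hotyp : aleph 1 ≤ #(Set ℕ) := by
    rw [Cardinal.mk_set, Cardinal.mk_nat]
    exact Cardinal.aleph_one_le_continuum
  obtain ⟨R₀, hR₀⟩ := Cardinal.le_mk_iff_exists_set.mp hotyp
  -- nonemptiness of chunks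
  have hchne : ∀ n k j, j < R (Nat.pair n k) → (ch n k j).Nonempty := by
    intro n k j hj
    rw [Set.nonempty_iff_ne_empty]
    intro hemp
    have h1 := (hq2 (Nat.pair n k) j hj).1
    have h2 : ch n k j = q (Nat.pair n k) j := rfl
    rw [← h2, hemp, phi_empty hfrag] at h1
    linarith
  have hRpos : ∀ m, 0 < R m := by
    intro m
    rw [hR]
    positivity
  -- injectivity of the countable side
  have hsinj : Function.Injective sset := by
    intro n n' h
    by_contra hne
    obtain ⟨z, hz⟩ := hchne n 0 0 (hRpos _)
    have hzs : z ∈ sset n := by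
      simp only [hsset, Set.mem_iUnion]
      exact ⟨0, 0, by simp, hz⟩
    rw [h] at hzs
    have hza : z ∈ a (col n 0) := hcha n 0 0 hz
    obtain ⟨k', heq, _⟩ := hlocS n' (col n 0) z hzs hza
    exact hne (hcolinj heq).1
  have hAcard : #(Set.range sset) = ℵ₀ := by
    rw [Cardinal.mk_range_eq _ hsinj, Cardinal.mk_nat]
  -- injectivity of the ω₁ side
  have htinj : Function.Injective tset := by
    intro x y h
    by_contra hne
    have hwit : ∃ j, ¬ (j ∈ x ↔ j ∈ y) := by
      by_contra h'
      push_neg at h'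
      exact hne (Set.ext fun j => h' j)
    obtain ⟨j0, hj0⟩ := hwit
    have hcode : bincode x (j0+1) ≠ bincode y (j0+1) := by
      intro he
      exact hj0 (bincode_inj x y (j0+1) he j0 (by omega))
    set k := j0+1 with hkdef
    have hbR : bincode x k < R (Nat.pair 0 k) := by
      have h1 := bincode_lt x k
      have h2 := hNle 0 k
      simp only [Nat.zero_add, Nat.one_mul] at h2
      omega
    obtain ⟨z, hz⟩ := hchne 0 k _ hbR
    have hztok : z ∈ tok x 0 k := by
      simp only [htok, Set.mem_iUnion]
      refine ⟨bincode x k, ?_, hz⟩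
      rw [Finset.mem_Ico]
      omega
    have hzx : z ∈ tset x := htoktset x 0 k hztok
    rw [h] at hzx
    have hza : z ∈ a (col 0 k) := hcha 0 k _ hz
    have hzy : z ∈ tok y 0 k := hlocT y 0 k z hzx hza
    simp only [htok, Set.mem_iUnion] at hzy
    obtain ⟨j, hjIco, hzj⟩ := hzy
    rw [Finset.mem_Ico] at hjIco
    have hjeq : j = bincode y k := by omega
    have hdisj := hq3 (Nat.pair 0 k) (bincode x k) (bincode y k) hcode
    exact (hdisj.ne_of_mem hz (hjeq ▸ hzj)) rfl
  have hBcard : #(tset '' R₀) = aleph 1 := by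
    rw [Cardinal.mk_image_eq htinj, hR₀]
  -- tighter index bound for token chunks (into the sset range)
  have htokN : ∀ (x : Set ℕ) n k j, j ∈ Finset.Ico (bincode x k * (n+1))
      (bincode x k * (n+1) + (n+1)) → j < (n+1)*2^k := by
    intro x n k j hj
    rw [Finset.mem_Ico] at hj
    have hblt := bincode_lt x k
    have h2 : (bincode x k + 1) * (n+1) ≤ 2^k * (n+1) := Nat.mul_le_mul_right _ hblt
    have h3 : 2^k * (n+1) = (n+1) * 2^k := Nat.mul_comm _ _
    nlinarith [hj.2]
  -- assemble the gap
  refine ⟨Set.range sset, tset '' R₀, ⟨?_, ?_⟩, hAcard, hBcard⟩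
  · rintro s ⟨n, rfl⟩ t ⟨x, hx, rfl⟩
    exact horthog n x
  · rintro C ⟨hCA, hCB⟩
    have hKn : ∀ n : ℕ, ∃ K : ℝ, ∀ i, φ i ((sset n ∩ C) ∩ a i) ≤ K :=
      fun n => bound_of_mem hfrag (hCA (sset n) ⟨n, rfl⟩)
    choose KC hKC using hKn
    have hbeta : ∀ x ∈ R₀, ∃ K : ℝ, ∀ i, φ i ((tset x \ C) ∩ a i) ≤ K :=
      fun x hx => bound_of_mem hfrag (hCB (tset x) ⟨x, hx, rfl⟩)
    choose! β hβ using hbeta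
    -- uniformize the bounds on an infinite set
    have hUm : ∃ m : ℕ, {x ∈ R₀ | β x ≤ (m:ℝ)}.Infinite := by
      by_contra hfin
      push_neg at hfin
      have hcov : R₀ ⊆ ⋃ m : ℕ, {x ∈ R₀ | β x ≤ (m:ℝ)} := by
        intro x hx
        simp only [Set.mem_iUnion, Set.mem_setOf_eq]
        exact ⟨⌈β x⌉₊, hx, Nat.le_ceil _⟩
      have hcnt : R₀.Countable :=
        Set.Countable.mono hcov
          (Set.countable_iUnion (fun m => (hfin m).countable))
      have hle := hcnt.le_aleph0
      rw [hR₀] at hle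
      exact absurd hle (not_le.mpr Cardinal.aleph0_lt_aleph_one)
    obtain ⟨mstar, hUinf⟩ := hUm
    set n := 2*mstar with hn
    -- in every column at level n, each token of a uniformized x has a surviving chunk
    have hsurv : ∀ x ∈ {x ∈ R₀ | β x ≤ (mstar:ℝ)}, ∀ k : ℕ, ∃ j,
        j ∈ Finset.Ico (bincode x k * (n+1)) (bincode x k * (n+1) + (n+1)) ∧
        c/2 < φ (col n k) (ch n k j ∩ C) := by
      rintro x ⟨hxR, hxβ⟩ k
      by_contra hno
      push_neg at hno
      have hsum : ∑ j ∈ Finset.Ico (bincode x k * (n+1)) (bincode x k * (n+1) + (n+1)),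
          φ (col n k) (ch n k j \ C) ≤ β x := by
        refine le_trans (sum_le_phi (phi_empty hfrag) (fun h1 h2 => phi_mono hfrag h1 h2)
          hmeas _ _
          (fun j _ => le_trans Set.diff_subset (hcha n k j))
          (fun j _ j' _ hjj' => ((hq3 _ j j' hjj').mono Set.diff_subset Set.diff_subset))
          ((tset x \ C) ∩ a (col n k)) Set.inter_subset_right ?_) (hβ x hxR (col n k))
        intro j hj z hz
        refine ⟨⟨htoktset x n k ?_, hz.2⟩, hcha n k j hz.1⟩
        simp only [htok, Set.mem_iUnion]
        exact ⟨j, hj, hz.1⟩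
      have hterm : ∀ j ∈ Finset.Ico (bincode x k * (n+1)) (bincode x k * (n+1) + (n+1)),
          c/2 ≤ φ (col n k) (ch n k j \ C) := by
        intro j hj
        have hchval := hq2 _ j (htokR x n k j hj)
        have hdiffeq := phi_diff hmeas (p := ch n k j) C (hcha n k j)
        have hnoj := hno j hj
        linarith [hchval.1]
      have hlow := Finset.card_nsmul_le_sum
        (Finset.Ico (bincode x k * (n+1)) (bincode x k * (n+1) + (n+1)))
        (fun j => φ (col n k) (ch n k j \ C)) (c/2) hterm
      rw [Nat.card_Ico] at hlow
      have hcard : bincode x k * (n+1) + (n+1) - bincode x k * (n+1) = n+1 := by omega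
      rw [hcard, nsmul_eq_mul] at hlow
      -- (n+1)*(c/2) ≤ β x ≤ mstar, but (n+1)*(c/2) ≥ (2mstar+1)/2 > mstar
      have hnc : ((n:ℝ)+1)*(c/2) ≥ ((n:ℝ)+1)/2 := by nlinarith [hc1]
      have hncast : ((n:ℝ)+1) = 2*(mstar:ℝ)+1 := by rw [hn]; push_cast; ring
      have : ((n+1:ℕ):ℝ)*(c/2) ≤ β x := le_trans (le_of_eq (by push_cast; ring)) (le_trans hlow hsum)
      rw [show ((n+1:ℕ):ℝ) = (n:ℝ)+1 by push_cast; ring] at this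
      nlinarith
    -- now the contradiction with the bound for sset n
    set K := KC n with hKdef
    set r := 2*(⌈K⌉₊+1) with hrdef
    obtain ⟨F, hFU, hFcard⟩ := hUinf.exists_subset_card_eq r
    obtain ⟨k, hkF⟩ := bincode_sep F
    have hsurvF : ∀ x ∈ F, ∃ j,
        j ∈ Finset.Ico (bincode x k * (n+1)) (bincode x k * (n+1) + (n+1)) ∧
        c/2 < φ (col n k) (ch n k j ∩ C) :=
      fun x hx => hsurv x (hFU hx) k
    choose! jx hjx1 hjx2 using hsurvF
    have hjxne : ∀ x ∈ F, ∀ y ∈ F, x ≠ y → jx x ≠ jx y := by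
      intro x hx y hy hxy heq
      exact block_interval_disj (hkF x hx y hy hxy) (hjx1 x hx) (heq ▸ hjx1 y hy)
    have hsum2 : ∑ x ∈ F, φ (col n k) (ch n k (jx x) ∩ C) ≤ K := by
      refine le_trans (sum_le_phi (phi_empty hfrag) (fun h1 h2 => phi_mono hfrag h1 h2)
        hmeas F (fun x => ch n k (jx x) ∩ C)
        (fun x hx => le_trans Set.inter_subset_left (hcha n k (jx x)))
        (fun x hx y hy hxy => ((hq3 _ (jx x) (jx y) (hjxne x hx y hy hxy)).mono
          Set.inter_subset_left Set.inter_subset_left))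
        ((sset n ∩ C) ∩ a (col n k)) Set.inter_subset_right ?_) (hKC n (col n k))
      intro x hx z hz
      refine ⟨⟨?_, hz.2⟩, hcha n k (jx x) hz.1⟩
      simp only [hsset, Set.mem_iUnion]
      exact ⟨k, jx x, Finset.mem_range.mpr (htokN x n k (jx x) (hjx1 x hx)), hz.1⟩
    have hlow2 := Finset.card_nsmul_le_sum F
      (fun x => φ (col n k) (ch n k (jx x) ∩ C)) (c/2)
      (fun x hx => le_of_lt (hjx2 x hx))
    rw [hFcard, nsmul_eq_mul] at hlow2
    -- (r:ℝ)*(c/2) ≤ K, but (r:ℝ)*(c/2) ≥ r/2 = ⌈K⌉+1 > K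
    have h1 : ((r:ℕ):ℝ)*(c/2) ≤ K := le_trans hlow2 hsum2
    have h2 : ((r:ℕ):ℝ) = 2*((⌈K⌉₊:ℝ)+1) := by rw [hrdef]; push_cast; ring
    have h3 : K ≤ (⌈K⌉₊:ℝ) := Nat.le_ceil K
    nlinarith
end RothAux

/-- If `I = I⟨a_j, φ_j⟩` is a somewhere tall fragmented ideal all of whose submeasures
`φ_j` are finitely additive measures on `P(a_j)`, then `I` is not gradually fragmented
and the Rothberger number `𝔟(I)` equals `ℵ₁`. -/
theorem rothberger_measure_somewhere_tall_eq_aleph_one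
    (a : ℕ → Set ℕ) (φ : ℕ → Set ℕ → ℝ) (I : Set (Set ℕ))
    (hfrag : IsFragmentation I a φ)
    (hst : SomewhereTall I)
    (hmeasure : ∀ j, ∀ x y : Set ℕ, x ⊆ a j → y ⊆ a j → Disjoint x y →
      φ j (x ∪ y) = φ j x + φ j y) :
    ¬ GraduallyFragmented a φ ∧
    HasOmegaGap I (aleph 1) ∧
    ∀ lam : Cardinal, HasOmegaGap I lam → aleph 1 ≤ lam := by
  obtain ⟨X, hX, htall⟩ := hst
  exact ⟨RothAux.not_gf hfrag hmeasure hX htall,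
         RothAux.gap hfrag hmeasure hX htall,
         RothAux.part3 hfrag⟩
end
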